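/- arXiv:1011.3160 — 7 statements merged into one kernel-verified Lean document; each statement's English description precedes it below -/
import Mathlib

section
/- Let Γ = HNN(H, Σ, θ) with H abelian and stable letter t. Then the subgroup G = ⟨H, t^{-1}Ht⟩ of Γ is isomorphic to the amalgamated free product H *_Σ H̃, where H̃ is a copy of H containing Σ via the embedding θ. Concretely, the homomorphism H *_Σ H̃ → Γ defined by the identity on H and by h ↦ t^{-1}ht on H̃ is injective with image G. -/
open HNNExtension Monoid

/-- The two maps of the amalgam `H *_Σ H̃` (both factors being copies of `H`): `Σ` embeds in
the first copy as itself and in the second copy via `θ` (i.e. as the subgroup `B`). -/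
def amalgamMaps {H : Type*} [Group H] (A B : Subgroup H) (φ : A ≃* B) :
    ∀ _ : Bool, (A →* H) :=
  fun i => if i then A.subtype else B.subtype.comp φ.toMonoidHom

section Aux

variable {H : Type*} [Group H] {A B : Subgroup H} {φ : A ≃* B}

/-- The image in the HNN extension of a letter of the amalgam. -/
private def hnnLetter (φ : A ≃* B) : ((_ : Bool) × H) → HNNExtension H A B φ :=
  fun p => if p.1 then of p.2 else t⁻¹ * of p.2 * t

/-- Translate a word in the amalgam (a list of letters from the two copies of `H`) into the
head and list of an HNN `ReducedWord`. -/
private def toHNN : List ((_ : Bool) × H) → H × List (ℤˣ × H)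
  | [] => (1, [])
  | ⟨true, g⟩ :: r => (g * (toHNN r).1, (toHNN r).2)
  | ⟨false, g⟩ :: r => (1, (-1, g) :: (1, (toHNN r).1) :: (toHNN r).2)

private theorem toHNN_spec (L : List ((_ : Bool) × H))
    (hgood : ∀ p ∈ L, if p.1 then p.2 ∉ A else p.2 ∉ B)
    (halt : L.Chain' (fun a b => a.1 ≠ b.1)) :
    (of (toHNN L).1 *
        (((toHNN L).2.map (fun x => t ^ (x.1 : ℤ) * of x.2)).prod : HNNExtension H A B φ)
        = (L.map (hnnLetter φ)).prod)
    ∧ (toHNN L).2.Chain' (fun a b => a.2 ∈ toSubgroup A B a.1 → a.1 = b.1)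
    ∧ (∀ p ∈ (toHNN L).2.head?, p.1 = (-1 : ℤˣ))
    ∧ ((toHNN L).2 = [] → L = [] ∨ ∃ g, L = [⟨true, g⟩] ∧ (toHNN L).1 = g)
    ∧ ((L = [] ∨ ∃ g r, L = ⟨false, g⟩ :: r) → (toHNN L).1 = 1)
    ∧ (∀ g r, L = ⟨true, g⟩ :: r → (toHNN L).1 ∉ A) := by
  induction L with
  | nil =>
      refine ⟨by simp [toHNN], List.isChain_nil, by simp [toHNN], fun _ => Or.inl rfl,
        fun _ => rfl, by simp⟩
  | cons p r ih =>
      obtain ⟨i, g⟩ := p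
      have hgr : ∀ p ∈ r, if p.1 then p.2 ∉ A else p.2 ∉ B :=
        fun p hp => hgood p (List.mem_cons_of_mem _ hp)
      have halt' := List.isChain_cons.mp halt
      obtain ⟨C1, C2, C3, C4, C5, C6⟩ := ih hgr halt'.2
      have hgoodg := hgood ⟨i, g⟩ List.mem_cons_self
      cases i with
      | true =>
          -- the head of `r` is `false` (or `r` is empty)
          have hrshape : r = [] ∨ ∃ g' r', r = ⟨false, g'⟩ :: r' := by
            cases r with
            | nil => exact Or.inl rfl
            | cons q r' =>
                refine Or.inr ⟨q.2, r', ?_⟩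
                have := halt'.1 q (by simp)
                obtain ⟨j, g'⟩ := q
                simp only at this
                cases j
                · rfl
                · simp at this
          have hr1 : (toHNN r).1 = 1 := C5 hrshape
          have hA : g ∉ A := by simpa using hgoodg
          have hEq : toHNN (⟨true, g⟩ :: r) = (g * (toHNN r).1, (toHNN r).2) := rfl
          refine ⟨?_, ?_, ?_, ?_, ?_, ?_⟩
          · rw [hEq]
            show of (g * (toHNN r).1) * ((toHNN r).2.map (fun x => t ^ (x.1 : ℤ) * of x.2)).prod
              = _
            rw [map_mul, mul_assoc, C1]
            simp [hnnLetter]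
          · rw [hEq]; exact C2
          · rw [hEq]; exact C3
          · rw [hEq]
            intro hl
            rcases C4 hl with hre | ⟨g', hre, _⟩
            · exact Or.inr ⟨g, by simp [hEq, hre, hr1, toHNN]⟩
            · rcases hrshape with h | ⟨g'', r'', h⟩ <;> simp_all
          · rintro (h | ⟨g', r', h⟩) <;> simp_all
          · intro g' r' h
            have hg' : g' = g := by
              have := congrArg (fun L : List ((_ : Bool) × H) => L.head?) h
              simp at this
              exact this.symm
            rw [hEq]
            subst hg'
            show g' * (toHNN r).1 ∉ A
            rw [hr1, mul_one]
            exact hA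
      | false =>
          have hB : g ∉ B := by simpa using hgoodg
          have hchain2 : List.Chain' (fun a b : ℤˣ × H => a.2 ∈ toSubgroup A B a.1 → a.1 = b.1)
              (((1 : ℤˣ), (toHNN r).1) :: (toHNN r).2) := by
            simp only [List.Chain']; rw [List.isChain_cons]
            refine ⟨?_, C2⟩
            intro q hq hmem
            exfalso
            have hq1 : q.1 = (-1 : ℤˣ) := C3 q hq
            -- need `(toHNN r).1 ∉ A`
            have hlr : (toHNN r).2 ≠ [] := by
              intro h
              rw [h] at hq
              simp at hq
            have hrne : r ≠ [] := by
              rintro rfl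
              exact hlr rfl
            -- head of r is `true`
            obtain ⟨q', r', rfl⟩ : ∃ q' r', r = q' :: r' := by
              cases r with
              | nil => exact absurd rfl hrne
              | cons a b => exact ⟨a, b, rfl⟩
            have hq'true : q'.1 = true := by
              have := halt'.1 q' (by simp)
              obtain ⟨j, g'⟩ := q'
              simp only at this
              cases j
              · simp at this
              · rfl
            obtain ⟨j, g'⟩ := q'
            subst hq'true
            have := C6 g' r' rfl
            simp only [toSubgroup_one] at hmem
            exact this hmem
          have hEq : toHNN (⟨false, g⟩ :: r)
              = (1, (-1, g) :: (1, (toHNN r).1) :: (toHNN r).2) := rfl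
          refine ⟨?_, ?_, by rw [hEq]; simp, by rw [hEq]; simp, fun _ => rfl,
            fun g' r' h => absurd (congrArg (fun L : List ((_ : Bool) × H) => L.head?) h)
              (by simp)⟩
          · rw [hEq]
            show of (1 : H) * _ = _
            simp only [List.map_cons, List.prod_cons, map_one, one_mul]
            rw [← C1]
            show _ = (t⁻¹ * of g * t) * _
            have h1 : ((-1 : ℤˣ) : ℤ) = -1 := rfl
            have h2 : ((1 : ℤˣ) : ℤ) = 1 := rfl
            rw [h1, h2, zpow_neg_one, zpow_one]
            group
          · rw [hEq]
            show List.Chain' _ (((-1 : ℤˣ), g) :: ((1 : ℤˣ), (toHNN r).1) :: (toHNN r).2)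
            simp only [List.Chain']; rw [List.isChain_cons_cons]
            refine ⟨?_, hchain2⟩
            intro hmem
            exfalso
            simp only [toSubgroup_neg_one] at hmem
            exact hB hmem

private theorem range_amalgamMaps_true :
    (amalgamMaps A B φ true).range = A := by
  show (A.subtype).range = A
  exact A.range_subtype

private theorem range_amalgamMaps_false :
    (amalgamMaps A B φ false).range = B := by
  show (B.subtype.comp φ.toMonoidHom).range = B
  ext g
  constructor
  · rintro ⟨a, rfl⟩
    exact (φ a).2
  · intro hg
    exact ⟨φ.symm ⟨g, hg⟩, by simp⟩

private theorem amalgamMaps_injective (i : Bool) :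
    Function.Injective (amalgamMaps A B φ i) := by
  cases i
  · show Function.Injective (B.subtype.comp φ.toMonoidHom)
    exact Subtype.val_injective.comp φ.injective
  · exact Subtype.val_injective

end Aux

/-- Let `Γ = HNN(H,Σ,θ)` with `H` abelian and stable letter `t`. The homomorphism
`H *_Σ H̃ → Γ` given by the identity on the first copy of `H` and by `h ↦ t⁻¹ h t` on the
second copy is injective, and its image is the subgroup `G = ⟨H, t⁻¹Ht⟩`. -/
theorem amalgam_embeds_in_hnn {H : Type*} [CommGroup H] (A B : Subgroup H) (φ : A ≃* B) :
    ∃ f : PushoutI (amalgamMaps A B φ) →* HNNExtension H A B φ,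
      (∀ h : H, f (PushoutI.of (φ := amalgamMaps A B φ) true h) = of h) ∧
      (∀ h : H, f (PushoutI.of (φ := amalgamMaps A B φ) false h) = t⁻¹ * of h * t) ∧
      Function.Injective f ∧
      f.range = Subgroup.closure
        ((Set.range fun h : H => (of h : HNNExtension H A B φ)) ∪
          (Set.range fun h : H => (t⁻¹ * of h * t : HNNExtension H A B φ))) := by
  classical
  set Γ := HNNExtension H A B φ
  -- the two maps defining the lift
  let fT : H →* Γ := of
  let fF : H →* Γ := (MulAut.conj t⁻¹).toMonoidHom.comp of
  have hfF : ∀ h : H, fF h = t⁻¹ * of h * t := by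
    intro h
    show (MulAut.conj t⁻¹) (of h) = _
    rw [MulAut.conj_apply, inv_inv]
  have hcomp : ∀ i : Bool, ((if i then fT else fF) : H →* Γ).comp (amalgamMaps A B φ i) =
      fT.comp A.subtype := by
    intro i
    cases i
    · ext a
      show fF (((φ a : B) : H)) = of (a : H)
      rw [hfF, ← equiv_symm_eq_conj (φ a)]
      simp
    · rfl
  let f : PushoutI (amalgamMaps A B φ) →* Γ :=
    PushoutI.lift (fun i => if i then fT else fF) (fT.comp A.subtype) hcomp
  have hfT : ∀ h : H, f (PushoutI.of (φ := amalgamMaps A B φ) true h) = of h := by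
    intro h; simp [f, PushoutI.lift_of, fT]
  have hfFap : ∀ h : H, f (PushoutI.of (φ := amalgamMaps A B φ) false h) = t⁻¹ * of h * t := by
    intro h
    rw [show f (PushoutI.of (φ := amalgamMaps A B φ) false h) = fF h from by
      simp [f, PushoutI.lift_of]]
    exact hfF h
  have hfbase : ∀ a : A, f (PushoutI.base (amalgamMaps A B φ) a) = of (a : H) := by
    intro a; simp [f, PushoutI.lift_base, fT]
  have hletter : ∀ p : (_ : Bool) × H,
      f (PushoutI.of (φ := amalgamMaps A B φ) p.1 p.2) = hnnLetter φ p := by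
    rintro ⟨i, g⟩
    cases i
    · simpa [hnnLetter] using hfFap g
    · simpa [hnnLetter] using hfT g
  -- kernel is trivial
  have hker : ∀ x : PushoutI (amalgamMaps A B φ), f x = 1 → x = 1 := by
    intro x hx
    obtain ⟨d⟩ := PushoutI.NormalWord.transversal_nonempty (amalgamMaps A B φ)
      amalgamMaps_injective
    set w := PushoutI.NormalWord.equiv (d := d) x with hw
    have hxw : x = w.prod := by
      have := (PushoutI.NormalWord.equiv (d := d)).symm_apply_apply x
      exact this.symm
    -- letters of `w` are good
    have hgood : ∀ p ∈ w.toList, if p.1 then p.2 ∉ A else p.2 ∉ B := by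
      intro p hp
      have hset : p.2 ∈ d.set p.1 := by
        obtain ⟨i, g⟩ := p
        exact w.normalized i g hp
      have hne : p.2 ≠ 1 := w.toWord.ne_one p hp
      have hnr : p.2 ∉ (amalgamMaps A B φ p.1).range := by
        intro hr
        apply hne
        have h1 := ((d.compl p.1).existsUnique p.2).unique
          (y₁ := (⟨p.2, hr⟩, ⟨1, d.one_mem p.1⟩))
          (y₂ := (⟨1, one_mem _⟩, ⟨p.2, hset⟩)) (by simp) (by simp)
        have := congrArg (fun q => ((q.1 : H) : H)) h1
        simpa using this
      obtain ⟨i, g⟩ := p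
      cases i
      · simpa [range_amalgamMaps_false] using hnr
      · simpa [range_amalgamMaps_true] using hnr
    have halt : w.toList.Chain' (fun a b => a.1 ≠ b.1) := w.toWord.chain_ne
    obtain ⟨C1, C2, C3, C4, _, _⟩ := toHNN_spec (φ := φ) w.toList hgood halt
    -- compute `f x`
    have hfword : f (PushoutI.ofCoprodI w.toWord.prod) = (w.toList.map (hnnLetter φ)).prod := by
      show f (PushoutI.ofCoprodI (List.prod (w.toList.map fun l => Monoid.CoprodI.of l.snd))) = _
      rw [map_list_prod, map_list_prod]
      rw [List.map_map, List.map_map]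
      congr 1
      refine List.map_congr_left ?_
      intro p _
      show f (PushoutI.ofCoprodI (Monoid.CoprodI.of p.2)) = hnnLetter φ p
      rw [Monoid.PushoutI.ofCoprodI_of]
      exact hletter p
    have hfx : f x = of ((w.head : H) * (toHNN w.toList).1) *
        (((toHNN w.toList).2.map (fun x => t ^ (x.1 : ℤ) * of x.2)).prod : Γ) := by
      rw [hxw]
      show f (PushoutI.base (amalgamMaps A B φ) w.head * PushoutI.ofCoprodI w.toWord.prod) = _
      rw [map_mul, hfbase, hfword, ← C1, map_mul]
      simp [mul_assoc]
    -- the reduced word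
    let rword : NormalWord.ReducedWord H A B :=
      ⟨(w.head : H) * (toHNN w.toList).1, (toHNN w.toList).2, C2⟩
    have hrwprod : rword.prod φ = 1 := by
      show of _ * _ = 1
      rw [← hfx]
      exact hx
    have hnil : rword.toList = [] := by
      refine ReducedWord.toList_eq_nil_of_mem_of_range φ rword ?_
      rw [hrwprod]
      exact ⟨1, map_one _⟩
    have hhead1 : (w.head : H) * (toHNN w.toList).1 = 1 := by
      have : rword.prod φ = of ((w.head : H) * (toHNN w.toList).1) := by
        show of _ * (List.map _ rword.toList).prod = _
        rw [hnil]
        simp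
        exact map_mul of _ _
      rw [hrwprod] at this
      have := HNNExtension.of_injective (G := H) (A := A) (B := B) (φ := φ)
        (show of ((w.head : H) * (toHNN w.toList).1) = of 1 by rw [← this, map_one])
      exact this
    rcases C4 hnil with hLnil | ⟨g, hL, hg⟩
    · -- `w` is just its head, which must be `1`
      have h1 : (toHNN w.toList).1 = 1 := by rw [hLnil]; rfl
      have hahead : (w.head : H) = 1 := by rwa [h1, mul_one] at hhead1
      rw [hxw]
      show PushoutI.base (amalgamMaps A B φ) w.head * PushoutI.ofCoprodI w.toWord.prod = 1
      have : w.toWord.prod = 1 := by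
        rw [Monoid.CoprodI.Word.prod, hLnil]
        rfl
      rw [this, map_one, mul_one]
      have : w.head = 1 := Subtype.ext hahead
      rw [this, map_one]
    · -- single `true` letter, contradiction
      exfalso
      have hgA : g ∉ A := by
        have := hgood ⟨true, g⟩ (by rw [hL]; simp)
        simpa using this
      apply hgA
      have : g = (w.head : H)⁻¹ := by
        rw [hg] at hhead1
        exact eq_inv_of_mul_eq_one_right hhead1
      rw [this]
      exact inv_mem w.head.2
  have hinj : Function.Injective f := by
    intro x y hxy
    have : f (x * y⁻¹) = 1 := by
      rw [map_mul, map_inv, hxy, mul_inv_cancel]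
    have := hker _ this
    rwa [mul_inv_eq_one] at this
  refine ⟨f, hfT, hfFap, hinj, ?_⟩
  apply le_antisymm
  · rintro _ ⟨x, rfl⟩
    induction x using Monoid.PushoutI.induction_on with
    | of i g =>
        cases i
        · rw [hfFap]
          exact Subgroup.subset_closure (Or.inr ⟨g, rfl⟩)
        · rw [hfT]
          exact Subgroup.subset_closure (Or.inl ⟨g, rfl⟩)
    | base a =>
        rw [hfbase]
        exact Subgroup.subset_closure (Or.inl ⟨(a : H), rfl⟩)
    | mul x y hx hy =>
        rw [map_mul]
        exact mul_mem hx hy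
  · rw [Subgroup.closure_le]
    rintro _ (⟨g, rfl⟩ | ⟨g, rfl⟩)
    · exact ⟨PushoutI.of (φ := amalgamMaps A B φ) true g, hfT g⟩
    · exact ⟨PushoutI.of (φ := amalgamMaps A B φ) false g, hfFap g⟩
end

section
/- For integers n, m with |n|, |m| ≥ 2 and |n| ≠ |m|, the Baumslag-Solitar group BS(n,m) is non-amenable. -/
/-- Relations of the Baumslag–Solitar group `BS(n,m) = ⟨a,b | a bⁿ a⁻¹ = bᵐ⟩`,
with `a` corresponding to `true` and `b` to `false`. -/
def BSRels (n m : ℤ) : Set (FreeGroup Bool) :=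
  {FreeGroup.of true * FreeGroup.of false ^ n * (FreeGroup.of true)⁻¹ *
    (FreeGroup.of false ^ m)⁻¹}

/-- The Baumslag–Solitar group `BS(n,m)`. -/
abbrev BS (n m : ℤ) : Type := PresentedGroup (BSRels n m)

/-- The generator `a` of `BS(n,m)`. -/
def BS.a (n m : ℤ) : BS n m := PresentedGroup.of true

/-- The generator `b` of `BS(n,m)`. -/
def BS.b (n m : ℤ) : BS n m := PresentedGroup.of false

/-- A finitely additive left-invariant probability measure ("mean") on all subsets of `G`. -/
structure LeftInvariantMean (G : Type*) [Group G] where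
  m : Set G → ℝ
  nonneg : ∀ s : Set G, 0 ≤ m s
  total : m Set.univ = 1
  addDisjoint : ∀ s t : Set G, Disjoint s t → m (s ∪ t) = m s + m t
  leftInvariant : ∀ (g : G) (s : Set G), m ((g * ·) '' s) = m s

/-- A group is amenable if it admits a finitely additive left-invariant
probability measure on all of its subsets. -/
def Amenable (G : Type*) [Group G] : Prop := Nonempty (LeftInvariantMean G)

namespace BSAux

variable {G : Type*} [Group G]

lemma mean_mono (μ : LeftInvariantMean G) {s t : Set G} (h : s ⊆ t) : μ.m s ≤ μ.m t := by
  have : μ.m t = μ.m s + μ.m (t \ s) := by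
    rw [← μ.addDisjoint s (t \ s) disjoint_sdiff_self_right, Set.union_diff_cancel h]
  rw [this]
  exact le_add_of_nonneg_right (μ.nonneg _)

lemma mean_subadd (μ : LeftInvariantMean G) (s t : Set G) : μ.m (s ∪ t) ≤ μ.m s + μ.m t := by
  have h1 : s ∪ t = s ∪ (t \ s) := by simp
  rw [h1, μ.addDisjoint s (t \ s) disjoint_sdiff_self_right]
  exact add_le_add_right (mean_mono μ Set.diff_subset) _

open FreeGroup in
lemma head_mul_of_head_ne {α} [DecidableEq α] (x : α) (b : Bool) (u : FreeGroup α)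
    (h : u.toWord.head? ≠ some (x, !b)) :
    (FreeGroup.mk [(x,b)] * u).toWord.head? = some (x, b) := by
  conv_lhs => rw [← FreeGroup.mk_toWord (x := u), FreeGroup.mul_mk]
  rw [FreeGroup.toWord_mk, List.singleton_append, FreeGroup.reduce.cons,
    FreeGroup.reduce_toWord]
  cases hW : u.toWord with
  | nil => simp
  | cons hd2 tl2 =>
    simp only
    rw [if_neg]
    · rfl
    rintro ⟨h1, h2⟩
    apply h
    rw [hW]
    obtain ⟨y, c⟩ := hd2
    simp only at h1 h2
    subst h1; subst h2
    simp

lemma mk_single_false (x : Bool) : FreeGroup.mk [(x, false)] = (FreeGroup.of x)⁻¹ := by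
  rw [show FreeGroup.of x = FreeGroup.mk [(x, true)] from rfl, FreeGroup.inv_mk]
  rfl

theorem not_amenable_of_free_subgroup (φ : FreeGroup Bool →* G)
    (hφ : Function.Injective φ) : ¬ Amenable G := by
  rintro ⟨μ⟩
  classical
  -- setoid of right cosets of range φ
  letI s : Setoid G := ⟨fun g h => g * h⁻¹ ∈ φ.range, by
    constructor
    · intro g; exact ⟨1, by simp⟩
    · intro g h hg
      have := φ.range.inv_mem hg
      simpa using this
    · intro g h k h1 h2
      have := φ.range.mul_mem h1 h2
      simpa [mul_assoc] using this⟩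
  have hrel : ∀ g h : G, (s.r g h ↔ g * h⁻¹ ∈ φ.range) := fun _ _ => Iff.rfl
  set rep : G → G := fun g => (Quotient.mk s g).out with hrep
  have hrep_rel : ∀ g : G, rep g * g⁻¹ ∈ φ.range := fun g => Quotient.mk_out g
  have hrep_eq : ∀ (u : FreeGroup Bool) (g : G), rep (φ u * g) = rep g := by
    intro u g
    have : Quotient.mk s (φ u * g) = Quotient.mk s g := by
      apply Quotient.sound
      show (φ u * g) * g⁻¹ ∈ φ.range
      simpa [mul_assoc] using ⟨u, rfl⟩
    simp [hrep, this]
  -- the word part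
  have hsig : ∀ g : G, g * (rep g)⁻¹ ∈ φ.range := by
    intro g
    have := φ.range.inv_mem (hrep_rel g)
    simpa using this
  set w : G → FreeGroup Bool := fun g => Function.invFun φ (g * (rep g)⁻¹) with hw
  have hφw : ∀ g : G, φ (w g) = g * (rep g)⁻¹ := by
    intro g
    obtain ⟨u, hu⟩ := hsig g
    exact Function.invFun_eq ⟨u, hu⟩
  have hw_mul : ∀ (u : FreeGroup Bool) (g : G), w (φ u * g) = u * w g := by
    intro u g
    apply hφ
    rw [hφw, map_mul, hφw, hrep_eq, mul_assoc]
  -- the four pieces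
  set S : Bool → Bool → Set G := fun x b => {g | (w g).toWord.head? = some (x, b)} with hS
  -- cover lemma
  have cover : ∀ x : Bool, Set.univ ⊆ S x true ∪ ((φ (FreeGroup.of x) * ·) '' S x false) := by
    intro x g _
    by_cases hg : (w g).toWord.head? = some (x, true)
    · exact Or.inl hg
    · right
      refine ⟨φ (FreeGroup.of x)⁻¹ * g, ?_, by simp [mul_assoc, ← map_mul]⟩
      show (w (φ (FreeGroup.of x)⁻¹ * g)).toWord.head? = some (x, false)
      rw [show (FreeGroup.of x)⁻¹ = FreeGroup.mk [(x, false)] from (mk_single_false x).symm]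
      rw [hw_mul]
      exact head_mul_of_head_ne x false (w g) (by simpa using hg)
  have cover_m : ∀ x : Bool, (1:ℝ) ≤ μ.m (S x true) + μ.m (S x false) := by
    intro x
    have h1 : μ.m Set.univ ≤ μ.m (S x true ∪ ((φ (FreeGroup.of x) * ·) '' S x false)) :=
      mean_mono μ (cover x)
    have h2 := mean_subadd μ (S x true) ((φ (FreeGroup.of x) * ·) '' S x false)
    rw [μ.total] at h1
    rw [μ.leftInvariant] at h2
    linarith
  -- disjointness
  have hdisj : ∀ (x b y c : Bool), (x, b) ≠ (y, c) → Disjoint (S x b) (S y c) := by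
    intro x b y c hne
    rw [Set.disjoint_left]
    intro g hg1 hg2
    exact hne (Option.some.inj (hg1.symm.trans hg2))
  -- final contradiction
  have d1 : Disjoint (S true true) (S true false) := hdisj _ _ _ _ (by simp)
  have d2 : Disjoint (S true true ∪ S true false) (S false true) := by
    refine Set.disjoint_union_left.mpr ⟨hdisj _ _ _ _ (by simp), hdisj _ _ _ _ (by simp)⟩
  have d3 : Disjoint (S true true ∪ S true false ∪ S false true) (S false false) := by
    refine Set.disjoint_union_left.mpr ⟨Set.disjoint_union_left.mpr
      ⟨hdisj _ _ _ _ (by simp), hdisj _ _ _ _ (by simp)⟩, hdisj _ _ _ _ (by simp)⟩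
  have hsum : μ.m (S true true ∪ S true false ∪ S false true ∪ S false false)
      = μ.m (S true true) + μ.m (S true false) + μ.m (S false true) + μ.m (S false false) := by
    rw [μ.addDisjoint _ _ d3, μ.addDisjoint _ _ d2, μ.addDisjoint _ _ d1]
  have hle : μ.m (S true true ∪ S true false ∪ S false true ∪ S false false) ≤ 1 := by
    rw [← μ.total]
    exact mean_mono μ (Set.subset_univ _)
  have h1 := cover_m true
  have h2 := cover_m false
  linarith

end BSAux

namespace BSAux

def D (n m : ℤ) (s : Bool) : ℤ := if s then |n| else |m|

def Mul (n m : ℤ) (s : Bool) : ℤ := if s then n.sign * m else m.sign * n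

def EntryOK (n m : ℤ) (e : Bool × ℤ) : Prop := 0 ≤ e.2 ∧ e.2 < D n m e.1

def ChainOK (e f : Bool × ℤ) : Prop := e.2 = 0 → f.1 = e.1

def OK (n m : ℤ) (p : ℤ × List (Bool × ℤ)) : Prop :=
  (∀ e ∈ p.2, EntryOK n m e) ∧ p.2.Chain' ChainOK

def Model (n m : ℤ) := {p : ℤ × List (Bool × ℤ) // OK n m p}

def stepRaw (d M : ℤ) (s : Bool) : ℤ × List (Bool × ℤ) → ℤ × List (Bool × ℤ)
  | (c0, []) => (M * (c0 / d), [(s, c0 % d)])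
  | (c0, (ε, c1) :: T) =>
      if c0 % d = 0 ∧ ε = !s then (M * (c0 / d) + c1, T)
      else (M * (c0 / d), (s, c0 % d) :: (ε, c1) :: T)

lemma sign_sign (a : ℤ) : (a.sign).sign = a.sign := by
  rcases lt_trichotomy a 0 with h|h|h <;>
    simp [Int.sign_eq_neg_one_of_neg, Int.sign_eq_one_of_pos, h]

lemma sign_mul_self (a : ℤ) (h : a ≠ 0) : a.sign * a.sign = 1 := by
  rcases h.lt_or_gt with h|h <;>
    simp [Int.sign_eq_neg_one_of_neg, Int.sign_eq_one_of_pos, h]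

lemma mul_sign_eq_abs (a : ℤ) : a * a.sign = |a| := by
  rcases lt_trichotomy a 0 with h|h|h <;>
    simp [Int.sign_eq_neg_one_of_neg, Int.sign_eq_one_of_pos, h, abs_of_neg, abs_of_pos]

variable {n m : ℤ}

lemma D_pos (hn : n ≠ 0) (hm : m ≠ 0) (s : Bool) : 0 < D n m s := by
  cases s <;> simp [D, abs_pos, hn, hm]

lemma abs_Mul (hn : n ≠ 0) (hm : m ≠ 0) (s : Bool) : |Mul n m s| = D n m (!s) := by
  cases s <;> simp [Mul, D, abs_mul, Int.abs_sign_of_ne_zero, hn, hm]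

lemma Mul_sign_mul (hn : n ≠ 0) (hm : m ≠ 0) (s : Bool) :
    (Mul n m s).sign * D n m (!s) = Mul n m s := by
  cases s
  · show (m.sign * n).sign * |n| = m.sign * n
    rw [Int.sign_mul, sign_sign, mul_assoc, Int.sign_mul_abs]
  · show (n.sign * m).sign * |m| = n.sign * m
    rw [Int.sign_mul, sign_sign, mul_assoc, Int.sign_mul_abs]

lemma Mul_other (hn : n ≠ 0) (hm : m ≠ 0) (s : Bool) :
    Mul n m (!s) * (Mul n m s).sign = D n m s := by
  cases s
  · show n.sign * m * (m.sign * n).sign = |m|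
    rw [Int.sign_mul, sign_sign,
      show n.sign * m * (m.sign * n.sign) = (m * m.sign) * (n.sign * n.sign) by ring,
      mul_sign_eq_abs, sign_mul_self n hn, mul_one]
  · show m.sign * n * (n.sign * m).sign = |n|
    rw [Int.sign_mul, sign_sign,
      show m.sign * n * (n.sign * m.sign) = (n * n.sign) * (m.sign * m.sign) by ring,
      mul_sign_eq_abs, sign_mul_self m hm, mul_one]

/-- Generic inverse computation for `stepRaw`. -/
lemma stepRaw_inv_gen (d d' M M' : ℤ) (s : Bool) (hd : 0 < d) (hd' : 0 < d')
    (hM : M.sign * d' = M) (hM' : M' * M.sign = d)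
    (c0 : ℤ) (L : List (Bool × ℤ))
    (hent : ∀ c1 T, L = (!s, c1) :: T → 0 ≤ c1 ∧ c1 < d')
    (hch : ∀ c1 e2 T, L = (!s, c1) :: e2 :: T → c1 = 0 → e2.1 = !s) :
    stepRaw d' M' (!s) (stepRaw d M s (c0, L)) = (c0, L) := by
  have hc0 : d * (c0 / d) + c0 % d = c0 := Int.mul_ediv_add_emod c0 d
  have key : ∀ (k r : ℤ) (L' : List (Bool × ℤ)), 0 ≤ r → r < d →
      stepRaw d' M' (!s) (M * k, (s, r) :: L') = (d * k + r, L') := by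
    intro k r L' h0 h1
    have hMk : M * k = d' * (M.sign * k) := by linear_combination (-k) * hM
    have hmod : (M * k) % d' = 0 := by rw [hMk]; exact Int.mul_emod_right _ _
    have hdiv : (M * k) / d' = M.sign * k := by rw [hMk]; exact Int.mul_ediv_cancel_left _ hd'.ne'
    simp only [stepRaw, hmod, hdiv, Bool.not_not, if_pos (⟨rfl, rfl⟩ : (0:ℤ) = 0 ∧ s = s)]
    refine Prod.ext ?_ rfl
    show M' * (M.sign * k) + r = d * k + r
    linear_combination k * hM'
  cases L with
  | nil =>
    rw [show stepRaw d M s (c0, []) = (M * (c0 / d), (s, c0 % d) :: ([] : List (Bool × ℤ)))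
        from rfl]
    rw [key _ _ _ (Int.emod_nonneg c0 hd.ne') (Int.emod_lt_of_pos c0 hd), hc0]
  | cons e T =>
    obtain ⟨ε, c1⟩ := e
    by_cases h : c0 % d = 0 ∧ ε = !s
    · -- cancellation happened
      obtain ⟨hz, rfl⟩ := h
      obtain ⟨hc1a, hc1b⟩ := hent c1 T rfl
      rw [show stepRaw d M s (c0, (!s, c1) :: T) = (M * (c0 / d) + c1, T) by
        simp [stepRaw, hz]]
      have hMk : M * (c0 / d) = d' * (M.sign * (c0 / d)) := by
        linear_combination (-(c0/d)) * hM
      have hmod : (M * (c0 / d) + c1) % d' = c1 := by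
        rw [hMk, add_comm, Int.add_mul_emod_self_left, Int.emod_eq_of_lt hc1a hc1b]
      have hdiv : (M * (c0 / d) + c1) / d' = M.sign * (c0 / d) := by
        rw [hMk, add_comm, Int.add_mul_ediv_left _ _ hd'.ne', Int.ediv_eq_zero_of_lt hc1a hc1b,
          zero_add]
      have hfin : M' * (M.sign * (c0 / d)) = c0 := by
        have h2 : M' * (M.sign * (c0 / d)) = d * (c0 / d) := by linear_combination (c0/d) * hM'
        rw [h2]
        conv_rhs => rw [← hc0, hz, add_zero]
      cases T with
      | nil =>
        simp only [stepRaw, hmod, hdiv, hfin]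
      | cons e2 T2 =>
        obtain ⟨ε2, c2⟩ := e2
        have hcond : ¬ (c1 = 0 ∧ ε2 = !(!s)) := by
          rintro ⟨h1, h2⟩
          have h3 := hch c1 (ε2, c2) T2 rfl h1
          rw [Bool.not_not] at h2
          rw [h2] at h3
          cases s <;> simp at h3
        simp only [stepRaw, hmod, hdiv, hfin, if_neg hcond]
    · -- no cancellation
      rw [show stepRaw d M s (c0, (ε, c1) :: T) =
          (M * (c0 / d), (s, c0 % d) :: (ε, c1) :: T) by simp only [stepRaw, if_neg h]]
      rw [key _ _ _ (Int.emod_nonneg c0 hd.ne') (Int.emod_lt_of_pos c0 hd), hc0]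

end BSAux

namespace BSAux2
open BSAux
variable {n m : ℤ}

lemma abs_mul_sign (a : ℤ) : |a| * a.sign = a := by rw [mul_comm, Int.sign_mul_abs]

lemma stepRaw_OK (hn : n ≠ 0) (hm : m ≠ 0) (s : Bool) {p : ℤ × List (Bool × ℤ)}
    (hp : OK n m p) : OK n m (stepRaw (D n m s) (Mul n m s) s p) := by
  obtain ⟨c0, L⟩ := p
  have hd : 0 < D n m s := D_pos hn hm s
  have hr0 : 0 ≤ c0 % D n m s := Int.emod_nonneg c0 hd.ne'
  have hr1 : c0 % D n m s < D n m s := Int.emod_lt_of_pos c0 hd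
  cases L with
  | nil =>
    refine ⟨?_, ?_⟩
    · rintro e he
      simp only [stepRaw, List.mem_singleton] at he
      subst he
      exact ⟨hr0, hr1⟩
    · simp [stepRaw, List.Chain']
  | cons e T =>
    obtain ⟨ε, c1⟩ := e
    by_cases h : c0 % D n m s = 0 ∧ ε = !s
    · rw [show stepRaw (D n m s) (Mul n m s) s (c0, (ε, c1) :: T)
          = (Mul n m s * (c0 / D n m s) + c1, T) by simp only [stepRaw, if_pos h]]
      exact ⟨fun e he => hp.1 e (List.mem_cons_of_mem _ he), hp.2.tail⟩
    · rw [show stepRaw (D n m s) (Mul n m s) s (c0, (ε, c1) :: T)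
          = (Mul n m s * (c0 / D n m s), (s, c0 % D n m s) :: (ε, c1) :: T) by
        simp only [stepRaw, if_neg h]]
      refine ⟨?_, ?_⟩
      · rintro e he
        rcases List.mem_cons.mp he with rfl | he
        · exact ⟨hr0, hr1⟩
        · exact hp.1 e he
      · refine List.isChain_cons_cons.mpr ⟨?_, hp.2⟩
        intro hzero
        have hne : ¬ ε = !s := fun hε => h ⟨hzero, hε⟩
        cases s <;> cases ε <;> simp_all [ChainOK]

/-- `a` (if `s = true`) or `a⁻¹` (if `s = false`) acting on normal forms. -/
def stepM (hn : n ≠ 0) (hm : m ≠ 0) (s : Bool) (p : Model n m) : Model n m :=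
  ⟨stepRaw (D n m s) (Mul n m s) s p.1, stepRaw_OK hn hm s p.2⟩

lemma stepM_inv (hn : n ≠ 0) (hm : m ≠ 0) (s : Bool) (p : Model n m) :
    stepM hn hm (!s) (stepM hn hm s p) = p := by
  obtain ⟨⟨c0, L⟩, hp⟩ := p
  apply Subtype.ext
  exact stepRaw_inv_gen (D n m s) (D n m (!s)) (Mul n m s) (Mul n m (!s)) s
    (D_pos hn hm s) (D_pos hn hm (!s)) (Mul_sign_mul hn hm s) (Mul_other hn hm s) c0 L
    (fun c1 T hL => by
      have := hp.1 (!s, c1) (hL ▸ List.mem_cons_self)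
      exact this)
    (fun c1 e2 T hL h0 => by
      subst hL
      exact (List.isChain_cons_cons.mp hp.2).1 h0)

/-- The permutation given by the generator `a`. -/
def aPerm (hn : n ≠ 0) (hm : m ≠ 0) : Equiv.Perm (Model n m) :=
  ⟨stepM hn hm true, stepM hn hm false, stepM_inv hn hm true, stepM_inv hn hm false⟩

/-- The permutation given by the generator `b`. -/
def bPerm : Equiv.Perm (Model n m) :=
  ⟨fun p => ⟨(p.1.1 + 1, p.1.2), p.2⟩, fun p => ⟨(p.1.1 - 1, p.1.2), p.2⟩,
    fun p => by apply Subtype.ext; simp, fun p => by apply Subtype.ext; simp⟩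

lemma bPerm_zpow (k : ℤ) (p : Model n m) :
    (bPerm ^ k) p = ⟨(p.1.1 + k, p.1.2), p.2⟩ := by
  induction k using Int.induction_on generalizing p with
  | zero => apply Subtype.ext; simp
  | succ i ih =>
    rw [zpow_add_one, Equiv.Perm.mul_apply, ih]
    apply Subtype.ext
    exact Prod.ext (by simp only [bPerm]; erw [Equiv.coe_fn_mk]; push_cast; ring) rfl
  | pred i ih =>
    rw [zpow_sub_one, Equiv.Perm.mul_apply, ih]
    apply Subtype.ext
    exact Prod.ext (by
      simp only [bPerm, Equiv.Perm.inv_def, Equiv.symm]; erw [Equiv.coe_fn_mk]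
      push_cast; ring) rfl

lemma stepRaw_shift (d M : ℤ) (hd : d ≠ 0) (s : Bool) (c0 t : ℤ) (L : List (Bool × ℤ)) :
    stepRaw d M s (c0 + d * t, L)
      = ((stepRaw d M s (c0, L)).1 + M * t, (stepRaw d M s (c0, L)).2) := by
  have hmod : (c0 + d * t) % d = c0 % d := Int.add_mul_emod_self_left c0 d t
  have hdiv : (c0 + d * t) / d = c0 / d + t := Int.add_mul_ediv_left c0 t hd
  cases L with
  | nil =>
    simp only [stepRaw, hmod, hdiv]
    exact Prod.ext (by ring) rfl
  | cons e T =>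
    obtain ⟨ε, c1⟩ := e
    by_cases h : c0 % d = 0 ∧ ε = !s
    · simp only [stepRaw, hmod, hdiv, if_pos h]
      exact Prod.ext (by ring) rfl
    · simp only [stepRaw, hmod, hdiv, if_neg h]
      exact Prod.ext (by ring) rfl

lemma a_b_rel (hn : n ≠ 0) (hm : m ≠ 0) (p : Model n m) :
    aPerm hn hm ((bPerm ^ n) p) = (bPerm ^ m) (aPerm hn hm p) := by
  obtain ⟨⟨c0, L⟩, hp⟩ := p
  rw [bPerm_zpow, bPerm_zpow (p := (⟨(c0, L), hp⟩ : Model n m))]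
  apply Subtype.ext
  show stepRaw (D n m true) (Mul n m true) true (c0 + n, L)
      = ((stepRaw (D n m true) (Mul n m true) true (c0, L)).1 + m,
         (stepRaw (D n m true) (Mul n m true) true (c0, L)).2)
  have h1 : c0 + n = c0 + D n m true * n.sign := by
    rw [show D n m true = |n| from rfl, abs_mul_sign]
  have h2 : Mul n m true * n.sign = m := by
    rw [show Mul n m true = n.sign * m from rfl,
      show n.sign * m * n.sign = m * (n.sign * n.sign) by ring, sign_mul_self n hn, mul_one]
  rw [h1, stepRaw_shift _ _ (D_pos hn hm true).ne' _ _ _, h2]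

end BSAux2

namespace BSAux2
open BSAux
variable {n m : ℤ}

/-- The base point: the empty normal form. -/
def x0 : Model n m := ⟨(0, []), by constructor <;> simp [List.Chain']⟩

/-- Target sets for ping-pong: letter `(x, s)` where `x = true` means the generator `a`,
`x = false` means the generator `b a b⁻¹`, and `s` is the sign of the letter. -/
def PSet (x s : Bool) : Set (Model n m) :=
  {p | (∃ c T, p.1.2 = (s, c) :: T) ∧ D n m (!s) ∣ (p.1.1 - (if x then 0 else 1))}

lemma stepRaw_nocancel (d M : ℤ) (s : Bool) (c0 : ℤ) (L : List (Bool × ℤ))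
    (h : ∀ c1 T, L = (!s, c1) :: T → ¬ c0 % d = 0) :
    stepRaw d M s (c0, L) = (M * (c0 / d), (s, c0 % d) :: L) := by
  cases L with
  | nil => rfl
  | cons e T =>
    obtain ⟨ε, c1⟩ := e
    have hcond : ¬ (c0 % d = 0 ∧ ε = !s) := by
      rintro ⟨h1, rfl⟩
      exact h c1 T rfl h1
    simp only [stepRaw, if_neg hcond]

lemma stepM_core (hn : n ≠ 0) (hm : m ≠ 0) (s : Bool) (q : Model n m)
    (hq : q.1.2 = [] ∨ (∃ c T, q.1.2 = (s, c) :: T) ∨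
          (∃ c T, q.1.2 = (!s, c) :: T ∧ ¬ (D n m s ∣ q.1.1))) :
    (∃ c T, (stepM hn hm s q).1.2 = (s, c) :: T) ∧
      D n m (!s) ∣ (stepM hn hm s q).1.1 := by
  have hnc : ∀ c1 T, q.1.2 = (!s, c1) :: T → ¬ q.1.1 % D n m s = 0 := by
    intro c1 T hL
    rcases hq with h | ⟨c, T', hh⟩ | ⟨c, T', hh, hdvd⟩
    · rw [h] at hL; cases hL
    · rw [hh] at hL
      injection hL with h1 _
      injection h1 with h2 _
      cases s <;> simp at h2
    · intro hmod
      exact hdvd (Int.dvd_of_emod_eq_zero hmod)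
  have hst : (stepM hn hm s q).1
      = (Mul n m s * (q.1.1 / D n m s), (s, q.1.1 % D n m s) :: q.1.2) :=
    stepRaw_nocancel _ _ _ q.1.1 q.1.2 hnc
  constructor
  · exact ⟨q.1.1 % D n m s, q.1.2, by rw [hst]⟩
  · rw [hst]
    show D n m (!s) ∣ Mul n m s * (q.1.1 / D n m s)
    rw [← abs_Mul hn hm s]
    exact (abs_dvd _ _).mpr (dvd_mul_right _ _)

lemma D_ge_two (hn2 : 2 ≤ |n|) (hm2 : 2 ≤ |m|) (s : Bool) : 2 ≤ D n m s := by
  cases s <;> simpa [D]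

lemma dvd_contra {d a b : ℤ} (hd : 2 ≤ d) (h1 : d ∣ a) (h2 : d ∣ b) (hab : a - b = 1) :
    False := by
  have h3 : d ∣ (1 : ℤ) := by rw [← hab]; exact dvd_sub h1 h2
  have := Int.le_of_dvd one_pos h3
  omega

lemma aPerm_apply (hn : n ≠ 0) (hm : m ≠ 0) (s : Bool) (p : Model n m) :
    (if s then aPerm hn hm else (aPerm hn hm)⁻¹) p = stepM hn hm s p := by
  cases s <;> rfl

lemma bab_inv (hn : n ≠ 0) (hm : m ≠ 0) :
    (bPerm * aPerm hn hm * bPerm⁻¹)⁻¹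
      = bPerm * (aPerm hn hm)⁻¹ * (bPerm : Equiv.Perm (Model n m))⁻¹ := by
  group

/-- Main transition lemma. -/
lemma genPerm_mem (hn2 : 2 ≤ |n|) (hm2 : 2 ≤ |m|) (hn : n ≠ 0) (hm : m ≠ 0)
    (x s : Bool) (p : Model n m)
    (hp : p.1.2 = [] ∨ ∃ y t : Bool, ¬(y = x ∧ t = !s) ∧ p ∈ PSet y t) :
    (if s then (if x then aPerm hn hm else bPerm * aPerm hn hm * bPerm⁻¹)
      else (if x then aPerm hn hm else bPerm * aPerm hn hm * bPerm⁻¹)⁻¹) p ∈ PSet x s := by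
  cases x
  · -- x = false : the generator b a b⁻¹
    show (if s then (bPerm * aPerm hn hm * bPerm⁻¹ : Equiv.Perm (Model n m))
        else (bPerm * aPerm hn hm * bPerm⁻¹)⁻¹) p ∈ PSet false s
    have happ : (if s then (bPerm * aPerm hn hm * bPerm⁻¹ : Equiv.Perm (Model n m))
        else (bPerm * aPerm hn hm * bPerm⁻¹)⁻¹) p = bPerm (stepM hn hm s (bPerm⁻¹ p)) := by
      cases s
      · rw [if_neg (by simp), bab_inv]
        rfl
      · rw [if_pos rfl]
        rfl
    rw [happ]
    set q : Model n m := bPerm⁻¹ p with hqdef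
    have hq2 : q.1.2 = p.1.2 := rfl
    have hq1 : q.1.1 = p.1.1 - 1 := rfl
    have hhyp : q.1.2 = [] ∨ (∃ c T, q.1.2 = (s, c) :: T) ∨
        (∃ c T, q.1.2 = (!s, c) :: T ∧ ¬ (D n m s ∣ q.1.1)) := by
      rcases hp with h | ⟨y, t, hne, ⟨⟨c, T, hhead⟩, hdvd⟩⟩
      · left; rw [hq2, h]
      · by_cases hts : t = s
        · right; left
          exact ⟨c, T, by rw [hq2, hhead, hts]⟩
        · have hts' : t = !s := by cases t <;> cases s <;> simp_all
          have hy : y = true := by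
            cases y
            · exact (hne ⟨rfl, hts'⟩).elim
            · rfl
          right; right
          refine ⟨c, T, by rw [hq2, hhead, hts'], ?_⟩
          intro hdvd2
          rw [hy] at hdvd
          norm_num at hdvd
          have hDs : D n m (!t) = D n m s := by rw [hts', Bool.not_not]
          rw [hDs] at hdvd
          rw [hq1] at hdvd2
          exact dvd_contra (D_ge_two hn2 hm2 s) hdvd hdvd2 (by ring)
    have hcore := stepM_core hn hm s q hhyp
    refine ⟨hcore.1, ?_⟩
    show D n m (!s) ∣ ((stepM hn hm s q).1.1 + 1 - (if false then 0 else 1))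
    simpa using hcore.2
  · -- x = true : the generator a
    show (if s then aPerm hn hm else (aPerm hn hm)⁻¹) p ∈ PSet true s
    rw [aPerm_apply hn hm s p]
    have hhyp : p.1.2 = [] ∨ (∃ c T, p.1.2 = (s, c) :: T) ∨
        (∃ c T, p.1.2 = (!s, c) :: T ∧ ¬ (D n m s ∣ p.1.1)) := by
      rcases hp with h | ⟨y, t, hne, ⟨⟨c, T, hhead⟩, hdvd⟩⟩
      · left; exact h
      · by_cases hts : t = s
        · right; left
          exact ⟨c, T, by rw [hhead, hts]⟩
        · have hts' : t = !s := by cases t <;> cases s <;> simp_all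
          have hy : y = false := by
            cases y
            · rfl
            · exact (hne ⟨rfl, hts'⟩).elim
          right; right
          refine ⟨c, T, by rw [hhead, hts'], ?_⟩
          intro hdvd2
          rw [hy] at hdvd
          norm_num at hdvd
          have hDs : D n m (!t) = D n m s := by rw [hts', Bool.not_not]
          rw [hDs] at hdvd
          exact dvd_contra (D_ge_two hn2 hm2 s) hdvd2 hdvd (by ring)
    have hcore := stepM_core hn hm s p hhyp
    refine ⟨hcore.1, ?_⟩
    show D n m (!s) ∣ ((stepM hn hm s p).1.1 - (if true then 0 else 1))
    simpa using hcore.2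

end BSAux2

namespace BSAux2
open BSAux
variable {n m : ℤ}

/-- The homomorphism from the free group on two letters sending `true ↦ α` (action of `a`)
and `false ↦ β α β⁻¹` (action of `b a b⁻¹`). -/
def psi (hn : n ≠ 0) (hm : m ≠ 0) : FreeGroup Bool →* Equiv.Perm (Model n m) :=
  FreeGroup.lift (fun x => if x then aPerm hn hm else bPerm * aPerm hn hm * bPerm⁻¹)

lemma psi_single (hn : n ≠ 0) (hm : m ≠ 0) (x s : Bool) :
    psi hn hm (FreeGroup.mk [(x, s)])
      = (if s then (if x then aPerm hn hm else bPerm * aPerm hn hm * bPerm⁻¹)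
         else (if x then aPerm hn hm else bPerm * aPerm hn hm * bPerm⁻¹)⁻¹) := by
  cases s
  · rw [if_neg (by simp),
      show FreeGroup.mk [(x, false)] = (FreeGroup.of x)⁻¹ from BSAux.mk_single_false x,
      map_inv]
    congr 1
  · rw [if_pos rfl]
    exact FreeGroup.lift_apply_of

lemma psi_word_mem (hn2 : 2 ≤ |n|) (hm2 : 2 ≤ |m|) (hn : n ≠ 0) (hm : m ≠ 0) :
    ∀ L : List (Bool × Bool),
      (∀ (L1 : List (Bool × Bool)) x b L2, L ≠ L1 ++ (x, b) :: (x, !b) :: L2) →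
      ∀ x s T, L = (x, s) :: T → psi hn hm (FreeGroup.mk L) x0 ∈ PSet x s := by
  intro L
  induction L with
  | nil => intro _ x s T h; cases h
  | cons e L' ih =>
    intro hred x s T heq
    injection heq with he hT
    subst he
    subst hT
    have hmk : FreeGroup.mk ((x, s) :: L') = FreeGroup.mk [(x, s)] * FreeGroup.mk L' := by
      rw [FreeGroup.mul_mk]
      rfl
    rw [hmk, map_mul, Equiv.Perm.mul_apply, psi_single]
    apply genPerm_mem hn2 hm2 hn hm
    cases L' with
    | nil =>
      left
      have h1 : FreeGroup.mk ([] : List (Bool × Bool)) = 1 := by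
        rw [← FreeGroup.toWord_one (α := Bool), FreeGroup.mk_toWord]
      rw [h1, map_one]
      rfl
    | cons e2 T2 =>
      right
      obtain ⟨y, t⟩ := e2
      refine ⟨y, t, ?_, ?_⟩
      · rintro ⟨h1, h2⟩
        exact hred [] x s T2 (by rw [h1, h2]; rfl)
      · exact ih (fun L1 x' b' L2 hL => hred ((x, s) :: L1) x' b' L2 (by rw [hL]; rfl))
          y t T2 rfl

lemma psi_injective (hn2 : 2 ≤ |n|) (hm2 : 2 ≤ |m|) (hn : n ≠ 0) (hm : m ≠ 0) :
    Function.Injective (psi (n := n) (m := m) hn hm) := by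
  apply (injective_iff_map_eq_one _).mpr
  intro u hu
  by_contra hne
  have hW : u.toWord ≠ [] := fun h => hne (FreeGroup.toWord_eq_nil_iff.mp h)
  obtain ⟨e, T, heq⟩ := List.exists_cons_of_ne_nil hW
  obtain ⟨x, s⟩ := e
  have hred : ∀ (L1 : List (Bool × Bool)) x' b' L2,
      u.toWord ≠ L1 ++ (x', b') :: (x', !b') :: L2 := by
    intro L1 x' b' L2 hL
    exact FreeGroup.reduce.not (L₁ := u.toWord) (L₂ := L1) (L₃ := L2)
      (by rw [FreeGroup.reduce_toWord]; exact hL)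
  have hmem := psi_word_mem hn2 hm2 hn hm u.toWord hred x s T heq
  rw [FreeGroup.mk_toWord, hu] at hmem
  obtain ⟨⟨c, T', hh⟩, -⟩ := hmem
  have : ([] : List (Bool × ℤ)) = (s, c) :: T' := hh
  cases this

/-- The action of `BS(n,m)` on normal forms. -/
def bsHom (hn : n ≠ 0) (hm : m ≠ 0) : BS n m →* Equiv.Perm (Model n m) :=
  PresentedGroup.toGroup (f := fun x => if x then aPerm hn hm else bPerm) (by
    intro r hr
    rw [BSRels, Set.mem_singleton_iff] at hr
    subst hr
    simp only [map_mul, map_inv, map_zpow, FreeGroup.lift_apply_of]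
    rw [if_pos trivial, if_neg (by simp)]
    rw [mul_inv_eq_one, mul_inv_eq_iff_eq_mul]
    ext p
    simp only [Equiv.Perm.mul_apply]
    exact a_b_rel hn hm p)

lemma bsHom_comp (hn : n ≠ 0) (hm : m ≠ 0) :
    (bsHom hn hm).comp (FreeGroup.lift
      (fun t => if t then BS.a n m else BS.b n m * BS.a n m * (BS.b n m)⁻¹)) = psi hn hm := by
  apply FreeGroup.ext_hom
  intro t
  rw [MonoidHom.comp_apply, FreeGroup.lift_apply_of]
  show bsHom hn hm (if t then BS.a n m else BS.b n m * BS.a n m * (BS.b n m)⁻¹)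
    = psi hn hm (FreeGroup.of t)
  rw [show psi (n := n) (m := m) hn hm (FreeGroup.of t)
    = if t then aPerm hn hm else bPerm * aPerm hn hm * bPerm⁻¹ from FreeGroup.lift_apply_of]
  have ha : bsHom hn hm (BS.a n m) = aPerm hn hm := by
    rw [BS.a, bsHom]
    exact PresentedGroup.toGroup.of _
  have hb : bsHom hn hm (BS.b n m) = bPerm := by
    rw [BS.b, bsHom]
    exact PresentedGroup.toGroup.of _
  cases t
  · rw [if_neg (by simp), if_neg (by simp), map_mul, map_mul, map_inv, ha, hb]
  · rw [if_pos rfl, if_pos rfl, ha]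

end BSAux2

/-- For `|n|,|m| ≥ 2` and `|n| ≠ |m|`, the Baumslag–Solitar group `BS(n,m)` is non-amenable. -/
theorem bs_not_amenable (n m : ℤ) (hn : 2 ≤ |n|) (hm : 2 ≤ |m|) (hnm : |n| ≠ |m|) :
    ¬ Amenable (BS n m) := by
  have hn0 : n ≠ 0 := by
    intro h
    rw [h, abs_zero] at hn
    exact absurd hn (by norm_num)
  have hm0 : m ≠ 0 := by
    intro h
    rw [h, abs_zero] at hm
    exact absurd hm (by norm_num)
  apply BSAux.not_amenable_of_free_subgroup
    (FreeGroup.lift (fun t => if t then BS.a n m else BS.b n m * BS.a n m * (BS.b n m)⁻¹))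
  intro u v huv
  apply BSAux2.psi_injective hn hm hn0 hm0
  rw [← BSAux2.bsHom_comp hn0 hm0]
  simp only [MonoidHom.comp_apply]
  rw [huv]
end

section
/- For integers n, m with |n|, |m| ≥ 2 and |n| ≠ |m|, the Baumslag-Solitar group BS(n,m) is ICC: every element other than the identity has an infinite conjugacy class. -/
open Multiplicative HNNExtension HNNExtension.NormalWord

namespace BSICC
section Generic
variable {G : Type*} [Group G] {A B : Subgroup G} (φ : A ≃* B)
  (d : TransversalPair G A B)

/-- The signature of an element: the list of `t`-exponents in its normal form. -/
noncomputable def sig (x : HNNExtension G A B φ) : List ℤˣ :=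
  ((equiv φ d) x).toList.map Prod.fst

lemma nw_prod (x : HNNExtension G A B φ) :
    ((equiv φ d) x).prod φ = x :=
  (equiv φ d).symm_apply_apply x

lemma sig_eq_of_reduced (w : ReducedWord G A B) :
    sig φ d (w.prod φ) = w.toList.map Prod.fst :=
  (ReducedWord.map_fst_eq_and_of_prod_eq φ
    (w₁ := ((equiv φ d) (w.prod φ)).toReducedWord) (w₂ := w) (by
      show ((equiv φ d) (w.prod φ)).prod φ = w.prod φ
      exact nw_prod φ d _)).1

lemma sig_one : sig φ d 1 = [] := by
  have : (equiv φ d) 1 = NormalWord.empty :=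
    (one_smul _ _ : (1 : HNNExtension G A B φ) • (NormalWord.empty : NormalWord d) = _)
  simp [sig, this]

lemma equiv_mul (x y : HNNExtension G A B φ) :
    (equiv φ d) (x * y) = x • ((equiv φ d) y) := mul_smul x y _

lemma sig_of_mul (g : G) (x : HNNExtension G A B φ) :
    sig φ d (of g * x) = sig φ d x := by
  unfold sig
  rw [equiv_mul, of_smul_eq_smul]
  simp

lemma sig_of' (g : G) : sig φ d (of g) = [] := by
  have := sig_of_mul φ d g 1
  rw [mul_one] at this
  rw [this, sig_one]

lemma unitsSMulWithCancel_toList (u : ℤˣ) (w : NormalWord d)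
    (h : Cancels u w) :
    (unitsSMulWithCancel φ u w h).toList = w.toList.tail := by
  induction w using consRecOn with
  | ofGroup g => simp [Cancels, ofGroup] at h
  | cons g u' w h1 h2 ih => simp [unitsSMulWithCancel]

lemma equiv_t_mul (u : ℤˣ) (x : HNNExtension G A B φ) :
    (equiv φ d) (t ^ (u : ℤ) * x) = unitsSMul φ u ((equiv φ d) x) := by
  have he : ∀ y : HNNExtension G A B φ, (equiv φ d) y = y • NormalWord.empty :=
    fun _ => rfl
  rw [he, he, mul_smul, t_pow_smul_eq_unitsSMul]

lemma sig_t_mul_cancel (u : ℤˣ) (x : HNNExtension G A B φ)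
    (h : Cancels u ((equiv φ d) x)) :
    sig φ d (t ^ (u : ℤ) * x) = (sig φ d x).tail := by
  unfold sig
  rw [equiv_t_mul, unitsSMul, dif_pos h, unitsSMulWithCancel_toList, List.map_tail]

lemma sig_t_mul_of_not_cancel (u : ℤˣ) (x : HNNExtension G A B φ)
    (h : ¬ Cancels u ((equiv φ d) x)) :
    sig φ d (t ^ (u : ℤ) * x) = u :: sig φ d x := by
  unfold sig
  rw [equiv_t_mul, unitsSMul, dif_neg h]
  simp

lemma cancels_iff (u : ℤˣ) (x : HNNExtension G A B φ) :
    Cancels u ((equiv φ d) x) ↔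
      ((equiv φ d) x).head ∈ (toSubgroup A B u : Subgroup G) ∧
        (sig φ d x).head? = some (-u) := by
  unfold Cancels sig
  rw [List.head?_map]

/-- the chain relation of reduced words -/
def Rw (A B : Subgroup G) : (ℤˣ × G) → (ℤˣ × G) → Prop :=
  fun a b => a.2 ∈ toSubgroup A B a.1 → a.1 = b.1

noncomputable def wprod (h : G) (l : List (ℤˣ × G)) : HNNExtension G A B φ :=
  of h * (l.map fun x => t ^ (x.1 : ℤ) * of x.2).prod

lemma wprod_eq_prod (w : ReducedWord G A B) :
    w.prod φ = wprod φ w.head w.toList := rfl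

/-- reversal of a word -/
def revL : G → List (ℤˣ × G) → G × List (ℤˣ × G)
  | h, [] => (h⁻¹, [])
  | h, (u, g) :: l => ((revL g l).1, (revL g l).2 ++ [(-u, h⁻¹)])

lemma revL_sig (l : List (ℤˣ × G)) : ∀ h : G,
    (revL h l).2.map Prod.fst = (l.map Prod.fst).reverse.map (fun u => -u) := by
  induction l with
  | nil => intro h; simp [revL]
  | cons a l ih =>
    intro h
    obtain ⟨u, g⟩ := a
    simp [revL, ih g]

lemma revL_prod (l : List (ℤˣ × G)) : ∀ h : G,
    wprod φ (revL h l).1 (revL h l).2 = (wprod φ h l)⁻¹ := by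
  induction l with
  | nil => intro h; simp [revL, wprod]
  | cons a l ih =>
    intro h
    obtain ⟨u, g⟩ := a
    rw [show revL h ((u, g) :: l) = ((revL g l).1, (revL g l).2 ++ [(-u, h⁻¹)]) from rfl]
    unfold wprod
    simp only [List.map_append, List.map_cons, List.prod_append, List.prod_cons,
      List.map_nil, List.prod_nil]
    have := ih g
    unfold wprod at this
    rw [← mul_assoc, this]
    simp [mul_assoc, zpow_neg]

lemma units_ne_iff {u v : ℤˣ} (h : u ≠ v) : u = -v := by
  rcases Int.units_eq_one_or u with rfl | rfl <;>
    rcases Int.units_eq_one_or v with rfl | rfl <;> simp_all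

lemma revL_chain (l : List (ℤˣ × G)) : ∀ h : G,
    l.Chain' (Rw A B) → (revL h l).2.Chain' (Rw A B) := by
  induction l with
  | nil => intro h _; simp [revL, List.Chain']
  | cons a l ih =>
    intro h hc
    obtain ⟨u, g⟩ := a
    rw [show revL h ((u, g) :: l) = ((revL g l).1, (revL g l).2 ++ [(-u, h⁻¹)]) from rfl]
    simp only [List.Chain']
    rw [List.isChain_append]
    refine ⟨ih g (List.isChain_cons.1 hc).2, List.isChain_singleton _, ?_⟩
    intro x hx y hy
    simp only [List.head?_cons, Option.mem_def, Option.some.injEq] at hy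
    subst hy
    cases l with
    | nil => simp [revL] at hx
    | cons b l2 =>
      obtain ⟨u₂, g₂⟩ := b
      rw [show revL g ((u₂, g₂) :: l2) = ((revL g₂ l2).1, (revL g₂ l2).2 ++ [(-u₂, g⁻¹)]) from rfl]
        at hx
      simp only [List.getLast?_concat, Option.mem_def, Option.some.injEq] at hx
      subst hx
      intro hmem
      have hg : g ∈ toSubgroup A B (-u₂) := by
        simpa using (toSubgroup A B (-u₂)).inv_mem hmem
      have hchain := (List.isChain_cons_cons.1 hc).1
      by_cases huu : u = u₂
      · rw [huu]
      · have : u = -u₂ := units_ne_iff huu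
        subst this
        exact absurd (hchain hg) (by simpa using huu)

/-- negated reversal of a signature -/
def negrev (l : List ℤˣ) : List ℤˣ := l.reverse.map (fun u => -u)

@[simp] lemma negrev_nil : negrev [] = [] := rfl

@[simp] lemma negrev_negrev (l : List ℤˣ) : negrev (negrev l) = l := by
  unfold negrev
  rw [← List.map_reverse, List.reverse_reverse, List.map_map]
  simp

lemma negrev_cons (a : ℤˣ) (l : List ℤˣ) : negrev (a :: l) = negrev l ++ [-a] := by
  simp [negrev]

lemma negrev_eq_nil_iff (l : List ℤˣ) : negrev l = [] ↔ l = [] := by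
  unfold negrev
  simp

lemma sig_inv (x : HNNExtension G A B φ) :
    sig φ d x⁻¹ = negrev (sig φ d x) := by
  set w := (equiv φ d) x with hw
  have hx : x = wprod φ w.head w.toList := by
    rw [← wprod_eq_prod]
    exact (nw_prod φ d x).symm
  have hchain : w.toList.Chain' (Rw A B) := w.chain
  let w' : ReducedWord G A B :=
    { head := (revL w.head w.toList).1
      toList := (revL w.head w.toList).2
      chain := revL_chain w.toList w.head hchain }
  have hprod : w'.prod φ = x⁻¹ := by
    rw [wprod_eq_prod]
    show wprod φ (revL w.head w.toList).1 (revL w.head w.toList).2 = x⁻¹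
    rw [revL_prod, ← hx]
  have := sig_eq_of_reduced φ d w'
  rw [hprod] at this
  rw [this]
  show (revL w.head w.toList).2.map Prod.fst = _
  rw [revL_sig]
  rfl

lemma negrev_tail (l : List ℤˣ) : (negrev l).tail = negrev l.dropLast := by
  induction l using List.reverseRecOn with
  | nil => simp
  | append_singleton l a ih =>
    have : negrev (l ++ [a]) = -a :: negrev l := by
      simp [negrev]
    simp [this]

lemma sig_mul_t (x : HNNExtension G A B φ) (u : ℤˣ) :
    sig φ d (x * t ^ (u : ℤ)) = sig φ d x ++ [u] ∨
      (sig φ d x ≠ [] ∧ sig φ d (x * t ^ (u : ℤ)) = (sig φ d x).dropLast) := by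
  have hinv : (x * t ^ (u : ℤ))⁻¹ = t ^ ((-u : ℤˣ) : ℤ) * x⁻¹ := by
    rw [mul_inv_rev, ← zpow_neg]
    simp
  have hsig : sig φ d (x * t ^ (u : ℤ)) = negrev (sig φ d (x * t ^ (u : ℤ))⁻¹) := by
    rw [sig_inv, negrev_negrev]
  by_cases h : Cancels (-u) ((equiv φ d) x⁻¹)
  · right
    have h1 : sig φ d (x * t ^ (u : ℤ))⁻¹ = (sig φ d x⁻¹).tail := by
      rw [hinv]; exact sig_t_mul_cancel φ d (-u) x⁻¹ h
    constructor
    · intro hnil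
      have h2 := h.2
      have h3 : sig φ d x⁻¹ = [] := by rw [sig_inv, hnil]; rfl
      have h4 : ((equiv φ d) x⁻¹).toList = [] := by
        unfold sig at h3; simpa using h3
      rw [h4] at h2
      simp at h2
    · rw [hsig, h1, sig_inv, negrev_tail, negrev_negrev]
  · left
    have h1 : sig φ d (x * t ^ (u : ℤ))⁻¹ = (-u) :: sig φ d x⁻¹ := by
      rw [hinv]; exact sig_t_mul_of_not_cancel φ d (-u) x⁻¹ h
    rw [hsig, h1, negrev_cons, sig_inv, negrev_negrev]
    simp

/-- the `t`-exponent-sum homomorphism -/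
noncomputable def sigmaH : HNNExtension G A B φ →* Multiplicative ℤ :=
  lift 1 (ofAdd 1) (by intro a; simp)

@[simp] lemma sigmaH_of (g : G) : sigmaH φ (of g) = 1 := by
  simp [sigmaH]

@[simp] lemma sigmaH_t : sigmaH φ (t : HNNExtension G A B φ) = ofAdd 1 := by
  simp [sigmaH]

/-- sum of units in a list -/
def US (l : List ℤˣ) : ℤ := (l.map fun u => (u : ℤ)).sum

@[simp] lemma US_nil : US [] = 0 := rfl
@[simp] lemma US_cons (a : ℤˣ) (l : List ℤˣ) : US (a :: l) = (a : ℤ) + US l := by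
  simp [US]

lemma sigmaH_wprod (l : List (ℤˣ × G)) : ∀ h : G,
    sigmaH φ (wprod φ h l) = ofAdd (US (l.map Prod.fst)) := by
  induction l with
  | nil => intro h; simp [wprod]
  | cons a l ih =>
    intro h
    obtain ⟨u, g⟩ := a
    have hw : wprod φ h ((u, g) :: l) = of h * t ^ (u : ℤ) * wprod φ g l := by
      unfold wprod
      simp [mul_assoc]
    rw [hw, map_mul, map_mul, ih g, map_zpow, sigmaH_of, sigmaH_t, one_mul]
    rw [← ofAdd_zsmul, ← ofAdd_add]
    simp [US]

lemma sigmaH_eq_sig (x : HNNExtension G A B φ) :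
    sigmaH φ x = ofAdd (US (sig φ d x)) := by
  conv_lhs => rw [← nw_prod φ d x]
  rw [wprod_eq_prod, sigmaH_wprod]
  rfl

lemma exists_of_sig_nil (x : HNNExtension G A B φ) (h : sig φ d x = []) :
    ∃ g : G, x = of g := by
  refine ⟨((equiv φ d) x).head, ?_⟩
  have h2 : ((equiv φ d) x).toList = [] := by
    unfold sig at h
    simpa using h
  have := nw_prod φ d x
  rw [wprod_eq_prod] at this
  unfold wprod at this
  rw [show ((equiv φ d) x).toReducedWord.toList = ((equiv φ d) x).toList from rfl, h2] at this
  simpa using this.symm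

lemma all_eq_of_replicate_comm (c : ℤˣ) :
    ∀ (s : List ℤˣ) (p : ℕ), 0 < p →
      List.replicate p c ++ s = s ++ List.replicate p c → ∀ x ∈ s, x = c := by
  intro s
  induction s with
  | nil => simp
  | cons a s ih =>
    intro p hp heq
    have ha : a = c := by
      have h1 : (List.replicate p c ++ a :: s).head? = some c := by
        cases p with
        | zero => omega
        | succ p => simp [List.replicate_succ]
      rw [heq] at h1
      simpa using h1
    subst ha
    have heq2 : a :: (List.replicate p a ++ s) = a :: (s ++ List.replicate p a) := by
      have l1 : List.replicate p a ++ a :: s = a :: (List.replicate p a ++ s) := by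
        rw [show a :: s = [a] ++ s from rfl, ← List.append_assoc,
          ← List.replicate_succ', List.replicate_succ]
        simp
      rw [← l1, heq]
      simp
    intro x hx
    rcases List.mem_cons.1 hx with rfl | hx2
    · rfl
    · exact ih p hp (List.cons_injective heq2) x hx2

lemma US_all_neg (l : List ℤˣ) (h : ∀ x ∈ l, x = (-1 : ℤˣ)) : US l = -l.length := by
  induction l with
  | nil => simp
  | cons a l ih =>
    have ha := h a (by simp)
    have hrest := ih (fun x hx => h x (by simp [hx]))
    rw [US_cons, hrest, ha]
    simp only [Units.val_neg, Units.val_one, List.length_cons]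
    push_cast
    ring

lemma US_all_one (l : List ℤˣ) (h : ∀ x ∈ l, x = (1 : ℤˣ)) : US l = l.length := by
  induction l with
  | nil => simp
  | cons a l ih =>
    have ha := h a (by simp)
    have hrest := ih (fun x hx => h x (by simp [hx]))
    rw [US_cons, hrest, ha]
    simp only [Units.val_one, List.length_cons]
    push_cast
    ring

/-- number of leading `-1`s -/
def lc (l : List ℤˣ) : ℕ := (l.takeWhile (fun u => u = (-1 : ℤˣ))).length

@[simp] lemma lc_cons_neg (l : List ℤˣ) : lc ((-1 : ℤˣ) :: l) = lc l + 1 := by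
  simp [lc, List.takeWhile]

lemma lc_append (l l' : List ℤˣ) (h : ∃ x ∈ l, x ≠ (-1 : ℤˣ)) :
    lc (l ++ l') = lc l := by
  induction l with
  | nil => simp at h
  | cons a l ih =>
    by_cases ha : a = (-1 : ℤˣ)
    · subst ha
      obtain ⟨x, hx, hxne⟩ := h
      have hx2 : x ∈ l := by
        rcases List.mem_cons.1 hx with rfl | h2
        · exact absurd rfl hxne
        · exact h2
      have := ih ⟨x, hx2, hxne⟩
      simp only [List.cons_append, lc_cons_neg, this]
    · simp [lc, List.takeWhile, ha]

lemma chain'_const (k : ℕ) (a : ℤˣ × G) : List.Chain' (Rw A B) (List.replicate k a) := by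
  induction k with
  | zero => simp [List.Chain']
  | succ k ih =>
    simp only [List.Chain']
    rw [List.replicate_succ, List.isChain_cons]
    refine ⟨?_, ih⟩
    intro b hb
    cases k with
    | zero => simp at hb
    | succ k =>
      rw [List.replicate_succ] at hb
      simp only [List.head?_cons, Option.mem_def, Option.some.injEq] at hb
      subst hb
      exact fun _ => rfl

lemma sig_conj_of_not_mem (q : ℕ) (hq : 0 < q) (g : G) (hg : g ∉ A) :
    sig φ d (t ^ (q : ℤ) * of g * t ^ (-(q : ℤ))) ≠ [] := by
  classical
  set L : List (ℤˣ × G) :=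
    List.replicate (q-1) ((1:ℤˣ), (1:G)) ++
      ([((1:ℤˣ), g)] ++ List.replicate q ((-1:ℤˣ), (1:G))) with hL
  have hchain : L.Chain' (Rw A B) := by
    simp only [List.Chain']
    rw [hL, List.isChain_append]
    refine ⟨chain'_const _ _, ?_, ?_⟩
    · rw [List.isChain_append]
      refine ⟨List.isChain_singleton _, chain'_const _ _, ?_⟩
      intro x hx y hy
      simp only [List.getLast?_singleton, Option.mem_def, Option.some.injEq] at hx
      subst hx
      intro hmem
      exact absurd hmem (by simpa using hg)
    · intro x hx y hy
      have hx1 : x = ((1:ℤˣ), (1:G)) :=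
        List.eq_of_mem_replicate (List.mem_of_mem_getLast? hx)
      subst hx1
      simp only [List.cons_append, List.head?_cons, Option.mem_def, Option.some.injEq] at hy
      subst hy
      exact fun _ => rfl
  let w : ReducedWord G A B := ⟨1, L, hchain⟩
  have hprod : w.prod φ = t ^ (q:ℤ) * of g * t ^ (-(q:ℤ)) := by
    rw [wprod_eq_prod]
    show wprod φ 1 L = _
    unfold wprod
    rw [hL]
    simp only [List.map_append, List.prod_append, List.map_replicate, List.map_cons,
      List.map_nil, List.prod_cons, List.prod_nil, List.prod_replicate]
    have h1 : (t ^ ((1:ℤˣ):ℤ) * of (1:G) : HNNExtension G A B φ) = t := by simp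
    have h2 : (t ^ (((-1):ℤˣ):ℤ) * of (1:G) : HNNExtension G A B φ) = t⁻¹ := by
      simp
    rw [h1, h2, map_one, one_mul]
    have h3 : ((t : HNNExtension G A B φ)⁻¹) ^ q = t ^ (-(q:ℤ)) := by
      rw [inv_pow, ← zpow_natCast, ← zpow_neg]
    rw [h3, show ((1:ℤˣ):ℤ) = (1:ℤ) from rfl, zpow_one, mul_one]
    have h5 : (t:HNNExtension G A B φ) ^ (q-1) * (t * of g) = t ^ (q:ℤ) * of g := by
      rw [← mul_assoc, ← pow_succ, show q - 1 + 1 = q from by omega, zpow_natCast]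
    rw [← mul_assoc, h5]
  have hsig := sig_eq_of_reduced φ d w
  rw [hprod] at hsig
  rw [hsig]
  show (L.map Prod.fst) ≠ []
  rw [hL]
  simp

lemma sig_tpow_mul (x : HNNExtension G A B φ)
    (h : ¬ Cancels 1 ((equiv φ d) x)) (j : ℕ) :
    sig φ d (t ^ (j:ℤ) * x) = List.replicate j 1 ++ sig φ d x := by
  induction j with
  | zero => simp
  | succ j ih =>
    have hnc : ¬ Cancels 1 ((equiv φ d) (t ^ (j:ℤ) * x)) := by
      rcases Nat.eq_zero_or_pos j with rfl | hj
      · simpa using h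
      · intro hc
        have h2 := ((cancels_iff φ d 1 _).1 hc).2
        rw [ih] at h2
        rcases j with _ | j'
        · omega
        · simp [List.replicate_succ] at h2
    have hsplit : t ^ ((j+1:ℕ):ℤ) * x = t ^ ((1:ℤˣ):ℤ) * (t ^ (j:ℤ) * x) := by
      rw [← mul_assoc, ← zpow_add]
      have he : ((1:ℤˣ):ℤ) + (j:ℤ) = ((j+1:ℕ):ℤ) := by push_cast; ring
      rw [he]
    rw [hsplit, sig_t_mul_of_not_cancel φ d 1 _ hnc, ih, List.replicate_succ]
    simp

lemma sig_mul_tpow (x : HNNExtension G A B φ) (j : ℕ) :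
    sig φ d (x * t ^ (j:ℤ)) = sig φ d x ++ List.replicate j 1 ∨
      (sig φ d (x * t ^ (j:ℤ))).length + 2 ≤ (sig φ d x).length + j := by
  induction j with
  | zero => left; simp
  | succ j ih =>
    have hsplit : x * t ^ ((j+1:ℕ):ℤ) = (x * t ^ (j:ℤ)) * t ^ ((1:ℤˣ):ℤ) := by
      rw [mul_assoc, ← zpow_add]
      have he : (j:ℤ) + ((1:ℤˣ):ℤ) = ((j+1:ℕ):ℤ) := by push_cast; ring
      rw [he]
    rcases sig_mul_t φ d (x * t ^ (j:ℤ)) 1 with h1 | ⟨hne, h1⟩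
    · rcases ih with h2 | h2
      · left
        rw [hsplit, h1, h2, List.append_assoc, ← List.replicate_succ']
      · right
        rw [hsplit, h1]
        simp only [List.length_append, List.length_cons, List.length_nil]
        omega
    · right
      rw [hsplit, h1]
      have hlen : (sig φ d (x * t ^ (j:ℤ))).dropLast.length
          = (sig φ d (x * t ^ (j:ℤ))).length - 1 := by
        simp [List.length_dropLast]
      have hpos : 1 ≤ (sig φ d (x * t ^ (j:ℤ))).length := List.length_pos_iff.2 hne
      rcases ih with h2 | h2
      · have hLL : (sig φ d (x * t ^ (j:ℤ))).length = (sig φ d x).length + j := by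
          rw [h2]; simp
        rw [hlen]
        omega
      · rw [hlen]
        omega

lemma rot (hbase : ∀ (g : G) (p : ℕ), 0 < p →
      t ^ (p:ℤ) * (of g : HNNExtension G A B φ) * t ^ (-(p:ℤ)) = of g → g = 1) :
    ∀ κ : ℕ, ∀ x : HNNExtension G A B φ, ∀ p : ℕ, 0 < p →
      sigmaH φ x = 1 → x ≠ 1 →
      (∀ y, (sig φ d x).length ≤ (sig φ d (y * x * y⁻¹)).length) →
      lc (sig φ d x) = κ →
      t ^ (p:ℤ) * x = x * t ^ (p:ℤ) → False := by
  intro κ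
  induction κ using Nat.strong_induction_on with
  | _ κ IH =>
  intro x p hp hσ hx1 hmin hκ hcomm
  have hUS : US (sig φ d x) = 0 := by
    have h0 : ofAdd (US (sig φ d x)) = ofAdd 0 := by
      rw [← sigmaH_eq_sig φ d x, hσ]; rfl
    exact ofAdd.injective h0
  by_cases hC : Cancels 1 ((equiv φ d) x)
  · -- rotation case
    obtain ⟨hhead, hh2⟩ := (cancels_iff φ d 1 x).1 hC
    obtain ⟨s', hs'⟩ : ∃ s', sig φ d x = (-1:ℤˣ) :: s' := by
      cases hsx : sig φ d x with
      | nil => rw [hsx] at hh2; simp at hh2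
      | cons a l =>
        rw [hsx] at hh2
        simp only [List.head?_cons, Option.some.injEq] at hh2
        exact ⟨l, by rw [hh2]⟩
    set z := t * x * t⁻¹ with hz
    have hsig_tx : sig φ d (t * x) = s' := by
      have h := sig_t_mul_cancel φ d 1 x hC
      rw [hs'] at h
      simpa using h
    have hzform : z = (t * x) * t ^ (((-1):ℤˣ):ℤ) := by
      rw [hz]
      norm_num
    rcases sig_mul_t φ d (t * x) (-1) with h1 | ⟨hne, h1⟩
    · -- no pinch on the right: sig z = s' ++ [-1]
      rw [hsig_tx] at h1
      have hsigz : sig φ d z = s' ++ [-1] := by rw [hzform]; exact h1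
      have hUSs' : US s' = 1 := by
        rw [hs'] at hUS
        simp at hUS
        omega
      have hex : ∃ a ∈ s', a ≠ (-1:ℤˣ) := by
        by_contra hcon
        push_neg at hcon
        have := US_all_neg _ hcon
        rw [hUSs'] at this
        omega
      have hlcz : lc (sig φ d z) = lc s' := by
        rw [hsigz]
        exact lc_append _ _ hex
      have hlcs : lc (sig φ d x) = lc s' + 1 := by rw [hs', lc_cons_neg]
      have hz1 : z ≠ 1 := by
        intro hh
        apply hx1
        have := congrArg (fun w => t⁻¹ * w * t) hh
        simpa [hz, mul_assoc] using this
      have hzσ : sigmaH φ z = 1 := by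
        rw [hz]
        simp [map_mul, hσ]
      have hlenz : (sig φ d z).length = (sig φ d x).length := by
        rw [hsigz, hs']
        simp
      have hzmin : ∀ y, (sig φ d z).length ≤ (sig φ d (y * z * y⁻¹)).length := by
        intro y
        rw [hlenz]
        have h2 := hmin (y * t)
        have h3 : (y * t) * x * (y * t)⁻¹ = y * z * y⁻¹ := by
          rw [hz, mul_inv_rev]
          group
        rwa [h3] at h2
      have hzcomm : t ^ (p:ℤ) * z = z * t ^ (p:ℤ) := by
        have c1 : Commute (t ^ (p:ℤ)) x := hcomm
        have c2 : Commute (t ^ (p:ℤ)) (t : HNNExtension G A B φ) :=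
          (Commute.refl t).zpow_left (p:ℤ)
        rw [hz]
        exact ((c2.mul_right c1).mul_right c2.inv_right).eq
      exact IH (lc s') (by omega) z p hp hzσ hz1 hzmin hlcz hzcomm
    · -- pinch on the right: length drops by 2, contradicting minimality
      rw [hsig_tx] at hne h1
      have hsigz : sig φ d z = s'.dropLast := by rw [hzform]; exact h1
      have h2 := hmin t
      rw [show t * x * t⁻¹ = z from rfl, hsigz, hs'] at h2
      have h3 : s'.dropLast.length = s'.length - 1 := by simp
      have h4 : 1 ≤ s'.length := List.length_pos_iff.2 hne
      simp only [List.length_cons] at h2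
      omega
  · -- main case
    have hA := sig_tpow_mul φ d x hC p
    rcases sig_mul_tpow φ d x p with hB | hB
    · rw [← hcomm, hA] at hB
      have hall := all_eq_of_replicate_comm 1 (sig φ d x) p hp hB
      have hlen0 : (sig φ d x).length = 0 := by
        have hUS2 := US_all_one _ hall
        rw [hUS] at hUS2
        omega
      have hnil : sig φ d x = [] := List.length_eq_zero_iff.1 hlen0
      obtain ⟨g, rfl⟩ := exists_of_sig_nil φ d x hnil
      have hgg : t ^ (p:ℤ) * (of g : HNNExtension G A B φ) * t ^ (-(p:ℤ)) = of g := by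
        rw [zpow_neg, hcomm, mul_inv_cancel_right]
      exact hx1 (by rw [hbase g p hp hgg, map_one])
    · rw [← hcomm, hA] at hB
      simp only [List.length_append, List.length_replicate] at hB
      omega

include d in
theorem nocomm (hbase : ∀ (g : G) (p : ℕ), 0 < p →
      t ^ (p:ℤ) * (of g : HNNExtension G A B φ) * t ^ (-(p:ℤ)) = of g → g = 1)
    (x : HNNExtension G A B φ) (hσ : sigmaH φ x = 1) (hx1 : x ≠ 1) :
    ∃ y : HNNExtension G A B φ, ∀ k : ℤ,
      t ^ k * (y * x * y⁻¹) = (y * x * y⁻¹) * t ^ k → k = 0 := by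
  classical
  have hSne : {L : ℕ | ∃ y : HNNExtension G A B φ,
      (sig φ d (y * x * y⁻¹)).length = L}.Nonempty := ⟨_, 1, rfl⟩
  obtain ⟨y₀, hy₀⟩ := Nat.sInf_mem hSne
  refine ⟨y₀, ?_⟩
  set x' := y₀ * x * y₀⁻¹ with hx'
  have hmin : ∀ y, (sig φ d x').length ≤ (sig φ d (y * x' * y⁻¹)).length := by
    intro y
    rw [hy₀]
    have hmem : (sig φ d (y * x' * y⁻¹)).length ∈
        {L : ℕ | ∃ y : HNNExtension G A B φ, (sig φ d (y * x * y⁻¹)).length = L} := by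
      refine ⟨y * y₀, ?_⟩
      rw [hx', mul_inv_rev]
      group
    exact Nat.sInf_le hmem
  have hσ' : sigmaH φ x' = 1 := by
    rw [hx']
    simp [map_mul, hσ]
  have hne' : x' ≠ 1 := by
    intro hh
    apply hx1
    have := congrArg (fun w => y₀⁻¹ * w * y₀) hh
    simpa [hx', mul_assoc] using this
  intro k hk
  by_contra hk0
  rcases lt_or_gt_of_ne hk0 with hneg | hpos
  · have hcomm2 : t ^ (-k) * x' = x' * t ^ (-k) := by
      have c : Commute (t ^ k) x' := hk
      have c2 : Commute (t ^ (-k)) x' := by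
        rw [zpow_neg]
        exact c.inv_left
      exact c2.eq
    have hcast : ((((-k).toNat) : ℕ) : ℤ) = -k := Int.toNat_of_nonneg (by omega)
    refine rot φ d hbase (lc (sig φ d x')) x' (-k).toNat (by omega) hσ' hne' hmin rfl ?_
    rw [hcast]
    exact hcomm2
  · have hcast : (((k.toNat) : ℕ) : ℤ) = k := Int.toNat_of_nonneg (by omega)
    refine rot φ d hbase (lc (sig φ d x')) x' k.toNat (by omega) hσ' hne' hmin rfl ?_
    rw [hcast]
    exact hk

end Generic
section Specific

def gen (k : ℤ) : Multiplicative ℤ := Multiplicative.ofAdd k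

lemma gen_injective : Function.Injective gen := fun a b h => by simpa [gen] using h

@[simp] lemma gen_zpow (k j : ℤ) : gen k ^ j = gen (k * j) := by
  have h : k * j = j • k := by simp [smul_eq_mul]; ring
  rw [gen, gen, h, ofAdd_zsmul]

@[simp] lemma gen_one : gen 0 = 1 := rfl

def Agp (n : ℤ) : Subgroup (Multiplicative ℤ) := Subgroup.zpowers (gen n)

lemma mem_Agp_iff {n r : ℤ} : gen r ∈ Agp n ↔ n ∣ r := by
  rw [Agp, Subgroup.mem_zpowers_iff]
  constructor
  · rintro ⟨k, hk⟩
    rw [gen_zpow] at hk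
    exact ⟨k, (gen_injective hk).symm⟩
  · rintro ⟨k, rfl⟩
    exact ⟨k, by rw [gen_zpow]⟩

def toA (n : ℤ) : Multiplicative ℤ →* Agp n :=
  ((zpowersHom (Multiplicative ℤ)) (gen n)).codRestrict (Agp n)
    (fun x => ⟨Multiplicative.toAdd x, rfl⟩)

lemma toA_apply (n k : ℤ) : (toA n (gen k) : Multiplicative ℤ) = gen (n * k) := by
  show gen n ^ (Multiplicative.toAdd (gen k)) = gen (n * k)
  rw [show Multiplicative.toAdd (gen k) = k from rfl, gen_zpow]

lemma toA_bijective {n : ℤ} (hn : n ≠ 0) : Function.Bijective (toA n) := by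
  constructor
  · intro x y hxy
    have h1 : (toA n x : Multiplicative ℤ) = toA n y := congrArg _ hxy
    have h2 : gen (n * Multiplicative.toAdd x) = gen (n * Multiplicative.toAdd y) := by
      have hx := toA_apply n (Multiplicative.toAdd x)
      have hy := toA_apply n (Multiplicative.toAdd y)
      rw [show gen (Multiplicative.toAdd x) = x from rfl] at hx
      rw [show gen (Multiplicative.toAdd y) = y from rfl] at hy
      rw [← hx, ← hy]
      exact h1
    have h3 := gen_injective h2
    have h4 : Multiplicative.toAdd x = Multiplicative.toAdd y :=
      mul_left_cancel₀ hn h3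
    exact Multiplicative.toAdd.injective h4
  · rintro ⟨y, hy⟩
    rw [Agp, Subgroup.mem_zpowers_iff] at hy
    obtain ⟨k, hk⟩ := hy
    refine ⟨Multiplicative.ofAdd k, Subtype.ext ?_⟩
    show gen n ^ (Multiplicative.toAdd (Multiplicative.ofAdd k)) = y
    simpa using hk

noncomputable def eqvA {n : ℤ} (hn : n ≠ 0) : Multiplicative ℤ ≃* Agp n :=
  MulEquiv.ofBijective (toA n) (toA_bijective hn)

noncomputable def bsphi {n m : ℤ} (hn : n ≠ 0) (hm : m ≠ 0) : Agp n ≃* Agp m :=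
  (eqvA hn).symm.trans (eqvA hm)

lemma mem_Agp_mul (n k : ℤ) : gen (n * k) ∈ Agp n := mem_Agp_iff.2 ⟨k, rfl⟩

lemma bsphi_apply {n m : ℤ} (hn : n ≠ 0) (hm : m ≠ 0) (k : ℤ) :
    bsphi hn hm ⟨gen (n * k), mem_Agp_mul n k⟩ = ⟨gen (m * k), mem_Agp_mul m k⟩ := by
  have h1 : eqvA hn (gen k) = ⟨gen (n * k), mem_Agp_mul n k⟩ :=
    Subtype.ext (toA_apply n k)
  rw [bsphi, MulEquiv.trans_apply, ← h1, MulEquiv.symm_apply_apply]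
  exact Subtype.ext (toA_apply m k)

variable {n m : ℤ} (hn : n ≠ 0) (hm : m ≠ 0)

lemma bs_pinch (k : ℤ) :
    t * (of (gen (n * k)) : HNNExtension (Multiplicative ℤ) (Agp n) (Agp m) (bsphi hn hm)) * t⁻¹
      = of (gen (m * k)) := by
  have h := equiv_eq_conj (φ := bsphi hn hm) ⟨gen (n * k), mem_Agp_mul n k⟩
  rw [bsphi_apply hn hm k] at h
  exact h.symm

lemma Tp : ∀ p : ℕ, ∀ r s : ℤ,
    t ^ (p:ℤ) * (of (gen r) : HNNExtension (Multiplicative ℤ) (Agp n) (Agp m) (bsphi hn hm))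
        * t ^ (-(p:ℤ)) = of (gen s) →
      m ^ p * r = n ^ p * s := by
  intro p
  induction p with
  | zero =>
    intro r s heq
    simp only [Nat.cast_zero, zpow_zero, one_mul, neg_zero, mul_one] at heq
    have := HNNExtension.of_injective (bsphi hn hm) heq
    have := gen_injective this
    simpa using this
  | succ p ih =>
    intro r s heq
    by_cases hd : n ∣ r
    · obtain ⟨k, rfl⟩ := hd
      have hsplit : t ^ ((p+1:ℕ):ℤ) *
          (of (gen (n * k)) : HNNExtension (Multiplicative ℤ) (Agp n) (Agp m) (bsphi hn hm))
            * t ^ (-((p+1:ℕ):ℤ))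
          = t ^ (p:ℤ) * (t * of (gen (n * k)) * t⁻¹) * t ^ (-(p:ℤ)) := by
        push_cast
        group
      rw [hsplit, bs_pinch hn hm k] at heq
      have h2 := ih (m * k) s heq
      have hgoal : m ^ (p+1) * (n * k) = n ^ (p+1) * s := by
        have : n * (m ^ p * (m * k)) = n * (n ^ p * s) := by rw [h2]
        calc m ^ (p+1) * (n * k) = n * (m ^ p * (m * k)) := by ring
          _ = n * (n ^ p * s) := this
          _ = n ^ (p+1) * s := by ring
      simpa using hgoal
    · exfalso
      obtain ⟨d⟩ := TransversalPair.nonempty (Multiplicative ℤ) (Agp n) (Agp m)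
      have hnr : gen r ∉ Agp n := fun hmem => hd (mem_Agp_iff.1 hmem)
      have hne := sig_conj_of_not_mem (bsphi hn hm) d (p+1) (by omega) (gen r) hnr
      apply hne
      have hcast : (((p+1:ℕ)):ℤ) = ((p:ℤ)+1) := by push_cast; ring
      rw [show ((p+1:ℕ):ℤ) = (((p+1:ℕ)):ℤ) from rfl] at heq
      rw [heq, sig_of']

lemma hbase_spec (habs : |n| ≠ |m|) :
    ∀ g : Multiplicative ℤ, ∀ p : ℕ, 0 < p →
      t ^ (p:ℤ) * (of g : HNNExtension (Multiplicative ℤ) (Agp n) (Agp m) (bsphi hn hm))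
        * t ^ (-(p:ℤ)) = of g → g = 1 := by
  intro g p hp heq
  have hg : g = gen (Multiplicative.toAdd g) := rfl
  have h2 := Tp hn hm p (Multiplicative.toAdd g) (Multiplicative.toAdd g) (by rw [← hg]; exact heq)
  by_contra hne
  have ha : Multiplicative.toAdd g ≠ 0 := by
    intro h0
    apply hne
    rw [hg, h0, gen_one]
  have hpow : m ^ p = n ^ p := mul_right_cancel₀ ha h2
  have habs2 : |m| ^ p = |n| ^ p := by rw [← abs_pow, ← abs_pow, hpow]
  rcases lt_trichotomy |m| |n| with h | h | h
  · have := pow_lt_pow_left₀ h (abs_nonneg m) (by omega : p ≠ 0)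
    omega
  · exact habs h.symm
  · have := pow_lt_pow_left₀ h (abs_nonneg n) (by omega : p ≠ 0)
    omega

end Specific

section BSSide

variable (n m : ℤ)

lemma bs_relation : BS.a n m * (BS.b n m) ^ n * (BS.a n m)⁻¹ * ((BS.b n m) ^ m)⁻¹ = 1 := by
  have hmem : (FreeGroup.of true * FreeGroup.of false ^ n * (FreeGroup.of true)⁻¹ *
      (FreeGroup.of false ^ m)⁻¹) ∈ Subgroup.normalClosure (BSRels n m) :=
    Subgroup.subset_normalClosure rfl
  have h1 : PresentedGroup.mk (BSRels n m) (FreeGroup.of true * FreeGroup.of false ^ n *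
      (FreeGroup.of true)⁻¹ * (FreeGroup.of false ^ m)⁻¹) = 1 :=
    (QuotientGroup.eq_one_iff _).2 hmem
  rw [map_mul, map_mul, map_mul, map_inv, map_inv, map_zpow, map_zpow] at h1
  exact h1

lemma bs_rel' : BS.a n m * (BS.b n m) ^ n * (BS.a n m)⁻¹ = (BS.b n m) ^ m :=
  mul_inv_eq_one.1 (bs_relation n m)

lemma bs_conj_zpow (k : ℤ) :
    BS.a n m * (BS.b n m) ^ (n * k) * (BS.a n m)⁻¹ = (BS.b n m) ^ (m * k) := by
  have h1 : (MulAut.conj (BS.a n m)) ((BS.b n m) ^ (n * k))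
      = ((MulAut.conj (BS.a n m)) ((BS.b n m) ^ n)) ^ k := by
    rw [← map_zpow, ← zpow_mul]
  have h2 : (MulAut.conj (BS.a n m)) ((BS.b n m) ^ n) = (BS.b n m) ^ m := by
    rw [MulAut.conj_apply]
    exact bs_rel' n m
  have h3 : (MulAut.conj (BS.a n m)) ((BS.b n m) ^ (n * k)) = (BS.b n m) ^ (m * k) := by
    rw [h1, h2, ← zpow_mul]
  rw [MulAut.conj_apply] at h3
  exact h3

variable {n m} (hn : n ≠ 0) (hm : m ≠ 0)

noncomputable def PhiBS : BS n m →* HNNExtension (Multiplicative ℤ) (Agp n) (Agp m) (bsphi hn hm) :=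
  PresentedGroup.toGroup (f := fun x : Bool =>
      match x with
      | true => (t : HNNExtension (Multiplicative ℤ) (Agp n) (Agp m) (bsphi hn hm))
      | false => of (gen 1)) (by
    intro r hr
    rw [show r = FreeGroup.of true * FreeGroup.of false ^ n * (FreeGroup.of true)⁻¹ *
      (FreeGroup.of false ^ m)⁻¹ from hr]
    rw [map_mul, map_mul, map_mul, map_inv, map_inv, map_zpow, map_zpow,
      FreeGroup.lift_apply_of, FreeGroup.lift_apply_of]
    show (t * (of (gen 1)) ^ n * t⁻¹ * (((of (gen 1)) ^ m)⁻¹ :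
      HNNExtension (Multiplicative ℤ) (Agp n) (Agp m) (bsphi hn hm))) = 1
    have h1 : (of (gen 1) : HNNExtension (Multiplicative ℤ) (Agp n) (Agp m) (bsphi hn hm)) ^ n
        = of (gen n) := by
      rw [← map_zpow, gen_zpow, one_mul]
    have h2 : (of (gen 1) : HNNExtension (Multiplicative ℤ) (Agp n) (Agp m) (bsphi hn hm)) ^ m
        = of (gen m) := by
      rw [← map_zpow, gen_zpow, one_mul]
    rw [h1, h2]
    have h3 := bs_pinch hn hm 1
    rw [mul_one] at h3
    rw [h3]
    simp)

@[simp] lemma PhiBS_a : PhiBS hn hm (BS.a n m) = t := by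
  show PhiBS hn hm (PresentedGroup.of true) = t
  rw [PhiBS, PresentedGroup.toGroup.of]

@[simp] lemma PhiBS_b : PhiBS hn hm (BS.b n m) = of (gen 1) := by
  show PhiBS hn hm (PresentedGroup.of false) = of (gen 1)
  rw [PhiBS, PresentedGroup.toGroup.of]

noncomputable def PsiBS : HNNExtension (Multiplicative ℤ) (Agp n) (Agp m) (bsphi hn hm) →* BS n m :=
  HNNExtension.lift ((zpowersHom (BS n m)) (BS.b n m)) (BS.a n m) (by
    rintro ⟨av, hav⟩
    obtain ⟨k, hk⟩ := Subgroup.mem_zpowers_iff.1 hav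
    rw [gen_zpow] at hk
    have ha : (⟨av, hav⟩ : Agp n) = ⟨gen (n * k), mem_Agp_mul n k⟩ := Subtype.ext hk.symm
    rw [ha, bsphi_apply hn hm k]
    show BS.a n m * (BS.b n m) ^ (Multiplicative.toAdd (gen (n * k)))
      = (BS.b n m) ^ (Multiplicative.toAdd (gen (m * k))) * BS.a n m
    rw [show Multiplicative.toAdd (gen (n * k)) = n * k from rfl,
      show Multiplicative.toAdd (gen (m * k)) = m * k from rfl]
    rw [← bs_conj_zpow n m k]
    group)

@[simp] lemma PsiBS_t : PsiBS hn hm t = BS.a n m := by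
  rw [PsiBS, lift_t]

@[simp] lemma PsiBS_of (g : Multiplicative ℤ) :
    PsiBS hn hm (of g) = (BS.b n m) ^ (Multiplicative.toAdd g) := by
  rw [PsiBS, lift_of]
  rfl

lemma PsiPhi (g : BS n m) : PsiBS hn hm (PhiBS hn hm g) = g := by
  have hcomp : (PsiBS hn hm).comp (PhiBS hn hm) = MonoidHom.id (BS n m) := by
    apply PresentedGroup.ext
    intro x
    cases x
    · show PsiBS hn hm (PhiBS hn hm (BS.b n m)) = BS.b n m
      rw [PhiBS_b, PsiBS_of]
      show (BS.b n m) ^ (1:ℤ) = BS.b n m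
      simp
    · show PsiBS hn hm (PhiBS hn hm (BS.a n m)) = BS.a n m
      rw [PhiBS_a, PsiBS_t]
  exact DFunLike.congr_fun hcomp g

lemma PhiPsi (x : HNNExtension (Multiplicative ℤ) (Agp n) (Agp m) (bsphi hn hm)) :
    PhiBS hn hm (PsiBS hn hm x) = x := by
  have hcomp : (PhiBS hn hm).comp (PsiBS hn hm) = MonoidHom.id _ := by
    apply hom_ext
    · refine MonoidHom.ext fun g => ?_
      show PhiBS hn hm (PsiBS hn hm (of g)) = of g
      rw [PsiBS_of]
      rw [map_zpow, PhiBS_b, ← map_zpow, gen_zpow, one_mul]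
      rfl
    · show PhiBS hn hm (PsiBS hn hm t) = t
      rw [PsiBS_t, PhiBS_a]
  exact DFunLike.congr_fun hcomp x

lemma PhiBS_injective : Function.Injective (PhiBS hn hm) :=
  Function.LeftInverse.injective (PsiPhi hn hm)

noncomputable def sigmaBS : BS n m →* Multiplicative ℤ :=
  PresentedGroup.toGroup (f := fun x : Bool =>
      match x with
      | true => Multiplicative.ofAdd (1:ℤ)
      | false => 1) (by
    intro r hr
    rw [show r = FreeGroup.of true * FreeGroup.of false ^ n * (FreeGroup.of true)⁻¹ *
      (FreeGroup.of false ^ m)⁻¹ from hr]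
    rw [map_mul, map_mul, map_mul, map_inv, map_inv, map_zpow, map_zpow,
      FreeGroup.lift_apply_of, FreeGroup.lift_apply_of]
    show Multiplicative.ofAdd (1:ℤ) * (1:Multiplicative ℤ) ^ n * (Multiplicative.ofAdd (1:ℤ))⁻¹ *
      (((1:Multiplicative ℤ)) ^ m)⁻¹ = 1
    simp)

@[simp] lemma sigmaBS_a : sigmaBS (n := n) (m := m) (BS.a n m) = Multiplicative.ofAdd (1:ℤ) := by
  show sigmaBS (PresentedGroup.of true) = _
  rw [sigmaBS, PresentedGroup.toGroup.of]

@[simp] lemma sigmaBS_b : sigmaBS (n := n) (m := m) (BS.b n m) = 1 := by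
  show sigmaBS (PresentedGroup.of false) = _
  rw [sigmaBS, PresentedGroup.toGroup.of]

lemma sigma_compat (g : BS n m) :
    sigmaH (bsphi hn hm) (PhiBS hn hm g) = sigmaBS g := by
  have hcomp : (sigmaH (bsphi hn hm)).comp (PhiBS hn hm) = sigmaBS (n := n) (m := m) := by
    apply PresentedGroup.ext
    intro x
    cases x
    · show sigmaH (bsphi hn hm) (PhiBS hn hm (BS.b n m)) = sigmaBS (BS.b n m)
      rw [PhiBS_b, sigmaH_of, sigmaBS_b]
    · show sigmaH (bsphi hn hm) (PhiBS hn hm (BS.a n m)) = sigmaBS (BS.a n m)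
      rw [PhiBS_a, sigmaH_t, sigmaBS_a]
  exact DFunLike.congr_fun hcomp g

end BSSide

section Rho

noncomputable def trQ : Multiplicative ℚ →* Equiv.Perm ℚ where
  toFun := fun v => Equiv.addLeft (Multiplicative.toAdd v)
  map_one' := by ext q; simp
  map_mul' := by
    intro v w
    ext q
    simp [Equiv.Perm.mul_apply, add_assoc]

lemma addLeft_zpow (j : ℤ) : (Equiv.addLeft (1:ℚ)) ^ j = Equiv.addLeft (j:ℚ) := by
  have h0 : Equiv.addLeft (1:ℚ) = trQ (Multiplicative.ofAdd (1:ℚ)) := rfl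
  have h1 : (Multiplicative.ofAdd (1:ℚ)) ^ j = Multiplicative.ofAdd ((j:ℚ)) := by
    rw [← ofAdd_zsmul]
    congr 1
    simp
  rw [h0, ← map_zpow, h1]
  rfl

variable {n m : ℤ} (hn : n ≠ 0) (hm : m ≠ 0)

noncomputable def muu : ℚˣ :=
  Units.mk0 ((m:ℚ)/(n:ℚ))
    (div_ne_zero (by exact_mod_cast hm) (by exact_mod_cast hn))

@[simp] lemma muu_val : ((muu hn hm : ℚˣ) : ℚ) = (m:ℚ)/(n:ℚ) := rfl

noncomputable def rho : BS n m →* Equiv.Perm ℚ :=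
  PresentedGroup.toGroup (f := fun x : Bool =>
    match x with
    | true => MulAction.toPermHom ℚˣ ℚ (muu hn hm)
    | false => Equiv.addLeft (1:ℚ)) (by
    intro r hr
    rw [show r = FreeGroup.of true * FreeGroup.of false ^ n * (FreeGroup.of true)⁻¹ *
      (FreeGroup.of false ^ m)⁻¹ from hr]
    rw [map_mul, map_mul, map_mul, map_inv, map_inv, map_zpow, map_zpow,
      FreeGroup.lift_apply_of, FreeGroup.lift_apply_of]
    show MulAction.toPermHom ℚˣ ℚ (muu hn hm) * (Equiv.addLeft (1:ℚ)) ^ n *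
      (MulAction.toPermHom ℚˣ ℚ (muu hn hm))⁻¹ * ((Equiv.addLeft (1:ℚ)) ^ m)⁻¹ = 1
    rw [addLeft_zpow, addLeft_zpow, ← map_inv]
    ext q
    simp only [Equiv.Perm.mul_apply, Equiv.Perm.one_apply, Equiv.Perm.inv_def,
      Equiv.addLeft_symm, MulAction.toPermHom_apply, Equiv.coe_addLeft]
    show ((muu hn hm : ℚˣ) : ℚ) * ((n:ℚ) + (((muu hn hm)⁻¹ : ℚˣ) : ℚ) * (-(m:ℚ) + q)) = q
    rw [muu_val]
    rw [show (((muu hn hm)⁻¹ : ℚˣ) : ℚ) = ((m:ℚ)/(n:ℚ))⁻¹ from rfl]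
    have hn' : (n:ℚ) ≠ 0 := by exact_mod_cast hn
    have hm' : (m:ℚ) ≠ 0 := by exact_mod_cast hm
    field_simp
    ring)

@[simp] lemma rho_a : rho hn hm (BS.a n m) = MulAction.toPermHom ℚˣ ℚ (muu hn hm) := by
  show rho hn hm (PresentedGroup.of true) = _
  rw [rho, PresentedGroup.toGroup.of]

@[simp] lemma rho_b : rho hn hm (BS.b n m) = Equiv.addLeft (1:ℚ) := by
  show rho hn hm (PresentedGroup.of false) = _
  rw [rho, PresentedGroup.toGroup.of]

lemma rho_affine (g : BS n m) (q : ℚ) :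
    rho hn hm g q = ((m:ℚ)/(n:ℚ)) ^ (Multiplicative.toAdd (sigmaBS g)) * q + rho hn hm g 0 := by
  have hμ : ((m:ℚ)/(n:ℚ)) ≠ 0 := by
    have hn' : (n:ℚ) ≠ 0 := by exact_mod_cast hn
    have hm' : (m:ℚ) ≠ 0 := by exact_mod_cast hm
    exact div_ne_zero hm' hn'
  let S : Subgroup (BS n m) := {
    carrier := {g | ∀ q : ℚ, rho hn hm g q
      = ((m:ℚ)/(n:ℚ)) ^ (Multiplicative.toAdd (sigmaBS g)) * q + rho hn hm g 0}
    one_mem' := by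
      intro q
      simp
    mul_mem' := by
      intro a b ha hb
      intro q
      have h1 : rho hn hm (a * b) q = rho hn hm a (rho hn hm b q) := by
        rw [map_mul]; rfl
      have h0 : rho hn hm (a * b) 0 = rho hn hm a (rho hn hm b 0) := by
        rw [map_mul]; rfl
      have hσ : Multiplicative.toAdd (sigmaBS (a * b))
          = Multiplicative.toAdd (sigmaBS a) + Multiplicative.toAdd (sigmaBS b) := by
        rw [map_mul]; rfl
      rw [h1, h0, ha (rho hn hm b q), hb q, ha (rho hn hm b 0), hb 0, hσ, zpow_add₀ hμ]
      ring
    inv_mem' := by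
      intro a ha q
      have hu : ((m:ℚ)/(n:ℚ)) ^ (Multiplicative.toAdd (sigmaBS a)) ≠ 0 := zpow_ne_zero _ hμ
      have h1 : rho hn hm a (rho hn hm a⁻¹ q) = q := by
        rw [map_inv]
        exact (rho hn hm a).apply_symm_apply q
      have h0 : rho hn hm a (rho hn hm a⁻¹ 0) = 0 := by
        rw [map_inv]
        exact (rho hn hm a).apply_symm_apply 0
      have h2 := ha (rho hn hm a⁻¹ q)
      have h3 := ha (rho hn hm a⁻¹ 0)
      rw [h1] at h2
      rw [h0] at h3
      have hσ : Multiplicative.toAdd (sigmaBS a⁻¹) = -Multiplicative.toAdd (sigmaBS a) := by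
        rw [map_inv]; rfl
      rw [hσ, zpow_neg]
      apply mul_left_cancel₀ hu
      rw [mul_add, ← mul_assoc, mul_inv_cancel₀ hu, one_mul]
      linarith [h2, h3]
  }
  have hgen : ∀ x : Bool, PresentedGroup.of x ∈ S := by
    intro x
    cases x
    · -- false : b
      intro q
      show rho hn hm (BS.b n m) q = ((m:ℚ)/(n:ℚ)) ^ (Multiplicative.toAdd (sigmaBS (BS.b n m)))
        * q + rho hn hm (BS.b n m) 0
      rw [rho_b, sigmaBS_b]
      simp [Equiv.coe_addLeft]
      ring
    · intro q
      show rho hn hm (BS.a n m) q = ((m:ℚ)/(n:ℚ)) ^ (Multiplicative.toAdd (sigmaBS (BS.a n m)))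
        * q + rho hn hm (BS.a n m) 0
      rw [rho_a]
      simp only [MulAction.toPermHom_apply, sigmaBS_a]
      show (muu hn hm : ℚˣ) • q = ((m:ℚ)/(n:ℚ)) ^ ((1:ℤ)) * q + (muu hn hm : ℚˣ) • (0:ℚ)
      rw [Units.smul_def, Units.smul_def, muu_val]
      simp
  exact PresentedGroup.generated_by (BSRels n m) S hgen g q

lemma abs_zpow' (x : ℚ) (j : ℤ) : |x ^ j| = |x| ^ j := by
  rcases le_or_gt 0 j with hj | hj
  · lift j to ℕ using hj
    rw [zpow_natCast, zpow_natCast, abs_pow]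
  · obtain ⟨k, hk⟩ : ∃ k : ℕ, -j = (k:ℤ) := ⟨(-j).toNat, by omega⟩
    have hj2 : j = -(k:ℤ) := by omega
    rw [hj2, zpow_neg, zpow_neg, abs_inv, zpow_natCast, zpow_natCast, abs_pow]

include hn hm in
lemma mu_zpow_ne_one (habs : |n| ≠ |m|) (j : ℤ) (hj : j ≠ 0) :
    ((m:ℚ)/(n:ℚ)) ^ j ≠ 1 := by
  intro hone
  have hn' : (n:ℚ) ≠ 0 := by exact_mod_cast hn
  have hm' : (m:ℚ) ≠ 0 := by exact_mod_cast hm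
  have hμ : ((m:ℚ)/(n:ℚ)) ≠ 0 := div_ne_zero hm' hn'
  have habs1 : |(m:ℚ)/(n:ℚ)| ^ j = 1 := by
    rw [← abs_zpow', hone, abs_one]
  have habspos : 0 < |(m:ℚ)/(n:ℚ)| := abs_pos.2 hμ
  have habsne : |(m:ℚ)/(n:ℚ)| ≠ 1 := by
    rw [abs_div]
    intro h1
    rw [div_eq_one_iff_eq (by positivity)] at h1
    apply habs
    have : |(n:ℚ)| = ((|n| : ℤ) : ℚ) := by push_cast; rfl
    have h2 : |(m:ℚ)| = ((|m| : ℤ) : ℚ) := by push_cast; rfl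
    rw [h2, this] at h1
    exact_mod_cast (h1.symm)
  have := zpow_right_injective₀ habspos habsne (a := |(m:ℚ)/(n:ℚ)|)
  have h4 : |(m:ℚ)/(n:ℚ)| ^ j = |(m:ℚ)/(n:ℚ)| ^ (0:ℤ) := by
    rw [habs1, zpow_zero]
  exact hj (this h4)

end Rho

end BSICC

/-- For `|n|,|m| ≥ 2` and `|n| ≠ |m|`, the group `BS(n,m)` is ICC: every non-identity
element has an infinite conjugacy class. -/
theorem bs_icc (n m : ℤ) (hn : 2 ≤ |n|) (hm : 2 ≤ |m|) (hnm : |n| ≠ |m|) :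
    ∀ g : BS n m, g ≠ 1 → (Set.range fun h : BS n m => h * g * h⁻¹).Infinite := by
  intro g hg
  classical
  have hn0 : n ≠ 0 := by intro h; rw [h] at hn; simp at hn
  have hm0 : m ≠ 0 := by intro h; rw [h] at hm; simp at hm
  have hμ0 : ((m:ℚ)/(n:ℚ)) ≠ 0 :=
    div_ne_zero (by exact_mod_cast hm0) (by exact_mod_cast hn0)
  by_cases hs : Multiplicative.toAdd (BSICC.sigmaBS (n := n) (m := m) g) = 0
  · by_cases hv : BSICC.rho hn0 hm0 g 0 = 0
    · -- hard case: g in the kernel of the affine rep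
      set x := BSICC.PhiBS hn0 hm0 g with hx
      have hσx : BSICC.sigmaH (BSICC.bsphi hn0 hm0) x = 1 := by
        rw [hx, BSICC.sigma_compat]
        have : BSICC.sigmaBS (n := n) (m := m) g
            = Multiplicative.ofAdd (Multiplicative.toAdd (BSICC.sigmaBS (n := n) (m := m) g)) :=
          rfl
        rw [this, hs]
        rfl
      have hx1 : x ≠ 1 := by
        intro hh
        exact hg (BSICC.PhiBS_injective hn0 hm0 (by rw [map_one]; exact hh))
      obtain ⟨d⟩ := HNNExtension.NormalWord.TransversalPair.nonempty
        (Multiplicative ℤ) (BSICC.Agp n) (BSICC.Agp m)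
      obtain ⟨y, hy⟩ := BSICC.nocomm (BSICC.bsphi hn0 hm0) d
        (BSICC.hbase_spec hn0 hm0 hnm) x hσx hx1
      set F : ℤ → BS n m := fun k =>
        (BSICC.PsiBS hn0 hm0 (y⁻¹ * HNNExtension.t^k * y)) * g * (BSICC.PsiBS hn0 hm0 (y⁻¹ * HNNExtension.t^k * y))⁻¹
        with hF
      apply Set.infinite_of_injective_forall_mem (f := F)
      · intro k k' hkk
        have hconj : ∀ j : ℤ, BSICC.PhiBS hn0 hm0 (F j)
            = (y⁻¹ * HNNExtension.t^j * y) * x * (y⁻¹ * HNNExtension.t^j * y)⁻¹ := by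
          intro j
          rw [hF]
          simp only [map_mul, map_inv, BSICC.PhiPsi, hx]
        have h2 : (y⁻¹ * HNNExtension.t^k * y) * x * (y⁻¹ * HNNExtension.t^k * y)⁻¹
            = (y⁻¹ * HNNExtension.t^k' * y) * x * (y⁻¹ * HNNExtension.t^k' * y)⁻¹ := by
          rw [← hconj, ← hconj, hkk]
        have h5 : ∀ j : ℤ, y * ((y⁻¹ * HNNExtension.t^j * y) * x * (y⁻¹ * HNNExtension.t^j * y)⁻¹) * y⁻¹
            = HNNExtension.t^j * (y * x * y⁻¹) * HNNExtension.t^(-j) := by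
          intro j
          rw [zpow_neg]
          group
        have h6 : HNNExtension.t^k * (y * x * y⁻¹) * HNNExtension.t^(-k) = HNNExtension.t^(k') * (y * x * y⁻¹) * HNNExtension.t^(-k') := by
          rw [← h5 k, ← h5 k', h2]
        have h7 : ∀ (a b : ℤ) (X : HNNExtension (Multiplicative ℤ) (BSICC.Agp n) (BSICC.Agp m)
            (BSICC.bsphi hn0 hm0)), HNNExtension.t^(-b) * (HNNExtension.t^a * X * HNNExtension.t^(-a)) * HNNExtension.t^b
              = HNNExtension.t^(a-b) * X * HNNExtension.t^(-(a-b)) := by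
          intro a b X
          group
        have h8 : HNNExtension.t^(k-k') * (y * x * y⁻¹) * HNNExtension.t^(-(k-k')) = y * x * y⁻¹ := by
          have h9 := congrArg (fun w => HNNExtension.t^(-k') * w * HNNExtension.t^(k')) h6
          rw [h7] at h9
          rw [h9, h7]
          simp only [sub_self]
          group
        have h10 : HNNExtension.t^(k-k') * (y * x * y⁻¹) = (y * x * y⁻¹) * HNNExtension.t^(k-k') := by
          have h11 := congrArg (fun w => w * HNNExtension.t^(k-k')) h8
          rw [← h11]
          group
        have := hy (k - k') h10
        omega
      · intro k
        exact ⟨BSICC.PsiBS hn0 hm0 (y⁻¹ * HNNExtension.t^k * y), rfl⟩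
    · -- translation case: conjugate by powers of a
      set F : ℤ → BS n m := fun k => (BS.a n m)^k * g * ((BS.a n m)^k)⁻¹ with hF
      apply Set.infinite_of_injective_forall_mem (f := F)
      · have hak : ∀ k : ℤ, BSICC.rho hn0 hm0 ((BS.a n m)^k)
            = MulAction.toPermHom ℚˣ ℚ ((BSICC.muu hn0 hm0)^k) := by
          intro k
          rw [map_zpow, BSICC.rho_a, ← map_zpow]
        have hval : ∀ k : ℤ, BSICC.rho hn0 hm0 (F k) 0
            = ((m:ℚ)/(n:ℚ))^k * BSICC.rho hn0 hm0 g 0 := by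
          intro k
          rw [hF]
          simp only [map_mul, map_inv, hak]
          rw [Equiv.Perm.mul_apply, Equiv.Perm.mul_apply]
          have h1 : ((MulAction.toPermHom ℚˣ ℚ ((BSICC.muu hn0 hm0)^k))⁻¹) (0:ℚ) = 0 := by
            rw [← map_inv]
            show (((BSICC.muu hn0 hm0)^k)⁻¹ : ℚˣ) • (0:ℚ) = 0
            simp
          rw [h1]
          show (((BSICC.muu hn0 hm0)^k) : ℚˣ) • (BSICC.rho hn0 hm0 g 0) = _
          rw [Units.smul_def]
          congr 1
          rw [← BSICC.muu_val hn0 hm0]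
          exact map_zpow (Units.coeHom ℚ) (BSICC.muu hn0 hm0) k
        intro k k' hkk
        have h2 := congrArg (fun w => BSICC.rho hn0 hm0 w 0) hkk
        rw [hval k, hval k'] at h2
        have h3 : ((m:ℚ)/(n:ℚ))^k = ((m:ℚ)/(n:ℚ))^k' := mul_right_cancel₀ hv h2
        by_contra hne
        apply BSICC.mu_zpow_ne_one hn0 hm0 hnm (k - k') (sub_ne_zero.2 hne)
        rw [zpow_sub₀ hμ0, h3, div_self (zpow_ne_zero _ hμ0)]
      · intro k
        exact ⟨(BS.a n m)^k, rfl⟩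
  · -- scaling case: conjugate by powers of b
    set F : ℤ → BS n m := fun k => (BS.b n m)^k * g * ((BS.b n m)^k)⁻¹ with hF
    apply Set.infinite_of_injective_forall_mem (f := F)
    · have hbk : ∀ k : ℤ, BSICC.rho hn0 hm0 ((BS.b n m)^k) = Equiv.addLeft (k:ℚ) := by
        intro k
        rw [map_zpow, BSICC.rho_b, BSICC.addLeft_zpow]
      have hval : ∀ k : ℤ, BSICC.rho hn0 hm0 (F k) 0
          = (k:ℚ) + (((m:ℚ)/(n:ℚ))^(Multiplicative.toAdd (BSICC.sigmaBS (n := n) (m := m) g))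
            * (-(k:ℚ)) + BSICC.rho hn0 hm0 g 0) := by
        intro k
        rw [hF]
        simp only [map_mul, map_inv, hbk]
        rw [Equiv.Perm.mul_apply, Equiv.Perm.mul_apply]
        have h1 : ((Equiv.addLeft ((k:ℚ)))⁻¹) (0:ℚ) = -(k:ℚ) := by
          rw [Equiv.Perm.inv_def, Equiv.symm_apply_eq]
          simp [Equiv.coe_addLeft]
        rw [h1, BSICC.rho_affine hn0 hm0 g]
        simp [Equiv.coe_addLeft]
      intro k k' hkk
      have h2 := congrArg (fun w => BSICC.rho hn0 hm0 w 0) hkk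
      rw [hval k, hval k'] at h2
      have hμs : ((m:ℚ)/(n:ℚ))^(Multiplicative.toAdd (BSICC.sigmaBS (n := n) (m := m) g)) ≠ 1 :=
        BSICC.mu_zpow_ne_one hn0 hm0 hnm _ hs
      have h4 : (k:ℚ) = k' := by
        have h3 : ((k:ℚ) - k') *
            (1 - ((m:ℚ)/(n:ℚ))^(Multiplicative.toAdd (BSICC.sigmaBS (n := n) (m := m) g))) = 0 := by
          linear_combination h2
        rcases mul_eq_zero.1 h3 with h5 | h5
        · linarith
        · exact absurd (by linarith : ((m:ℚ)/(n:ℚ))^(Multiplicative.toAdd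
            (BSICC.sigmaBS (n := n) (m := m) g)) = 1) hμs
      exact_mod_cast h4
    · intro k
      exact ⟨(BS.b n m)^k, rfl⟩
end

section
/- Let Γ = HNN(H, Σ, θ) be an HNN extension with H abelian, 2 ≤ |H/Σ| < ∞ and 3 ≤ |H/θ(Σ)|. Then Γ contains a non-amenable subgroup that centralizes Σ, namely G = ⟨H, t^{-1}Ht⟩. -/
open HNNExtension

namespace LeftInvariantMean

variable {G : Type*} [Group G] (μ : LeftInvariantMean G)

lemma compl (s : Set G) : μ.m sᶜ = 1 - μ.m s := by
  have := μ.addDisjoint s sᶜ disjoint_compl_right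
  rw [Set.union_compl_self, μ.total] at this
  linarith

lemma mono {s u : Set G} (h : s ⊆ u) : μ.m s ≤ μ.m u := by
  have := μ.addDisjoint s (u \ s) Set.disjoint_sdiff_right
  rw [Set.union_diff_cancel h] at this
  have := μ.nonneg (u \ s)
  linarith

lemma le_one (s : Set G) : μ.m s ≤ 1 := by
  have := μ.mono (Set.subset_univ s); rwa [μ.total] at this

end LeftInvariantMean

/-- Amenability pulls back along injective homomorphisms. -/
lemma amenable_of_injective {G K : Type*} [Group G] [Group K] (f : G →* K)
    (hf : Function.Injective f) (h : Amenable K) : Amenable G := by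
  obtain ⟨μ⟩ := h
  obtain ⟨T, hT, -⟩ := Subgroup.exists_isComplement_right f.range 1
  have hT' : Subgroup.IsComplement (f.range : Set K) T := hT
  classical
  let ι : f.range ≃* G := (MonoidHom.ofInjective hf).symm
  let π : K → G := fun k => ι ((hT'.equiv k).1)
  have hπ : ∀ (g : G) (k : K), π (f g * k) = g * π k := by
    intro g k
    have h1 : f g ∈ f.range := ⟨g, rfl⟩
    have := hT'.equiv_mul_left_of_mem (g := k) h1
    simp only [π, this, map_mul]
    congr 1
    apply hf
    rw [MonoidHom.apply_ofInjective_symm]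
  refine ⟨⟨fun s => μ.m (π ⁻¹' s), fun s => μ.nonneg _, by simp [μ.total], ?_, ?_⟩⟩
  · intro s t hst
    show μ.m (π ⁻¹' (s ∪ t)) = μ.m (π ⁻¹' s) + μ.m (π ⁻¹' t)
    rw [Set.preimage_union]
    exact μ.addDisjoint _ _ (hst.preimage _)
  · intro g s
    show μ.m (π ⁻¹' ((g * ·) '' s)) = μ.m (π ⁻¹' s)
    have : π ⁻¹' ((g * ·) '' s) = (f g * ·) '' (π ⁻¹' s) := by
      ext k
      simp only [Set.mem_preimage, Set.mem_image]
      constructor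
      · rintro ⟨x, hx, hgx⟩
        refine ⟨f g⁻¹ * k, ?_, by simp [mul_assoc]⟩
        have := hπ g⁻¹ k
        rw [this, ← hgx]
        simpa [mul_assoc] using hx
      · rintro ⟨x, hx, rfl⟩
        exact ⟨π x, hx, (hπ g x).symm⟩
    rw [this, ← μ.leftInvariant (f g) (π ⁻¹' s)]


namespace FreeGroupAux

open FreeGroup

variable {α : Type*} [DecidableEq α]

lemma reduce_cons_of_head_ne {x : α × Bool} {M : List (α × Bool)} (hM : reduce M = M)
    (h : M.head? ≠ some (x.1, !x.2)) : reduce (x :: M) = x :: M := by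
  rw [reduce.cons, hM]
  cases M with
  | nil => rfl
  | cons hd tl =>
    have : ¬ (x.1 = hd.1 ∧ x.2 = !hd.2) := by
      rintro ⟨h1, h2⟩
      apply h
      simp only [List.head?_cons, Option.some_inj]
      ext
      · exact h1.symm
      · simp [h2]
    simp [this]

lemma reduce_cancel {x : α} {b : Bool} {M : List (α × Bool)}
    (hM : reduce ((x, b) :: M) = (x, b) :: M) :
    reduce ((x, !b) :: (x, b) :: M) = M := by
  rw [reduce.cons, hM]
  simp

lemma head_ne_of_reduced {x : α} {b : Bool} {M : List (α × Bool)}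
    (hM : reduce ((x, b) :: M) = (x, b) :: M) : M.head? ≠ some (x, !b) := by
  intro h
  cases M with
  | nil => simp at h
  | cons hd tl =>
    simp only [List.head?_cons, Option.some_inj] at h
    subst h
    exact reduce.not (L₂ := []) hM

end FreeGroupAux

namespace FreeGroupAux
open FreeGroup

def C (x : Bool × Bool) : Set (FreeGroup Bool) := {w | w.toWord.head? = some x}

lemma mul_of_image (i : Bool) :
    (FreeGroup.of i * ·) '' C (i, false) = (C (i, true))ᶜ := by
  have hof : FreeGroup.of i = FreeGroup.mk [(i, true)] := rfl
  ext v
  simp only [Set.mem_image, Set.mem_compl_iff, C, Set.mem_setOf_eq]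
  constructor
  · rintro ⟨w, hw, rfl⟩
    obtain ⟨M, hM⟩ : ∃ M, w.toWord = (i, false) :: M := by
      cases h : w.toWord with
      | nil => rw [h] at hw; simp at hw
      | cons hd tl => rw [h] at hw; simp only [List.head?_cons, Option.some_inj] at hw;
                      exact ⟨tl, by rw [hw]⟩
    have hred : reduce ((i, false) :: M) = (i, false) :: M := by
      rw [← hM]; exact reduce_toWord w
    have : (FreeGroup.of i * w).toWord = M := by
      conv_lhs => rw [← FreeGroup.mk_toWord (x := w), hM, hof, FreeGroup.mul_mk]
      rw [FreeGroup.toWord_mk]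
      have := reduce_cancel (x := i) (b := false) hred
      simpa using this
    rw [this]
    intro hMh
    exact head_ne_of_reduced hred (by rw [hMh]; simp)
  · intro hv
    refine ⟨(FreeGroup.of i)⁻¹ * v, ?_, by group⟩
    have hinv : (FreeGroup.of i)⁻¹ = FreeGroup.mk [(i, false)] := by
      rw [hof, FreeGroup.inv_mk]; rfl
    have : ((FreeGroup.of i)⁻¹ * v).toWord = (i, false) :: v.toWord := by
      conv_lhs => rw [← FreeGroup.mk_toWord (x := v), hinv, FreeGroup.mul_mk]
      rw [FreeGroup.toWord_mk]
      exact reduce_cons_of_head_ne (x := (i, false)) (FreeGroup.reduce_toWord v)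
        (by simpa using hv)
    rw [this]
    rfl

lemma C_disjoint {x y : Bool × Bool} (h : x ≠ y) : Disjoint (C x) (C y) := by
  rw [Set.disjoint_left]
  intro w hx hy
  exact h (by rw [C, Set.mem_setOf_eq] at hx hy; exact Option.some_inj.1 (hx.symm.trans hy))

theorem not_amenable_freeGroup : ¬ Amenable (FreeGroup Bool) := by
  rintro ⟨μ⟩
  have key : ∀ i : Bool, μ.m (C (i, true)) + μ.m (C (i, false)) = 1 := by
    intro i
    have h1 := μ.leftInvariant (FreeGroup.of i) (C (i, false))
    rw [mul_of_image i, μ.compl] at h1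
    linarith
  have hd1 : Disjoint (C (true, true)) (C (true, false)) := C_disjoint (by simp)
  have hd2 : Disjoint (C (false, true)) (C (false, false)) := C_disjoint (by simp)
  have hd3 : Disjoint (C (true, true) ∪ C (true, false)) (C (false, true) ∪ C (false, false)) := by
    apply Set.disjoint_union_left.2
    constructor <;> apply Set.disjoint_union_right.2 <;>
      exact ⟨C_disjoint (by simp), C_disjoint (by simp)⟩
  have e1 := μ.addDisjoint _ _ hd1
  have e2 := μ.addDisjoint _ _ hd2
  have e3 := μ.addDisjoint _ _ hd3
  have hle := μ.le_one ((C (true, true) ∪ C (true, false)) ∪ (C (false, true) ∪ C (false, false)))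
  rw [e3, e1, e2, key true, key false] at hle
  linarith

end FreeGroupAux




namespace BrittonAux

/-- letters are reduced-compatible -/
def R : (Bool × Bool) → (Bool × Bool) → Prop := fun p q => p.1 = q.1 → p.2 = q.2

lemma reduce_tail {x : Bool × Bool} {l : List (Bool × Bool)}
    (h : FreeGroup.reduce (x :: l) = x :: l) : FreeGroup.reduce l = l := by
  have hlen := List.Sublist.length_le (FreeGroup.Red.sublist (FreeGroup.reduce.red (L := l)))
  rw [FreeGroup.reduce.cons] at h
  rcases hr : FreeGroup.reduce l with - | ⟨hd, tl⟩
  · rw [hr] at h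
    simp only at h
    injection h with h1 h2
  · rw [hr] at h
    simp only at h
    split_ifs at h with hcond
    · exfalso
      rw [hr] at hlen
      have h2 := congr_arg List.length h
      simp only [List.length_cons] at h2 hlen
      omega
    · injection h with h1 h2

lemma chain'_R_of_reduce {l : List (Bool × Bool)} (h : FreeGroup.reduce l = l) :
    List.Chain' R l := by
  induction l with
  | nil => exact List.isChain_nil
  | cons x l ih =>
    refine List.isChain_cons.2 ⟨?_, ih (reduce_tail h)⟩
    intro y hy
    intro hxy1
    by_contra hxy2
    have hyx : y = (x.1, !x.2) := by
      ext
      · exact hxy1.symm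
      · cases hx2 : x.2 <;> cases hy2 : y.2 <;> simp_all
    rcases l with - | ⟨hd, tl⟩
    · simp at hy
    · rw [List.head?_cons, Option.mem_def, Option.some_inj] at hy
      subst hy
      rw [hyx] at h
      rcases x with ⟨x1, x2⟩
      exact FreeGroup.reduce.not (L₂ := []) (x := x1) (b := x2) h
end BrittonAux

namespace BrittonAux

open HNNExtension

variable {H : Type*} [CommGroup H] {A B : Subgroup H} (φ : A ≃* B)
variable (a : H) (b : Bool → H)

/-- the candidate free generators -/
def z (i : Bool) : HNNExtension H A B φ :=
  of a * t⁻¹ * of (b i) * t * (of a)⁻¹ * t⁻¹ * (of (b i))⁻¹ * t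

/-- image of one free-group letter -/
def letterProd (p : Bool × Bool) : HNNExtension H A B φ :=
  cond p.2 (z φ a b p.1) (z φ a b p.1)⁻¹

/-- chain relation of HNN reduced words -/
def Rw : (ℤˣ × H) → (ℤˣ × H) → Prop :=
  fun p q => p.2 ∈ toSubgroup A B p.1 → p.1 = q.1

lemma relB {g : H} (hg : g ∉ B) (q : ℤˣ × H) : Rw (A := A) (B := B) ((-1 : ℤˣ), g) q :=
  fun h => absurd (by simpa using h) hg

lemma relA {g : H} (hg : g ∉ A) (q : ℤˣ × H) : Rw (A := A) (B := B) ((1 : ℤˣ), g) q :=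
  fun h => absurd (by simpa using h) hg

lemma ht1 : (t : HNNExtension H A B φ) ^ (((1 : ℤˣ)) : ℤ) = t := zpow_one t

lemma htneg : (t : HNNExtension H A B φ) ^ (((-1 : ℤˣ)) : ℤ) = t⁻¹ := by
  rw [show (((-1 : ℤˣ)) : ℤ) = -1 from rfl, zpow_neg_one]

lemma hif1 : (if false = true then a else (1:H)) = 1 := rfl
lemma hif2 : (if true = true then a else (1:H)) = a := rfl

theorem key (ha : a ∉ A) (hb : ∀ i, b i ∉ B) (hbb : ∀ i j, i ≠ j → (b i)⁻¹ * b j ∉ B)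
    (L : List (Bool × Bool)) : ∀ (ℓ : Bool × Bool), List.Chain' R (ℓ :: L) →
    ∃ (β : H) (rest : List (ℤˣ × H)) (ch : List.Chain' (Rw (A := A) (B := B))
        (((-1 : ℤˣ), β) :: rest)),
      (NormalWord.ReducedWord.mk (if ℓ.2 then a else 1) (((-1 : ℤˣ), β) :: rest) ch).prod φ
        = (List.map (letterProd φ a b) (ℓ :: L)).prod ∧ (b ℓ.1)⁻¹ * β ∈ B := by
  induction L with
  | nil =>
    rintro ⟨i, s⟩ -
    cases s
    · -- single letter (z i)⁻¹
      refine ⟨b i, [((1 : ℤˣ), a), ((-1 : ℤˣ), (b i)⁻¹), ((1 : ℤˣ), a⁻¹)], ?_, ?_, ?_⟩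
      · refine List.isChain_cons_cons.2 ⟨relB (hb i) _, ?_⟩
        refine List.isChain_cons_cons.2 ⟨relA ha _, ?_⟩
        refine List.isChain_cons_cons.2 ⟨relB (by simpa using hb i) _, ?_⟩
        exact List.isChain_singleton _
      · simp only [NormalWord.ReducedWord.prod, List.map_cons, List.prod_cons, List.map_nil,
            List.prod_nil, letterProd, z, cond_true, cond_false, reduceIte, map_one, map_mul,
            map_inv, one_mul, mul_one, ht1, htneg, mul_inv_rev, inv_inv, mul_assoc,
            mul_inv_cancel_left, inv_mul_cancel_left, hif1, hif2]
      · simpa using one_mem B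
    · -- single letter z i
      refine ⟨b i, [((1 : ℤˣ), a⁻¹), ((-1 : ℤˣ), (b i)⁻¹), ((1 : ℤˣ), 1)], ?_, ?_, ?_⟩
      · refine List.isChain_cons_cons.2 ⟨relB (hb i) _, ?_⟩
        refine List.isChain_cons_cons.2 ⟨relA (by simpa using ha) _, ?_⟩
        refine List.isChain_cons_cons.2 ⟨relB (by simpa using hb i) _, ?_⟩
        exact List.isChain_singleton _
      · simp only [NormalWord.ReducedWord.prod, List.map_cons, List.prod_cons, List.map_nil,
            List.prod_nil, letterProd, z, cond_true, cond_false, reduceIte, map_one, map_mul,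
            map_inv, one_mul, mul_one, ht1, htneg, mul_inv_rev, inv_inv, mul_assoc,
            mul_inv_cancel_left, inv_mul_cancel_left, hif1, hif2]
      · simpa using one_mem B
  | cons ℓ' L' ih =>
    rintro ⟨i, s⟩ hch
    have hRel : R (i, s) ℓ' := (List.isChain_cons_cons.1 hch).1
    obtain ⟨β, rest, ch, hprod, hβ⟩ := ih ℓ' (List.isChain_cons_cons.1 hch).2
    have hchtail : List.Chain' (Rw (A := A) (B := B)) rest := (List.isChain_cons.1 ch).2
    have hchhead := (List.isChain_cons.1 ch).1
    rcases ℓ' with ⟨i', s'⟩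
    cases s
    · -- new letter (z i)⁻¹
      cases s'
      · -- previous letter also negative : no cancellation
        refine ⟨b i, ((1 : ℤˣ), a) :: ((-1 : ℤˣ), (b i)⁻¹) :: ((1 : ℤˣ), a⁻¹) ::
            ((-1 : ℤˣ), β) :: rest, ?_, ?_, ?_⟩
        · refine List.isChain_cons_cons.2 ⟨relB (hb i) _, ?_⟩
          refine List.isChain_cons_cons.2 ⟨relA ha _, ?_⟩
          refine List.isChain_cons_cons.2 ⟨relB (by simpa using hb i) _, ?_⟩
          refine List.isChain_cons_cons.2 ⟨relA (by simpa using ha) _, ?_⟩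
          exact ch
        · rw [List.map_cons (l := (i', false) :: L'), List.prod_cons, ← hprod]
          simp only [NormalWord.ReducedWord.prod, List.map_cons, List.prod_cons, List.map_nil,
            List.prod_nil, letterProd, z, cond_true, cond_false, reduceIte, map_one, map_mul,
            map_inv, one_mul, mul_one, ht1, htneg, mul_inv_rev, inv_inv, mul_assoc,
            mul_inv_cancel_left, inv_mul_cancel_left, hif1, hif2]
        · simpa using one_mem B
      · -- previous letter positive : cancellation, i ≠ i'
        have hii : i ≠ i' := fun h => by simpa using hRel h
        have hmem : (b i)⁻¹ * β ∉ B := by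
          intro hmem
          exact hbb i i' hii (by
            have : ((b i)⁻¹ * β) * (β⁻¹ * b i') ∈ B := mul_mem hmem
              (by simpa using inv_mem hβ)
            simpa [mul_assoc] using this)
        refine ⟨b i, ((1 : ℤˣ), a) :: ((-1 : ℤˣ), (b i)⁻¹ * β) :: rest, ?_, ?_, ?_⟩
        · refine List.isChain_cons_cons.2 ⟨relB (hb i) _, ?_⟩
          refine List.isChain_cons_cons.2 ⟨relA ha _, ?_⟩
          exact List.isChain_cons.2 ⟨fun y _ => relB hmem y, hchtail⟩
        · rw [List.map_cons (l := (i', true) :: L'), List.prod_cons, ← hprod]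
          simp only [NormalWord.ReducedWord.prod, List.map_cons, List.prod_cons, List.map_nil,
            List.prod_nil, letterProd, z, cond_true, cond_false, reduceIte, map_one, map_mul,
            map_inv, one_mul, mul_one, ht1, htneg, mul_inv_rev, inv_inv, mul_assoc,
            mul_inv_cancel_left, inv_mul_cancel_left, hif1, hif2]
        · simpa using one_mem B
    · -- new letter z i
      cases s'
      · -- previous letter negative : cancellation, i ≠ i'
        have hii : i ≠ i' := fun h => by simpa using hRel h
        have hmem : (b i)⁻¹ * β ∉ B := by
          intro hmem
          exact hbb i i' hii (by
            have : ((b i)⁻¹ * β) * (β⁻¹ * b i') ∈ B := mul_mem hmem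
              (by simpa using inv_mem hβ)
            simpa [mul_assoc] using this)
        refine ⟨b i, ((1 : ℤˣ), a⁻¹) :: ((-1 : ℤˣ), (b i)⁻¹ * β) :: rest, ?_, ?_, ?_⟩
        · refine List.isChain_cons_cons.2 ⟨relB (hb i) _, ?_⟩
          refine List.isChain_cons_cons.2 ⟨relA (by simpa using ha) _, ?_⟩
          exact List.isChain_cons.2 ⟨fun y _ => relB hmem y, hchtail⟩
        · rw [List.map_cons (l := (i', false) :: L'), List.prod_cons, ← hprod]
          simp only [NormalWord.ReducedWord.prod, List.map_cons, List.prod_cons, List.map_nil,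
            List.prod_nil, letterProd, z, cond_true, cond_false, reduceIte, map_one, map_mul,
            map_inv, one_mul, mul_one, ht1, htneg, mul_inv_rev, inv_inv, mul_assoc,
            mul_inv_cancel_left, inv_mul_cancel_left, hif1, hif2]
        · simpa using one_mem B
      · -- previous letter positive : no cancellation
        refine ⟨b i, ((1 : ℤˣ), a⁻¹) :: ((-1 : ℤˣ), (b i)⁻¹) :: ((1 : ℤˣ), a) ::
            ((-1 : ℤˣ), β) :: rest, ?_, ?_, ?_⟩
        · refine List.isChain_cons_cons.2 ⟨relB (hb i) _, ?_⟩
          refine List.isChain_cons_cons.2 ⟨relA (by simpa using ha) _, ?_⟩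
          refine List.isChain_cons_cons.2 ⟨relB (by simpa using hb i) _, ?_⟩
          refine List.isChain_cons_cons.2 ⟨relA ha _, ?_⟩
          exact ch
        · rw [List.map_cons (l := (i', true) :: L'), List.prod_cons, ← hprod]
          simp only [NormalWord.ReducedWord.prod, List.map_cons, List.prod_cons, List.map_nil,
            List.prod_nil, letterProd, z, cond_true, cond_false, reduceIte, map_one, map_mul,
            map_inv, one_mul, mul_one, ht1, htneg, mul_inv_rev, inv_inv, mul_assoc,
            mul_inv_cancel_left, inv_mul_cancel_left, hif1, hif2]
        · simpa using one_mem B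

end BrittonAux

namespace BrittonAux

variable {H : Type*} [CommGroup H] {A B : Subgroup H} (φ : A ≃* B)
variable (a : H) (b : Bool → H)

theorem lift_z_injective (ha : a ∉ A) (hb : ∀ i, b i ∉ B)
    (hbb : ∀ i j, i ≠ j → (b i)⁻¹ * b j ∉ B) :
    Function.Injective (FreeGroup.lift (fun i => z φ a b i)) := by
  rw [injective_iff_map_eq_one]
  intro w hw
  by_contra hne
  have hL : w.toWord ≠ [] := fun h => hne (FreeGroup.toWord_eq_nil_iff.1 h)
  obtain ⟨ℓ, L, hLw⟩ : ∃ ℓ L, w.toWord = ℓ :: L := by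
    rcases h : w.toWord with - | ⟨ℓ, L⟩
    · exact absurd h hL
    · exact ⟨ℓ, L, rfl⟩
  have hch : List.Chain' R (ℓ :: L) := hLw ▸ chain'_R_of_reduce (FreeGroup.reduce_toWord w)
  obtain ⟨β, rest, ch, hprod, -⟩ := key φ a b ha hb hbb L ℓ hch
  have hlift : FreeGroup.lift (fun i => z φ a b i) w
      = (List.map (letterProd φ a b) w.toWord).prod := by
    conv_lhs => rw [← FreeGroup.mk_toWord (x := w)]
    rw [FreeGroup.lift_mk]
    rfl
  have hmem : (NormalWord.ReducedWord.mk (if ℓ.2 then a else 1)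
      (((-1 : ℤˣ), β) :: rest) ch).prod φ ∈
      (HNNExtension.of.range : Subgroup (HNNExtension H A B φ)) := by
    rw [hprod, ← hLw, ← hlift, hw]
    exact one_mem _
  have := HNNExtension.ReducedWord.toList_eq_nil_of_mem_of_range φ _ hmem
  simp at this

end BrittonAux

/-- Let `Γ = HNN(H,Σ,θ)` with `H` abelian, `2 ≤ |H/Σ| < ∞` and `3 ≤ |H/θ(Σ)|`. Then `Γ`
contains a non-amenable subgroup centralizing `Σ`, namely `G = ⟨H, t⁻¹Ht⟩`. -/
theorem hnn_nonamenable_centralizing_subgroup {H : Type*} [CommGroup H]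
    (A B : Subgroup H) (φ : A ≃* B)
    (h2 : A ≠ ⊤) (hfin : A.index ≠ 0)
    (h3 : ∃ x y z : H ⧸ B, x ≠ y ∧ x ≠ z ∧ y ≠ z) :
    ∃ G' : Subgroup (HNNExtension H A B φ),
      G' = Subgroup.closure ((Set.range fun h : H => (of h : HNNExtension H A B φ)) ∪
        (Set.range fun h : H => (t⁻¹ * of h * t : HNNExtension H A B φ))) ∧
      ¬ Amenable G' ∧
      ∀ g ∈ G', ∀ σ ∈ A, Commute g (of σ) := by
  classical
  -- pick a ∉ A
  obtain ⟨a, ha⟩ : ∃ a, a ∉ A := by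
    by_contra h
    push_neg at h
    exact h2 ((Subgroup.eq_top_iff' A).2 h)
  -- pick b with the right coset conditions
  obtain ⟨x, y, zq, hxy, hxz, hyz⟩ := h3
  obtain ⟨x', rfl⟩ := QuotientGroup.mk_surjective x
  obtain ⟨y', rfl⟩ := QuotientGroup.mk_surjective y
  obtain ⟨z', rfl⟩ := QuotientGroup.mk_surjective zq
  set b : Bool → H := fun i => if i then x'⁻¹ * y' else x'⁻¹ * z' with hbdef
  have hb : ∀ i, b i ∉ B := by
    intro i hmem
    cases i
    · exact hxz ((QuotientGroup.eq (s := B)).2 (by simpa [hbdef] using hmem))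
    · exact hxy ((QuotientGroup.eq (s := B)).2 (by simpa [hbdef] using hmem))
  have e1 : b false = x'⁻¹ * z' := rfl
  have e2 : b true = x'⁻¹ * y' := rfl
  have key1 : (b false)⁻¹ * b true = z'⁻¹ * y' := by rw [e1, e2]; group
  have key2 : (b true)⁻¹ * b false = y'⁻¹ * z' := by rw [e1, e2]; group
  have hbb : ∀ i j, i ≠ j → (b i)⁻¹ * b j ∉ B := by
    intro i j hij hmem
    cases i <;> cases j
    · exact hij rfl
    · rw [key1] at hmem
      exact hyz ((QuotientGroup.eq (s := B)).2 (by simpa using inv_mem hmem))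
    · rw [key2] at hmem
      exact hyz ((QuotientGroup.eq (s := B)).2 hmem)
    · exact hij rfl
  -- the subgroup
  set S : Set (HNNExtension H A B φ) :=
    (Set.range fun h : H => (of h : HNNExtension H A B φ)) ∪
      (Set.range fun h : H => (t⁻¹ * of h * t : HNNExtension H A B φ)) with hSdef
  refine ⟨Subgroup.closure S, rfl, ?_, ?_⟩
  · -- non-amenability
    have hzmem : ∀ i, BrittonAux.z φ a b i ∈ Subgroup.closure S := by
      intro i
      have h1 : (of a : HNNExtension H A B φ) ∈ Subgroup.closure S :=
        Subgroup.subset_closure (Set.mem_union_left _ ⟨a, rfl⟩)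
      have h2' : (t⁻¹ * of (b i) * t : HNNExtension H A B φ) ∈ Subgroup.closure S :=
        Subgroup.subset_closure (Set.mem_union_right _ ⟨b i, rfl⟩)
      have : BrittonAux.z φ a b i = of a * (t⁻¹ * of (b i) * t) * (of a)⁻¹ *
          (t⁻¹ * of (b i) * t)⁻¹ := by
        rw [BrittonAux.z]; group
      rw [this]
      exact mul_mem (mul_mem (mul_mem h1 h2') (inv_mem h1)) (inv_mem h2')
    set ψ : FreeGroup Bool →* Subgroup.closure S :=
      FreeGroup.lift (fun i => (⟨BrittonAux.z φ a b i, hzmem i⟩ : Subgroup.closure S)) with hψdef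
    have hcomp : ∀ w, ((Subgroup.closure S).subtype (ψ w) : HNNExtension H A B φ)
        = FreeGroup.lift (fun i => BrittonAux.z φ a b i) w := by
      intro w
      have : (Subgroup.closure S).subtype.comp ψ = FreeGroup.lift (fun i => BrittonAux.z φ a b i) := by
        apply FreeGroup.ext_hom
        intro i
        simp [hψdef]
      exact DFunLike.congr_fun this w
    have hinj : Function.Injective ψ := by
      intro w₁ w₂ hw
      apply BrittonAux.lift_z_injective φ a b ha hb hbb
      rw [← hcomp, ← hcomp, hw]
    intro hAm
    exact FreeGroupAux.not_amenable_freeGroup (amenable_of_injective ψ hinj hAm)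
  · -- centralizes A
    intro g hg σ hσ
    refine Subgroup.closure_induction ?_ ?_ ?_ ?_ hg
    · rintro x (⟨h, rfl⟩ | ⟨h, rfl⟩)
      · exact (Commute.all h σ).map of
      · have hσ' : (of (σ : H) : HNNExtension H A B φ)
            = t⁻¹ * of ((φ ⟨σ, hσ⟩ : B) : H) * t := by
          rw [equiv_eq_conj]; group
        show Commute (t⁻¹ * of h * t) (of (σ : H))
        rw [Commute, SemiconjBy, hσ']
        calc (t⁻¹ * of h * t) * (t⁻¹ * of ((φ ⟨σ, hσ⟩ : B) : H) * t)
            = t⁻¹ * (of h * of ((φ ⟨σ, hσ⟩ : B) : H)) * t := by group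
          _ = t⁻¹ * (of ((φ ⟨σ, hσ⟩ : B) : H) * of h) * t := by
              rw [← map_mul, ← map_mul, mul_comm]
          _ = (t⁻¹ * of ((φ ⟨σ, hσ⟩ : B) : H) * t) * (t⁻¹ * of h * t) := by group
    · exact Commute.one_left _
    · exact fun x y _ _ hx hy => hx.mul_left hy
    · exact fun x _ hx => hx.inv_left
end

section
/- For integers n, m with |n|, |m| ≥ 2, the elements b and a^{-1} b a of BS(n,m) generate a subgroup isomorphic to the amalgamated free product ℤ *_{ℤ} ℤ where the amalgamated subgroup embeds as nℤ in the first factor and mℤ in the second factor. -/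
open Monoid

/-- The maps of the amalgam `ℤ *_ℤ ℤ`: the base copy of `ℤ` embeds as `nℤ` in the first
factor and as `mℤ` in the second factor. -/
def bsAmalgamMaps (n m : ℤ) : ∀ _ : Bool, (Multiplicative ℤ →* Multiplicative ℤ) :=
  fun i => if i then zpowGroupHom n else zpowGroupHom m

open HNNExtension Subgroup Multiplicative

namespace BSAux

abbrev Z1 : Type := Multiplicative ℤ

theorem zpow_inj {n : ℤ} (hn : n ≠ 0) :
    Function.Injective (zpowGroupHom n : Z1 →* Z1) := by
  intro x y h
  have h' : n * x.toAdd = n * y.toAdd := by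
    have := congrArg Multiplicative.toAdd h
    simpa [zpowGroupHom, toAdd_zpow, mul_comm, smul_eq_mul] using this
  exact Multiplicative.toAdd.injective (mul_left_cancel₀ hn h')

/-- the subgroup `kℤ` of `Multiplicative ℤ`. -/
def A (k : ℤ) : Subgroup Z1 := (zpowGroupHom k : Z1 →* Z1).range

noncomputable def e {n m : ℤ} (hn : n ≠ 0) (hm : m ≠ 0) : A n ≃* A m :=
  (MonoidHom.ofInjective (zpow_inj hn)).symm.trans (MonoidHom.ofInjective (zpow_inj hm))

lemma e_apply {n m : ℤ} (hn : n ≠ 0) (hm : m ≠ 0) (x : Z1) (hx) :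
    (e hn hm ⟨zpowGroupHom n x, hx⟩ : Z1) = zpowGroupHom m x := by
  have h2 : (MonoidHom.ofInjective (zpow_inj hn)).symm ⟨zpowGroupHom n x, hx⟩ = x := by
    apply zpow_inj hn
    rw [MonoidHom.apply_ofInjective_symm]
  show ((MonoidHom.ofInjective (zpow_inj hm))
      ((MonoidHom.ofInjective (zpow_inj hn)).symm ⟨zpowGroupHom n x, hx⟩) : Z1) = _
  rw [h2, MonoidHom.ofInjective_apply]


variable {n m : ℤ} (hn : n ≠ 0) (hm : m ≠ 0)

abbrev HNN (hn : n ≠ 0) (hm : m ≠ 0) : Type := HNNExtension Z1 (A n) (A m) (e hn hm)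

lemma hnn_rel (x : Z1) :
    (t : HNN hn hm) * of (zpowGroupHom n x) * t⁻¹ = of (zpowGroupHom m x) := by
  have h := t_mul_of (φ := e hn hm) ⟨zpowGroupHom n x, ⟨x, rfl⟩⟩
  erw [e_apply] at h
  rw [h, mul_assoc, mul_inv_cancel, mul_one]

lemma bs_rel (n m : ℤ) : BS.a n m * BS.b n m ^ n * (BS.a n m)⁻¹ = BS.b n m ^ m := by
  have h : (PresentedGroup.mk (BSRels n m)) (FreeGroup.of true * FreeGroup.of false ^ n *
      (FreeGroup.of true)⁻¹ * (FreeGroup.of false ^ m)⁻¹) = 1 := by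
    apply (QuotientGroup.eq_one_iff _).2
    exact Subgroup.subset_normalClosure rfl
  simp only [map_mul, map_zpow, map_inv] at h
  exact mul_inv_eq_one.mp h

lemma bs_rel' (n m : ℤ) : (BS.a n m)⁻¹ * BS.b n m ^ m * BS.a n m = BS.b n m ^ n := by
  rw [← bs_rel n m]
  group

/-- The map `BS n m →* HNN` sending `a ↦ t`, `b ↦ of (ofAdd 1)`. -/
noncomputable def gmap : BS n m →* HNN hn hm :=
  PresentedGroup.toGroup
    (f := fun i => match i with
      | true => (t : HNN hn hm)
      | false => of (ofAdd (1 : ℤ))) (by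
    intro r hr
    rw [show r = FreeGroup.of true * FreeGroup.of false ^ n * (FreeGroup.of true)⁻¹ *
      (FreeGroup.of false ^ m)⁻¹ from hr]
    simp only [map_mul, map_zpow, map_inv, FreeGroup.lift_apply_of]
    have h1 : (of (ofAdd (1:ℤ)) : HNN hn hm) ^ n = of (zpowGroupHom n (ofAdd 1)) := by
      rw [← map_zpow]; rfl
    have h2 : (of (ofAdd (1:ℤ)) : HNN hn hm) ^ m = of (zpowGroupHom m (ofAdd 1)) := by
      rw [← map_zpow]; rfl
    rw [h1, h2, hnn_rel, mul_inv_cancel])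

lemma gmap_a : gmap hn hm (BS.a n m) = t := PresentedGroup.toGroup.of _

lemma gmap_b : gmap hn hm (BS.b n m) = of (ofAdd (1:ℤ)) := PresentedGroup.toGroup.of _

/-- The map of the amalgam into `BS n m`. -/
def Fi (n m : ℤ) : ∀ _ : Bool, Multiplicative ℤ →* BS n m := fun i => match i with
  | true => zpowersHom _ (BS.b n m)
  | false => zpowersHom _ ((BS.a n m)⁻¹ * BS.b n m * BS.a n m)

lemma Fi_comp (n m : ℤ) (i : Bool) :
    (Fi n m i).comp (bsAmalgamMaps n m i) = zpowersHom _ (BS.b n m ^ n) := by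
  cases i <;> apply MonoidHom.ext_mint
  · show Fi n m false (zpowGroupHom m (ofAdd 1)) = _
    have : zpowGroupHom m (ofAdd (1:ℤ)) = ofAdd m := by
      apply Multiplicative.toAdd.injective
      simp [zpowGroupHom, toAdd_zpow]
    rw [this]
    show ((BS.a n m)⁻¹ * BS.b n m * BS.a n m) ^ (ofAdd m).toAdd = (BS.b n m ^ n) ^ (ofAdd (1:ℤ)).toAdd
    rw [toAdd_ofAdd, toAdd_ofAdd, zpow_one]
    calc ((BS.a n m)⁻¹ * BS.b n m * BS.a n m) ^ m
        = ((BS.a n m)⁻¹ * BS.b n m * ((BS.a n m)⁻¹)⁻¹) ^ m := by rw [inv_inv]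
      _ = (BS.a n m)⁻¹ * BS.b n m ^ m * ((BS.a n m)⁻¹)⁻¹ := conj_zpow
      _ = (BS.a n m)⁻¹ * BS.b n m ^ m * BS.a n m := by rw [inv_inv]
      _ = BS.b n m ^ n := bs_rel' n m
  · show Fi n m true (zpowGroupHom n (ofAdd 1)) = _
    have : zpowGroupHom n (ofAdd (1:ℤ)) = ofAdd n := by
      apply Multiplicative.toAdd.injective
      simp [zpowGroupHom, toAdd_zpow]
    rw [this]
    show BS.b n m ^ (ofAdd n).toAdd = (BS.b n m ^ n) ^ (ofAdd (1:ℤ)).toAdd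
    rw [toAdd_ofAdd, toAdd_ofAdd, zpow_one]

def fmap (n m : ℤ) : PushoutI (bsAmalgamMaps n m) →* BS n m :=
  PushoutI.lift (Fi n m) (zpowersHom _ (BS.b n m ^ n)) (Fi_comp n m)

lemma fmap_of (i : Bool) (x : Z1) :
    fmap n m (PushoutI.of i x) = Fi n m i x := by
  rw [fmap, PushoutI.lift_of]

lemma fmap_of_true (x : Z1) : fmap n m (PushoutI.of true x) = BS.b n m ^ x.toAdd := by
  rw [fmap_of]; rfl

lemma fmap_of_false (x : Z1) :
    fmap n m (PushoutI.of false x) = ((BS.a n m)⁻¹ * BS.b n m * BS.a n m) ^ x.toAdd := by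
  rw [fmap_of]; rfl

lemma fmap_base (x : Z1) :
    fmap n m (PushoutI.base (bsAmalgamMaps n m) x) = (BS.b n m ^ n) ^ x.toAdd := by
  rw [fmap, PushoutI.lift_base]; rfl

lemma ofAdd_one_zpow (x : Z1) : (ofAdd (1:ℤ)) ^ x.toAdd = x := by
  apply Multiplicative.toAdd.injective
  simp [toAdd_zpow]

lemma hmap_of_true (x : Z1) :
    gmap hn hm (fmap n m (PushoutI.of true x)) = of x := by
  rw [fmap_of]
  show gmap hn hm (BS.b n m ^ x.toAdd) = _
  rw [map_zpow, gmap_b, ← map_zpow, ofAdd_one_zpow]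

lemma hmap_of_false (x : Z1) :
    gmap hn hm (fmap n m (PushoutI.of false x)) = t⁻¹ * of x * t := by
  rw [fmap_of]
  show gmap hn hm (((BS.a n m)⁻¹ * BS.b n m * BS.a n m) ^ x.toAdd) = _
  rw [map_zpow, map_mul, map_mul, map_inv, gmap_a, gmap_b]
  calc (t⁻¹ * of (ofAdd (1:ℤ)) * t) ^ x.toAdd
      = (t⁻¹ * of (ofAdd (1:ℤ)) * t⁻¹⁻¹) ^ x.toAdd := by rw [inv_inv]
    _ = t⁻¹ * of (ofAdd (1:ℤ)) ^ x.toAdd * t⁻¹⁻¹ := conj_zpow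
    _ = t⁻¹ * of x * t := by rw [inv_inv, ← map_zpow, ofAdd_one_zpow]


/-- The image in the HNN extension of a word in the amalgam. -/
noncomputable def P (hn : n ≠ 0) (hm : m ≠ 0) (l : List (Σ _ : Bool, Z1)) : HNN hn hm :=
  (l.map fun p => if p.1 then of p.2 else t⁻¹ * of p.2 * t).prod

/-- Turn a word in the amalgam into (the data of) a reduced word in the HNN extension. -/
def toRW : List (Σ _ : Bool, Z1) → Z1 × List (ℤˣ × Z1)
  | [] => (1, [])
  | ⟨true, g⟩ :: l => (g * (toRW l).1, (toRW l).2)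
  | ⟨false, g⟩ :: l => (1, (-1, g) :: (1, (toRW l).1) :: (toRW l).2)

lemma toRW_prod : ∀ l : List (Σ _ : Bool, Z1),
    of (toRW l).1 * ((toRW l).2.map fun x : ℤˣ × Z1 => (t : HNN hn hm) ^ (x.1 : ℤ) * HNNExtension.of x.2).prod
      = P hn hm l
  | [] => by simp [toRW, P]
  | ⟨true, g⟩ :: l => by
    have ih := toRW_prod l
    simp only [toRW, P, List.map_cons, List.prod_cons, if_true, map_mul, mul_assoc] at ih ⊢
    rw [ih]
  | ⟨false, g⟩ :: l => by
    have ih := toRW_prod l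
    simp only [toRW, P, List.map_cons, List.prod_cons, if_false, map_one, one_mul,
      Units.val_neg, Units.val_one, zpow_neg, zpow_one, mul_assoc] at ih ⊢
    rw [ih]
    simp [mul_assoc]

lemma toRW_snd_nil : ∀ l : List (Σ _ : Bool, Z1), (toRW l).2 = [] →
    ∀ p ∈ l, p.1 = true
  | [] => by simp
  | ⟨true, g⟩ :: l => by
    intro h p hp
    rcases List.mem_cons.1 hp with rfl | hp
    · rfl
    · exact toRW_snd_nil l h p hp
  | ⟨false, g⟩ :: l => by
    intro h
    simp [toRW] at h

lemma toRW_head_of_shape : ∀ l : List (Σ _ : Bool, Z1),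
    (l = [] ∨ ∃ g' l', l = ⟨false, g'⟩ :: l') → (toRW l).1 = 1 := by
  rintro l (rfl | ⟨g', l', rfl⟩) <;> rfl

lemma shape_of_chain {g : Z1} {l : List (Σ _ : Bool, Z1)}
    (h : (List.Chain' (fun p q => p.1 ≠ q.1) (⟨true, g⟩ :: l))) :
    l = [] ∨ ∃ g' l', l = ⟨false, g'⟩ :: l' := by
  match l with
  | [] => exact Or.inl rfl
  | ⟨true, g'⟩ :: l' => exact absurd rfl (List.isChain_cons_cons.1 h).1
  | ⟨false, g'⟩ :: l' => exact Or.inr ⟨g', l', rfl⟩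

lemma toRW_chain : ∀ l : List (Σ _ : Bool, Z1),
    l.Chain' (fun p q => p.1 ≠ q.1) →
    (∀ p ∈ l, p.2 ∉ A (if p.1 then n else m)) →
    ((toRW l).2).Chain' (fun a b => a.2 ∈ toSubgroup (A n) (A m) a.1 → a.1 = b.1)
  | [] => fun _ _ => List.isChain_nil
  | ⟨true, g⟩ :: l => fun hc hmem =>
    toRW_chain l hc.tail (fun p hp => hmem p (List.mem_cons_of_mem _ hp))
  | ⟨false, g⟩ :: l => fun hc hmem => by
    have hgB : g ∉ A m := by simpa using hmem ⟨false, g⟩ (List.mem_cons_self)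
    show List.IsChain _ ((-1, g) :: (1, (toRW l).1) :: (toRW l).2)
    rw [List.isChain_cons_cons]
    constructor
    · intro hg
      exact absurd hg hgB
    · match l with
      | [] => simp [toRW]
      | ⟨true, g'⟩ :: l' =>
        have hshape := shape_of_chain hc.tail
        have hhead : (toRW (⟨true, g'⟩ :: l')).1 = g' := by
          show g' * (toRW l').1 = g'
          rw [toRW_head_of_shape l' hshape, mul_one]
        rw [hhead]
        have hg'A : g' ∉ A n := by
          simpa using hmem ⟨true, g'⟩ (List.mem_cons_of_mem _ (List.mem_cons_self))
        rw [List.isChain_cons]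
        constructor
        · intro b _ hg'
          exact absurd hg' hg'A
        · exact toRW_chain (⟨true, g'⟩ :: l') hc.tail
            (fun p hp => hmem p (List.mem_cons_of_mem _ hp))
      | ⟨false, g'⟩ :: l' =>
        exact absurd rfl (List.isChain_cons_cons.1 hc).1


lemma hmap_letter (p : Σ _ : Bool, Z1) :
    gmap hn hm (fmap n m (PushoutI.ofCoprodI (CoprodI.of (i := p.1) p.2))) =
      if p.1 then HNNExtension.of p.2 else t⁻¹ * HNNExtension.of p.2 * t := by
  obtain ⟨i, g⟩ := p
  cases i
  · rw [PushoutI.ofCoprodI_of, hmap_of_false]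
    simp
  · rw [PushoutI.ofCoprodI_of, hmap_of_true]
    simp

lemma hmap_ofCoprodI (w : CoprodI.Word (fun _ : Bool => Z1)) :
    gmap hn hm (fmap n m (PushoutI.ofCoprodI w.prod)) = P hn hm w.toList := by
  have : gmap hn hm (fmap n m (PushoutI.ofCoprodI w.prod)) =
      (((gmap hn hm).comp (fmap n m)).comp PushoutI.ofCoprodI) w.prod := rfl
  rw [this, CoprodI.Word.prod, map_list_prod, List.map_map, P]
  congr 1
  apply List.map_congr_left
  intro p _
  simp only [Function.comp_apply]
  exact hmap_letter hn hm p

lemma hmap_inj : Function.Injective ((gmap hn hm).comp (fmap n m)) := by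
  apply (injective_iff_map_eq_one _).2
  intro w hw
  have hinj : ∀ i, Function.Injective (bsAmalgamMaps n m i) := by
    intro i
    cases i
    · exact zpow_inj hm
    · exact zpow_inj hn
  obtain ⟨d⟩ := Monoid.PushoutI.NormalWord.transversal_nonempty (bsAmalgamMaps n m) hinj
  set w' := PushoutI.NormalWord.equiv (d := d) w with hw'def
  have hprod : w'.prod = w := (PushoutI.NormalWord.equiv (d := d)).symm_apply_apply w
  have hmem : ∀ p ∈ w'.toList, p.2 ∉ A (if p.1 then n else m) := by
    intro p hp hpA
    have h1 : p.2 ∈ d.set p.1 := by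
      obtain ⟨i, g⟩ := p
      exact w'.normalized i g hp
    have h2 : p.2 ≠ 1 := w'.ne_one p hp
    have hrange : p.2 ∈ (bsAmalgamMaps n m p.1).range := by
      rcases p with ⟨i, g⟩
      cases i
      · simpa [bsAmalgamMaps, A] using hpA
      · simpa [bsAmalgamMaps, A] using hpA
    have h3 := (d.compl p.1).1 (a₁ := (⟨p.2, hrange⟩, ⟨1, d.one_mem p.1⟩))
        (a₂ := (⟨1, one_mem _⟩, ⟨p.2, h1⟩)) (by simp)
    have h4 : p.2 = 1 ∧ 1 = p.2 := by simpa [Prod.ext_iff, Subtype.ext_iff] using h3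
    exact h2 h4.1
  have halt := w'.chain_ne
  have hw2 : HNNExtension.of (zpowGroupHom n w'.head) * P hn hm w'.toList = 1 := by
    have e1 : ((gmap hn hm).comp (fmap n m)) w =
        HNNExtension.of (zpowGroupHom n w'.head) * P hn hm w'.toList := by
      conv_lhs => rw [← hprod]
      rw [PushoutI.NormalWord.prod, ← PushoutI.of_apply_eq_base (bsAmalgamMaps n m) true w'.head,
        map_mul]
      have hb : ((gmap hn hm).comp (fmap n m))
          (PushoutI.of true (bsAmalgamMaps n m true w'.head)) =
          HNNExtension.of (zpowGroupHom n w'.head) := by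
        rw [MonoidHom.comp_apply, hmap_of_true]
        rfl
      rw [hb]
      congr 1
      exact hmap_ofCoprodI hn hm w'.toWord
    rw [e1] at hw
    exact hw
  have hchain := toRW_chain w'.toList halt hmem
  have hrw : (⟨zpowGroupHom n w'.head * (toRW w'.toList).1, (toRW w'.toList).2, hchain⟩ :
      HNNExtension.NormalWord.ReducedWord Z1 (A n) (A m)).prod (e hn hm) = 1 := by
    show HNNExtension.of (zpowGroupHom n w'.head * (toRW w'.toList).1) * _ = 1
    rw [map_mul, mul_assoc, toRW_prod]
    exact hw2
  have hnil : (toRW w'.toList).2 = [] := by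
    apply HNNExtension.ReducedWord.toList_eq_nil_of_mem_of_range (e hn hm)
      ⟨zpowGroupHom n w'.head * (toRW w'.toList).1, (toRW w'.toList).2, hchain⟩
    rw [hrw]
    exact one_mem _
  have htrue := toRW_snd_nil w'.toList hnil
  cases hl : w'.toList with
  | nil =>
    rw [hl] at hw2
    simp only [P, List.map_nil, List.prod_nil, mul_one] at hw2
    have h6 : zpowGroupHom n w'.head = 1 :=
      HNNExtension.of_injective (φ := e hn hm) (by rw [hw2, map_one])
    have h7 : w'.head = 1 := zpow_inj hn (by rw [h6, map_one])
    rw [← hprod, PushoutI.NormalWord.prod, h7, map_one, one_mul, CoprodI.Word.prod, hl]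
    simp
  | cons p l' =>
    exfalso
    obtain ⟨i, g⟩ := p
    have hi : i = true := htrue ⟨i, g⟩ (hl ▸ List.mem_cons_self)
    subst hi
    cases l' with
    | nil =>
      rw [hl] at hw2
      simp only [P, List.map_cons, List.map_nil, List.prod_cons, List.prod_nil, if_true,
        mul_one] at hw2
      rw [← map_mul] at hw2
      have h6 : zpowGroupHom n w'.head * g = 1 :=
        HNNExtension.of_injective (φ := e hn hm) (by rw [hw2, map_one])
      have h7 : g ∈ A n := ⟨w'.head⁻¹, by
        rw [map_inv]
        exact mul_eq_one_iff_inv_eq.mp h6⟩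
      have := hmem ⟨true, g⟩ (hl ▸ List.mem_cons_self)
      simp only [if_true] at this
      exact this h7
    | cons q l'' =>
      have hq : q.1 = true := htrue q (hl ▸ List.mem_cons_of_mem _ (List.mem_cons_self))
      have hne := (List.isChain_cons_cons.1 (hl ▸ halt)).1
      exact hne (hq ▸ rfl)

end BSAux


set_option maxHeartbeats 1000000 in
/-- For `|n|,|m| ≥ 2`, the elements `b` and `a⁻¹ b a` of `BS(n,m)` generate a subgroup
isomorphic to `ℤ *_ℤ ℤ` (amalgamated over `nℤ` in the first factor and `mℤ` in the
second), via `x ↦ b`, `y ↦ a⁻¹ b a`. -/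
theorem bs_contains_amalgam (n m : ℤ) (hn : 2 ≤ |n|) (hm : 2 ≤ |m|) :
    ∃ f : PushoutI (bsAmalgamMaps n m) →* BS n m,
      Function.Injective f ∧
      f (PushoutI.of (φ := bsAmalgamMaps n m) true (Multiplicative.ofAdd (1 : ℤ))) =
        BS.b n m ∧
      f (PushoutI.of (φ := bsAmalgamMaps n m) false (Multiplicative.ofAdd (1 : ℤ))) =
        (BS.a n m)⁻¹ * BS.b n m * BS.a n m ∧
      f.range = Subgroup.closure {BS.b n m, (BS.a n m)⁻¹ * BS.b n m * BS.a n m} := by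
  have hn0 : n ≠ 0 := by rintro rfl; simp at hn
  have hm0 : m ≠ 0 := by rintro rfl; simp at hm
  have e1 : BSAux.fmap n m (PushoutI.of (φ := bsAmalgamMaps n m) true
      (Multiplicative.ofAdd (1 : ℤ))) = BS.b n m := by
    rw [BSAux.fmap_of_true, toAdd_ofAdd, zpow_one]
  have e2 : BSAux.fmap n m (PushoutI.of (φ := bsAmalgamMaps n m) false
      (Multiplicative.ofAdd (1 : ℤ))) = (BS.a n m)⁻¹ * BS.b n m * BS.a n m := by
    rw [BSAux.fmap_of_false, toAdd_ofAdd, zpow_one]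
  refine ⟨BSAux.fmap n m, ?_, e1, e2, ?_⟩
  · exact Function.Injective.of_comp (BSAux.hmap_inj hn0 hm0)
  · apply le_antisymm
    · rintro x ⟨y, rfl⟩
      induction y using Monoid.PushoutI.induction_on with
      | of i g =>
        cases i
        · rw [BSAux.fmap_of_false]
          refine zpow_mem (Subgroup.subset_closure ?_) _
          exact Set.mem_insert_iff.2 (Or.inr rfl)
        · rw [BSAux.fmap_of_true]
          refine zpow_mem (Subgroup.subset_closure ?_) _
          exact Set.mem_insert _ _
      | base h =>
        rw [BSAux.fmap_base]
        refine zpow_mem (zpow_mem (Subgroup.subset_closure ?_) _) _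
        exact Set.mem_insert _ _
      | mul x y hx hy =>
        rw [map_mul]
        exact mul_mem hx hy
    · rw [Subgroup.closure_le]
      rintro x hx
      rcases hx with rfl | rfl
      · exact ⟨_, e1⟩
      · exact ⟨_, e2⟩
end

section
/- For nonzero integers n, m, the subgroup ⟨b⟩ of BS(n,m) is infinite cyclic, i.e., b has infinite order in BS(n,m). -/
/-- The assignment of generators to permutations of `ℚ`:
`a ↦ (x ↦ (m/n)·x)`, `b ↦ (x ↦ 1 + x)`. -/
noncomputable def bsFun (n m : ℤ) (hn : n ≠ 0) (hm : m ≠ 0) : Bool → Equiv.Perm ℚ :=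
  fun x => if x then Equiv.mulLeft₀ ((m : ℚ) / n) (by
    exact div_ne_zero (Int.cast_ne_zero.mpr hm) (Int.cast_ne_zero.mpr hn))
  else Equiv.addLeft 1

lemma bs_rels_hold (n m : ℤ) (hn : n ≠ 0) (hm : m ≠ 0) :
    ∀ r ∈ BSRels n m, FreeGroup.lift (bsFun n m hn hm) r = 1 := by
  rintro r rfl
  simp only [map_mul, map_zpow, map_inv, FreeGroup.lift_apply_of, bsFun, if_true, if_false,
    Bool.false_eq_true]
  ext x
  have hn' : (n : ℚ) ≠ 0 := Int.cast_ne_zero.mpr hn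
  simp [Equiv.zsmul_addLeft, Equiv.Perm.mul_apply, Equiv.mulLeft₀_apply,
    Equiv.mulLeft₀_symm_apply, Equiv.Perm.inv_def, mul_add]
  field_simp
  ring

/-- The homomorphism `BS(n,m) → Perm ℚ`. -/
noncomputable def bsHom (n m : ℤ) (hn : n ≠ 0) (hm : m ≠ 0) : BS n m →* Equiv.Perm ℚ :=
  PresentedGroup.toGroup (bs_rels_hold n m hn hm)

/-- For nonzero `n,m`, the generator `b` of `BS(n,m)` has infinite order, i.e. `⟨b⟩` is
infinite cyclic. -/
theorem bs_b_infinite_order (n m : ℤ) (hn : n ≠ 0) (hm : m ≠ 0) :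
    ¬ IsOfFinOrder (BS.b n m) ∧ Infinite (Subgroup.zpowers (BS.b n m)) := by
  have hb : bsHom n m hn hm (BS.b n m) = Equiv.addLeft (1 : ℚ) := by
    have h := PresentedGroup.toGroup.of (bs_rels_hold n m hn hm) (x := false)
    rw [BS.b, bsHom, h]
    simp [bsFun]
  have hfin : ¬ IsOfFinOrder (BS.b n m) := by
    intro h
    have h2 : IsOfFinOrder (Equiv.addLeft (1 : ℚ)) := hb ▸ (bsHom n m hn hm).isOfFinOrder h
    obtain ⟨k, hk, hk1⟩ := h2.exists_pow_eq_one
    have : ((Equiv.addLeft (1 : ℚ)) ^ k) 0 = (1 : Equiv.Perm ℚ) 0 := by rw [hk1]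
    simp [Equiv.nsmul_addLeft] at this
    omega
  refine ⟨hfin, ?_⟩
  exact Set.infinite_coe_iff.mpr (infinite_zpowers.mpr hfin)
end

section
/- If |n| ≠ |m| and |n|, |m| ≥ 2, then BS(n,m) is not isomorphic to BS(n', m') whenever {n,m} ≠ {εn', εm'} for both ε = 1 and ε = -1; in particular BS(2,3) is not isomorphic to BS(2,5). -/
open SemidirectProduct

def qAct : ℚˣ →* MulAut (Multiplicative ℚ) where
  toFun u := AddEquiv.toMultiplicative (DistribMulAction.toAddAut ℚˣ ℚ u)
  map_one' := by ext x; simp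
  map_mul' u v := by ext x; simp [mul_smul]

lemma qAct_apply (u : ℚˣ) (x : Multiplicative ℚ) :
    qAct u x = Multiplicative.ofAdd ((u : ℚ) * x.toAdd) := rfl

abbrev Aff : Type := SemidirectProduct (Multiplicative ℚ) ℚˣ qAct

def tr (t : ℚ) : Aff := inl (Multiplicative.ofAdd t)

lemma tr_zpow (t : ℚ) (k : ℤ) : (tr t) ^ k = tr (k * t) := by
  rw [tr, ← map_zpow]
  congr 1

lemma conj_tr (x : Aff) (t : ℚ) : x * tr t * x⁻¹ = tr ((x.right : ℚ) * t) := by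
  ext
  · simp only [tr, mul_left, inv_left, left_inl, right_inl, mul_right, right_inr, qAct_apply]
    rw [← ofAdd_toAdd x.left, ← ofAdd_neg, ← ofAdd_add, ← ofAdd_add]
    congr 1
    have h0 : (x.right : ℚ) ≠ 0 := x.right.ne_zero
    simp only [toAdd_ofAdd, Units.val_inv_eq_inv_val]
    congr 1
    rw [mul_one, ← mul_assoc, mul_inv_cancel₀ h0]
    ring
  · simp [tr, mul_right, inv_right]

lemma tr_injective : Function.Injective tr := by
  intro s t h
  simpa [tr] using congrArg (fun z : Aff => (SemidirectProduct.left z).toAdd) h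


namespace BSaux

variable {n m : ℤ}

lemma bs_rel (n m : ℤ) :
    BS.a n m * (BS.b n m) ^ n * (BS.a n m)⁻¹ * ((BS.b n m) ^ m)⁻¹ = 1 := by
  have hmem : (FreeGroup.of true * FreeGroup.of false ^ n * (FreeGroup.of true)⁻¹ *
      (FreeGroup.of false ^ m)⁻¹) ∈ Subgroup.normalClosure (BSRels n m) :=
    Subgroup.subset_normalClosure rfl
  have : PresentedGroup.mk (BSRels n m) (FreeGroup.of true * FreeGroup.of false ^ n *
      (FreeGroup.of true)⁻¹ * (FreeGroup.of false ^ m)⁻¹) = 1 :=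
    (QuotientGroup.eq_one_iff _).2 hmem
  simpa [map_mul, map_zpow, map_inv, BS.a, BS.b, PresentedGroup.of] using this

/-- hom out of BS from images of the generators satisfying the relation -/
def homBS {G : Type*} [Group G] (n m : ℤ) (A B : G)
    (h : A * B ^ n * A⁻¹ * (B ^ m)⁻¹ = 1) : BS n m →* G :=
  PresentedGroup.toGroup (f := fun x => if x then A else B)
    (by rintro r rfl; simp [map_mul, map_zpow, map_inv, h])

@[simp] lemma homBS_a {G : Type*} [Group G] (n m : ℤ) (A B : G) (h) :
    homBS n m A B h (BS.a n m) = A := PresentedGroup.toGroup.of _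

@[simp] lemma homBS_b {G : Type*} [Group G] (n m : ℤ) (A B : G) (h) :
    homBS n m A B h (BS.b n m) = B := PresentedGroup.toGroup.of _

lemma hom_ext {G : Type*} [Group G] {f g : BS n m →* G}
    (ha : f (BS.a n m) = g (BS.a n m)) (hb : f (BS.b n m) = g (BS.b n m)) : f = g := by
  apply PresentedGroup.ext
  intro x
  cases x
  · exact hb
  · exact ha

lemma closure_ab (n m : ℤ) :
    Subgroup.closure {BS.a n m, BS.b n m} = ⊤ := by
  have h := PresentedGroup.closure_range_of (BSRels n m)
  have : Set.range (PresentedGroup.of : Bool → BS n m) = {BS.a n m, BS.b n m} := by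
    ext x
    simp only [Set.mem_range, Bool.exists_bool, Set.mem_insert_iff, Set.mem_singleton_iff]
    constructor
    · rintro (h | h) <;> [right; left] <;> exact h.symm
    · rintro (h | h) <;> [right; left] <;> exact h.symm
  rwa [this] at h

lemma range_eq (n m : ℤ) {G : Type*} [Group G] (f : BS n m →* G) :
    f.range = Subgroup.closure {f (BS.a n m), f (BS.b n m)} := by
  rw [MonoidHom.range_eq_map, ← closure_ab n m, MonoidHom.map_closure]
  congr 1
  simp [Set.image_insert_eq]

lemma map_rel {G : Type*} [Group G] (f : BS n m →* G) :
    f (BS.a n m) * f (BS.b n m) ^ n * (f (BS.a n m))⁻¹ * (f (BS.b n m) ^ m)⁻¹ = 1 := by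
  have := congrArg f (bs_rel n m)
  simpa [map_mul, map_zpow, map_inv] using this

end BSaux


namespace BSaux

/-- homs out of `BS n m` are pairs satisfying the relation -/
def homEquiv (n m : ℤ) (G : Type*) [Group G] :
    (BS n m →* G) ≃ {p : G × G // p.1 * p.2 ^ n * p.1⁻¹ * (p.2 ^ m)⁻¹ = 1} where
  toFun f := ⟨(f (BS.a n m), f (BS.b n m)), map_rel f⟩
  invFun p := homBS n m p.1.1 p.1.2 p.2
  left_inv f := hom_ext (by simp) (by simp)
  right_inv p := by ext <;> simp

lemma comm_cond {A : Type*} [CommGroup A] (n m : ℤ) (x y : A) :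
    x * y ^ n * x⁻¹ * (y ^ m)⁻¹ = 1 ↔ y ^ (n - m) = 1 := by
  have : x * y ^ n * x⁻¹ * (y ^ m)⁻¹ = y ^ (n - m) := by
    rw [zpow_sub]
    rw [mul_comm x (y ^ n), mul_assoc (y ^ n) x, mul_inv_cancel, mul_one]
  rw [this]

lemma card_hom (n m : ℤ) (A : Type*) [CommGroup A] :
    Nat.card (BS n m →* A) = Nat.card A * Nat.card {y : A // y ^ (n - m) = 1} := by
  rw [Nat.card_congr ((homEquiv n m A).trans
    ((Equiv.subtypeEquivRight (p := fun p : A × A => p.1 * p.2 ^ n * p.1⁻¹ * (p.2 ^ m)⁻¹ = 1)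
        (q := fun p : A × A => p.2 ^ (n - m) = 1) (fun p => comm_cond n m p.1 p.2)).trans
      (⟨fun q => (q.1.1, ⟨q.1.2, q.2⟩), fun x => ⟨(x.1, x.2.1), x.2.2⟩,
        fun q => by ext <;> rfl, fun x => by ext <;> rfl⟩ :
        {p : A × A // p.2 ^ (n - m) = 1} ≃ A × {y : A // y ^ (n - m) = 1})))]
  rw [Nat.card_prod]

/-- hom sets across an isomorphism are equinumerous -/
def homCongr {n m n' m' : ℤ} (φ : BS n m ≃* BS n' m') (A : Type*) [Group A] :
    (BS n m →* A) ≃ (BS n' m' →* A) where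
  toFun f := f.comp φ.symm.toMonoidHom
  invFun g := g.comp φ.toMonoidHom
  left_inv f := by ext x; simp
  right_inv g := by ext x; simp

lemma key_dvd (p q p' q' : ℤ) (φ : BS p q ≃* BS p' q') (h2 : p' - q' ≠ 0) :
    (p' - q') ∣ (p - q) := by
  set d : ℕ := (p' - q').natAbs with hd
  haveI : NeZero d := ⟨by simpa [hd] using h2⟩
  set A := Multiplicative (ZMod d)
  have hcast : ((p' - q' : ℤ) : ZMod d) = 0 :=
    (ZMod.intCast_zmod_eq_zero_iff_dvd _ _).2 (Int.natAbs_dvd.2 dvd_rfl)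
  have hpow : ∀ (k : ℤ) (y : A), y ^ k = Multiplicative.ofAdd (((k : ℤ) : ZMod d) * y.toAdd) := by
    intro k y
    rw [← ofAdd_toAdd (y ^ k), toAdd_zpow, zsmul_eq_mul]
  have hall : ∀ y : A, y ^ (p' - q') = 1 := by
    intro y
    rw [hpow, hcast, zero_mul]
    rfl
  have hcards : Nat.card (BS p q →* A) = Nat.card (BS p' q' →* A) :=
    Nat.card_congr (homCongr φ A)
  rw [card_hom, card_hom] at hcards
  have hA : Nat.card A = d := by
    rw [Nat.card_congr (Multiplicative.toAdd (α := ZMod d)), Nat.card_zmod]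
  have hfull : Nat.card {y : A // y ^ (p' - q') = 1} = Nat.card A :=
    Nat.card_congr (Equiv.subtypeUnivEquiv hall)
  rw [hfull] at hcards
  have hAne : Nat.card A ≠ 0 := by
    rw [hA]; exact (NeZero.ne d)
  have hsub : Nat.card {y : A // y ^ (p - q) = 1} = Nat.card A :=
    Nat.mul_left_cancel (Nat.pos_of_ne_zero hAne) hcards
  have hally : ∀ y : A, y ^ (p - q) = 1 := by
    by_contra hc
    push_neg at hc
    obtain ⟨y0, hy0⟩ := hc
    haveI : Finite A := by
      haveI : Fintype (ZMod d) := ZMod.fintype d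
      exact Finite.of_fintype A
    exact absurd hsub (Nat.ne_of_lt (Finite.card_subtype_lt hy0))
  have h1 := hally (Multiplicative.ofAdd (1 : ZMod d))
  rw [hpow] at h1
  have : ((p - q : ℤ) : ZMod d) = 0 := by
    have := congrArg Multiplicative.toAdd h1
    simpa using this
  exact Int.natAbs_dvd.1 ((ZMod.intCast_zmod_eq_zero_iff_dvd _ _).1 this)

lemma delta_eq (n m n' m' : ℤ) (φ : BS n m ≃* BS n' m') (h1 : n - m ≠ 0) (h2 : n' - m' ≠ 0) :
    n - m = n' - m' ∨ n - m = -(n' - m') := by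
  have d1 := key_dvd n m n' m' φ h2
  have d2 := key_dvd n' m' n m φ.symm h1
  have := Int.natAbs_eq_natAbs_iff.1
    (Nat.dvd_antisymm (Int.natAbs_dvd_natAbs.2 d2) (Int.natAbs_dvd_natAbs.2 d1))
  tauto

end BSaux

namespace BSaux

open SemidirectProduct

lemma unit_zpow_eq_one {u : ℚˣ} (h : |(u : ℚ)| ≠ 1) {k : ℤ} (hk : u ^ k = 1) : k = 0 := by
  have h2 : |(u : ℚ) ^ k| = |(u : ℚ)| ^ k := map_zpow₀ (absHom : ℚ →*₀ ℚ) _ _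
  have h1 : |(u : ℚ)| ^ k = |(u : ℚ)| ^ (0 : ℤ) := by
    have := congrArg (fun w : ℚˣ => |(w : ℚ)|) hk
    rw [← h2]
    simpa using this
  exact zpow_right_injective₀ (abs_pos.2 u.ne_zero) h h1

lemma key (n m n' m' : ℤ) (hn0 : n ≠ 0) (hm0 : m ≠ 0) (hnm : |n| ≠ |m|)
    (hn' : n' ≠ 0) (hm' : m' ≠ 0)
    (h : ∀ ε : ℤ, ε = 1 ∨ ε = -1 → ({n, m} : Set ℤ) ≠ {ε * n', ε * m'}) :
    IsEmpty (BS n m ≃* BS n' m') := by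
  constructor
  intro φ
  have hnq : (n : ℚ) ≠ 0 := Int.cast_ne_zero.2 hn0
  have hmq : (m : ℚ) ≠ 0 := Int.cast_ne_zero.2 hm0
  have hn'q : (n' : ℚ) ≠ 0 := Int.cast_ne_zero.2 hn'
  set r : ℚ := (m : ℚ) / (n : ℚ) with hrdef
  have hr0 : r ≠ 0 := div_ne_zero hmq hnq
  have hmn : m ≠ n := fun hc => hnm (by rw [hc])
  have hrabs : |r| ≠ 1 := by
    intro hc
    apply hnm
    rw [hrdef, abs_div, div_eq_one_iff_eq (by simpa using hnq)] at hc
    rw [← Int.cast_abs, ← Int.cast_abs] at hc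
    exact_mod_cast hc.symm
  have hr1 : r ≠ 1 := by
    intro hc
    rw [hrdef, div_eq_one_iff_eq hnq] at hc
    exact hmn (by exact_mod_cast hc)
  set ru : ℚˣ := Units.mk0 r hr0 with hrudef
  have hruval : (ru : ℚ) = r := rfl
  have hruabs : |(ru : ℚ)| ≠ 1 := hrabs
  -- the representation
  have relAff : inr ru * (tr 1) ^ n * (inr ru)⁻¹ * ((tr 1) ^ m)⁻¹ = 1 := by
    rw [tr_zpow, tr_zpow]
    have hc := conj_tr (inr ru) ((n : ℚ) * 1)
    rw [right_inr] at hc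
    rw [hc, mul_inv_eq_one]
    congr 1
    rw [hruval, hrdef]
    field_simp
  set ψ : BS n m →* Aff := homBS n m (inr ru) (tr 1) relAff with hψdef
  set ψ' : BS n' m' →* Aff := ψ.comp φ.symm.toMonoidHom with hψ'def
  have hψa : ψ (BS.a n m) = inr ru := homBS_a _ _ _ _ _
  have hψb : ψ (BS.b n m) = tr 1 := homBS_b _ _ _ _ _
  have hrange : ψ'.range = ψ.range := by
    ext x
    simp only [MonoidHom.mem_range]
    constructor
    · rintro ⟨g, rfl⟩; exact ⟨φ.symm g, rfl⟩
    · rintro ⟨g, rfl⟩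
      exact ⟨φ g, by simp [hψ'def]⟩
  set χ : BS n' m' →* ℚˣ := rightHom.comp ψ' with hχdef
  set χ₀ : BS n m →* ℚˣ := rightHom.comp ψ with hχ₀def
  have hχ₀a : χ₀ (BS.a n m) = ru := by
    rw [hχ₀def]; simp [hψa]
  have hχ₀b : χ₀ (BS.b n m) = 1 := by
    rw [hχ₀def]; simp [hψb, tr]
  have hχrange : χ.range = χ₀.range := by
    ext x
    simp only [MonoidHom.mem_range]
    constructor
    · rintro ⟨g, rfl⟩; exact ⟨φ.symm g, rfl⟩
    · rintro ⟨g, rfl⟩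
      exact ⟨φ g, by simp [hχdef, hχ₀def, hψ'def]⟩
  have hχ₀le : χ₀.range ≤ Subgroup.zpowers ru := by
    rw [range_eq n m χ₀, Subgroup.closure_le]
    rintro x hx
    simp only [Set.mem_insert_iff, Set.mem_singleton_iff] at hx
    rcases hx with rfl | rfl
    · rw [hχ₀a]; exact Subgroup.mem_zpowers ru
    · rw [hχ₀b]; exact one_mem _
  have hbmem : χ (BS.b n' m') ∈ χ₀.range := by
    rw [← hχrange]; exact ⟨BS.b n' m', rfl⟩
  obtain ⟨k, hk⟩ := Subgroup.mem_zpowers_iff.1 (hχ₀le hbmem)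
  -- noncommuting images of ψ
  have hnc : ψ (BS.a n m) * ψ (BS.b n m) ≠ ψ (BS.b n m) * ψ (BS.a n m) := by
    rw [hψa, hψb]
    intro hc
    have := congrArg (fun z : Aff => (SemidirectProduct.left z).toAdd) hc
    simp [tr, SemidirectProduct.mul_left, qAct_apply] at this
    exact hr1 (by simpa [hruval] using congrArg Units.val this)
  have habel : ψ' (BS.b n' m') ≠ 1 := by
    intro hB1
    have hr' : ψ'.range ≤ Subgroup.zpowers (ψ' (BS.a n' m')) := by
      rw [range_eq n' m' ψ', Subgroup.closure_le]
      rintro x hx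
      simp only [Set.mem_insert_iff, Set.mem_singleton_iff] at hx
      rcases hx with rfl | rfl
      · exact Subgroup.mem_zpowers _
      · rw [hB1]; exact one_mem _
    have hma : ψ (BS.a n m) ∈ ψ'.range := by rw [hrange]; exact ⟨BS.a n m, rfl⟩
    have hmb : ψ (BS.b n m) ∈ ψ'.range := by rw [hrange]; exact ⟨BS.b n m, rfl⟩
    obtain ⟨i, hi⟩ := Subgroup.mem_zpowers_iff.1 (hr' hma)
    obtain ⟨j, hj⟩ := Subgroup.mem_zpowers_iff.1 (hr' hmb)
    apply hnc
    rw [← hi, ← hj]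
    exact ((Commute.refl _).zpow_zpow i j).eq
  -- scalar part of ψ' b' equals χ b'
  have hright_b : (ψ' (BS.b n' m')).right = χ (BS.b n' m') := rfl
  by_cases hdeg : n' = m'
  · -- degenerate case n' = m'
    have hcen : ∀ g : BS n' m', (BS.b n' m') ^ n' * g = g * (BS.b n' m') ^ n' := by
      intro g
      have hcomm_a : (BS.b n' m') ^ n' * BS.a n' m' = BS.a n' m' * (BS.b n' m') ^ n' := by
        have hrel := bs_rel n' m'
        have hexp : (BS.b n' m') ^ m' = (BS.b n' m') ^ n' := by rw [hdeg]
        rw [hexp] at hrel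
        have : BS.a n' m' * (BS.b n' m') ^ n' * (BS.a n' m')⁻¹ = (BS.b n' m') ^ n' := by
          rw [← mul_inv_eq_one]
          simpa [mul_assoc] using hrel
        calc (BS.b n' m') ^ n' * BS.a n' m'
            = (BS.a n' m' * (BS.b n' m') ^ n' * (BS.a n' m')⁻¹) * BS.a n' m' := by rw [this]
          _ = BS.a n' m' * (BS.b n' m') ^ n' := by group
      have hmemc : g ∈ Subgroup.centralizer {(BS.b n' m') ^ n'} := by
        have htop : (⊤ : Subgroup (BS n' m')) ≤ Subgroup.centralizer {(BS.b n' m') ^ n'} := by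
          rw [← closure_ab n' m', Subgroup.closure_le]
          rintro x hx
          simp only [Set.mem_insert_iff, Set.mem_singleton_iff] at hx
          rcases hx with rfl | rfl
          · simp only [SetLike.mem_coe]
            rw [Subgroup.mem_centralizer_iff]
            rintro y hy
            rw [Set.mem_singleton_iff] at hy
            subst hy
            exact hcomm_a
          · simp only [SetLike.mem_coe]
            rw [Subgroup.mem_centralizer_iff]
            rintro y hy
            rw [Set.mem_singleton_iff] at hy
            subst hy
            exact ((Commute.refl (BS.b n' m')).zpow_left n').eq
        exact htop (Subgroup.mem_top g)
      exact Subgroup.mem_centralizer_iff.1 hmemc _ rfl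
    have hCcomm : ∀ x, x ∈ ψ'.range → ψ' ((BS.b n' m') ^ n') * x = x * ψ' ((BS.b n' m') ^ n') := by
      rintro x ⟨g, rfl⟩
      rw [← map_mul, ← map_mul, hcen g]
    have hmb : ψ (BS.b n m) ∈ ψ'.range := by rw [hrange]; exact ⟨BS.b n m, rfl⟩
    have hma : ψ (BS.a n m) ∈ ψ'.range := by rw [hrange]; exact ⟨BS.a n m, rfl⟩
    set C := ψ' ((BS.b n' m') ^ n') with hCdef
    -- scalar part of C is 1
    have hν : (C.right : ℚ) = 1 := by
      have h1 := hCcomm _ hmb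
      rw [hψb] at h1
      have := congrArg (fun z : Aff => (SemidirectProduct.left z).toAdd) h1
      simp [tr, SemidirectProduct.mul_left, qAct_apply] at this
      linarith [this]
    have hν1 : C.right = 1 := Units.ext (by simpa using hν)
    -- C.right = ru ^ (k * n')
    have hCr : C.right = ru ^ (k * n') := by
      rw [hCdef]
      have : (ψ' ((BS.b n' m') ^ n')).right = χ ((BS.b n' m') ^ n') := rfl
      rw [this, map_zpow, ← hk, ← zpow_mul]
    have hkn' : k * n' = 0 := unit_zpow_eq_one hruabs (by rw [← hCr, hν1])
    have hk0 : k = 0 := by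
      rcases mul_eq_zero.1 hkn' with h0 | h0
      · exact h0
      · exact absurd h0 hn'
    have hμ1 : χ (BS.b n' m') = 1 := by rw [← hk, hk0, zpow_zero]
    -- B = tr t'
    set B := ψ' (BS.b n' m') with hBdef
    have hBright : B.right = 1 := by rw [hBdef, hright_b, hμ1]
    set t' : ℚ := (B.left).toAdd with ht'def
    have hB : B = tr t' := by
      conv_lhs => rw [← inl_left_mul_inr_right B]
      rw [hBright, tr, ht'def, ofAdd_toAdd]
      simp
    have hC : C = tr ((n' : ℚ) * t') := by
      rw [hCdef, map_zpow, ← hBdef, hB, tr_zpow]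
    have h2 := hCcomm _ hma
    have h3 : ψ (BS.a n m) * C * (ψ (BS.a n m))⁻¹ = C := by
      rw [← h2]; group
    rw [hψa, hC, conj_tr, right_inr] at h3
    have h4 : r * ((n' : ℚ) * t') = (n' : ℚ) * t' := by
      have := tr_injective h3
      rwa [hruval] at this
    have ht0 : t' = 0 := by
      have h5 : (r - 1) * ((n' : ℚ) * t') = 0 := by linear_combination h4
      rcases mul_eq_zero.1 h5 with h6 | h6
      · exact absurd (by linarith : r = 1) hr1
      · rcases mul_eq_zero.1 h6 with h7 | h7
        · exact absurd h7 hn'q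
        · exact h7
    apply habel
    rw [hB, ht0]
    simp [tr]
  · -- main case n' ≠ m'
    have hδ' : n' - m' ≠ 0 := sub_ne_zero.2 hdeg
    have hδ0 : n - m ≠ 0 := sub_ne_zero.2 (Ne.symm hmn)
    -- μ = 1
    have hrelχ := map_rel χ
    rw [comm_cond] at hrelχ
    have hruk : ru ^ (k * (n' - m')) = 1 := by rw [zpow_mul, hk]; exact hrelχ
    have hk0 : k = 0 := by
      rcases mul_eq_zero.1 (unit_zpow_eq_one hruabs hruk) with h0 | h0
      · exact h0
      · exact absurd h0 hδ'
    have hμ1 : χ (BS.b n' m') = 1 := by rw [← hk, hk0, zpow_zero]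
    set B := ψ' (BS.b n' m') with hBdef
    have hBright : B.right = 1 := by rw [hright_b, hμ1]
    set t' : ℚ := (B.left).toAdd with ht'def
    have hB : B = tr t' := by
      conv_lhs => rw [← inl_left_mul_inr_right B]
      rw [hBright, tr, ht'def, ofAdd_toAdd]
      simp
    have ht' : t' ≠ 0 := by
      intro hc
      apply habel
      rw [hB, hc]
      simp [tr]
    -- relation in Aff
    have hrelψ' := map_rel ψ'
    rw [mul_inv_eq_one] at hrelψ'
    rw [← hBdef, hB, tr_zpow, tr_zpow, conj_tr] at hrelψ'
    have heq : ((ψ' (BS.a n' m')).right : ℚ) * ((n' : ℚ) * t') = (m' : ℚ) * t' :=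
      tr_injective hrelψ'
    set lu : ℚˣ := χ (BS.a n' m') with hludef
    have hlu_eq : (ψ' (BS.a n' m')).right = lu := rfl
    rw [hlu_eq] at heq
    have hlam : (lu : ℚ) * (n' : ℚ) = (m' : ℚ) := by
      have h6 : ((lu : ℚ) * (n' : ℚ)) * t' = (m' : ℚ) * t' := by
        rw [mul_assoc]; exact heq
      exact mul_right_cancel₀ ht' h6
    -- lu is a power of ru and vice versa
    have hamem : lu ∈ χ₀.range := by
      rw [← hχrange]; exact ⟨BS.a n' m', rfl⟩
    obtain ⟨j, hj⟩ := Subgroup.mem_zpowers_iff.1 (hχ₀le hamem)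
    have hle2 : χ.range ≤ Subgroup.zpowers lu := by
      rw [range_eq n' m' χ, Subgroup.closure_le]
      rintro x hx
      simp only [Set.mem_insert_iff, Set.mem_singleton_iff] at hx
      rcases hx with rfl | rfl
      · exact Subgroup.mem_zpowers _
      · rw [hμ1]; exact one_mem _
    have hrumem : ru ∈ χ.range := by
      rw [hχrange, ← hχ₀a]; exact ⟨BS.a n m, rfl⟩
    obtain ⟨i, hi⟩ := Subgroup.mem_zpowers_iff.1 (hle2 hrumem)
    have hji : ru ^ (j * i - 1) = 1 := by
      rw [zpow_sub, zpow_mul, hj, hi, zpow_one, mul_inv_cancel]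
    have hji1 : j * i = 1 := by
      have := unit_zpow_eq_one hruabs hji
      omega
    have hj1 : j = 1 ∨ j = -1 := Int.isUnit_iff.1 (IsUnit.of_mul_eq_one i hji1)
    have hδ := delta_eq n m n' m' φ hδ0 hδ'
    rcases hj1 with hj1 | hj1
    · -- lu = ru : m * n' = m' * n
      have hluv : (lu : ℚ) = r := by rw [← hj, hj1, zpow_one, hruval]
      have hAq : (m : ℚ) * (n' : ℚ) = (m' : ℚ) * (n : ℚ) := by
        rw [hluv, hrdef] at hlam
        field_simp at hlam
        linear_combination hlam
      have hA : m * n' = m' * n := by exact_mod_cast hAq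
      rcases hδ with he | he
      · have h5 : (n' - m') * (n - n') = 0 := by linear_combination (n' : ℤ) * he + hA
        have hn_eq : n = n' := by
          rcases mul_eq_zero.1 h5 with h6 | h6
          · exact absurd h6 hδ'
          · omega
        have h7 : (m - m') * n' = 0 := by linear_combination hA + (m' : ℤ) * hn_eq
        have hm_eq : m = m' := by
          rcases mul_eq_zero.1 h7 with h6 | h6
          · omega
          · exact absurd h6 hn'
        exact h 1 (Or.inl rfl) (by rw [one_mul, one_mul, hn_eq, hm_eq])
      · have h5 : (n' - m') * (n + n') = 0 := by linear_combination (n' : ℤ) * he + hA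
        have hn_eq : n = -n' := by
          rcases mul_eq_zero.1 h5 with h6 | h6
          · exact absurd h6 hδ'
          · omega
        have hm_eq : m = -m' := by
          have h7 : (m + m') * n' = 0 := by linear_combination hA + m' * hn_eq
          rcases mul_eq_zero.1 h7 with h6 | h6
          · omega
          · exact absurd h6 hn'
        exact h (-1) (Or.inr rfl) (by rw [hn_eq, hm_eq]; norm_num)
    · -- lu = ru⁻¹ : n * n' = m' * m
      have hluv : (lu : ℚ) = r⁻¹ := by
        rw [← hj, hj1]
        simp [hruval]
      have hBq : (n : ℚ) * (n' : ℚ) = (m' : ℚ) * (m : ℚ) := by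
        rw [hluv, hrdef] at hlam
        field_simp at hlam
        linear_combination hlam
      have hB2 : n * n' = m' * m := by exact_mod_cast hBq
      rcases hδ with he | he
      · -- n = -m', m = -n'
        have h5 : (n' - m') * (n + m') = 0 := by linear_combination hB2 - (m' : ℤ) * he
        have hn_eq : n = -m' := by
          rcases mul_eq_zero.1 h5 with h6 | h6
          · exact absurd h6 hδ'
          · omega
        have hm_eq : m = -n' := by
          have h7 : (m + n') * m' = 0 := by linear_combination -hB2 + n' * hn_eq
          rcases mul_eq_zero.1 h7 with h6 | h6
          · omega
          · exact absurd h6 hm'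
        exact h (-1) (Or.inr rfl)
          (by rw [hn_eq, hm_eq, Set.pair_comm]; norm_num)
      · -- n = m', m = n'
        have h5 : (n' - m') * (n - m') = 0 := by linear_combination hB2 - (m' : ℤ) * he
        have hn_eq : n = m' := by
          rcases mul_eq_zero.1 h5 with h6 | h6
          · exact absurd h6 hδ'
          · omega
        have hm_eq : m = n' := by
          have h7 : (m - n') * m' = 0 := by linear_combination -hB2 + n' * hn_eq
          rcases mul_eq_zero.1 h7 with h6 | h6
          · omega
          · exact absurd h6 hm'
        exact h 1 (Or.inl rfl)
          (by rw [one_mul, one_mul, hn_eq, hm_eq, Set.pair_comm])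

end BSaux

/-- If `|n|,|m| ≥ 2`, `|n| ≠ |m|`, and `{n,m} ≠ {εn',εm'}` for both `ε = ±1`, then
`BS(n,m) ≇ BS(n',m')`; in particular `BS(2,3) ≇ BS(2,5)`. -/
theorem bs_not_isomorphic (n m n' m' : ℤ) (hn : 2 ≤ |n|) (hm : 2 ≤ |m|) (hnm : |n| ≠ |m|)
    (hn' : n' ≠ 0) (hm' : m' ≠ 0)
    (h : ∀ ε : ℤ, ε = 1 ∨ ε = -1 → ({n, m} : Set ℤ) ≠ {ε * n', ε * m'}) :
    IsEmpty (BS n m ≃* BS n' m') ∧ IsEmpty (BS 2 3 ≃* BS 2 5) := by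
  constructor
  · refine BSaux.key n m n' m' ?_ ?_ hnm hn' hm' h
    · intro h0; rw [h0] at hn; norm_num at hn
    · intro h0; rw [h0] at hm; norm_num at hm
  · refine BSaux.key 2 3 2 5 (by norm_num) (by norm_num) (by norm_num)
      (by norm_num) (by norm_num) ?_
    intro ε hε heq
    rw [Set.ext_iff] at heq
    have h3 := heq 3
    rcases hε with rfl | rfl <;> norm_num at h3
end
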